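/- arXiv:1907.01745 — 11 statements merged into one kernel-verified Lean document; each statement's English description precedes it below -/
import Mathlib

section
/- Let I = {1,...,n} be a finite set of items with positive rational sizes s_i, let M = {1,...,m} be a set of m unit-capacity bins, and let p_{i,j} ≥ 0 be the profit of assigning item i to bin j. For S ⊆ I let φ(S) denote the optimal value of the linear program LP(S): maximize Σ_{i∈I, j∈M} x_{i,j}·p_{i,j} subject to Σ_{j∈M} x_{i,j} ≤ 1 for every i ∈ I, Σ_{i∈I} x_{i,j}·s_i ≤ 1 for every j ∈ M, x_{i,j} = 0 for every i ∈ I\S and j ∈ M, and x_{i,j} ≥ 0 for all i, j. Then φ is submodular, i.e., φ(S) + φ(T) ≥ φ(S ∪ T) + φ(S ∩ T) for all S, T ⊆ I; moreover φ is monotone (S ⊆ T implies φ(S) ≤ φ(T)) and non-negative. -/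
private lemma helper_nonpos {a C : ℝ} (hC : 0 ≤ C) (h : ∀ t : ℝ, 0 < t → t * a ≤ C) :
    a ≤ 0 := by
  by_contra hc
  push_neg at hc
  have ht : (0:ℝ) < (C + 1) / a := by positivity
  have h2 := h _ ht
  rw [div_mul_cancel₀ _ (ne_of_gt hc)] at h2
  linarith

private lemma helper_comb_lt {a b A B C D : ℝ} (ha : 0 ≤ a) (hb : 0 ≤ b) (hab : a + b = 1)
    (h1 : A < C) (h2 : B < D) : a * A + b * B < a * C + b * D := by
  rcases ha.eq_or_lt with h | h
  · rcases hb.eq_or_lt with h' | h'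
    · exfalso; rw [← h, ← h'] at hab; norm_num at hab
    · have hA : a * A = a * C := by rw [← h]; ring
      rw [hA]
      exact add_lt_add_right ((mul_lt_mul_iff_right₀ h').2 h2) _
  · have h1' : a * A < a * C := (mul_lt_mul_iff_right₀ h).2 h1
    have h2' : b * B ≤ b * D := mul_le_mul_of_nonneg_left h2.le hb
    linarith

section
variable {n m : ℕ}

private abbrev Etyp (n m : ℕ) : Type := (Fin n → ℝ) × (Fin m → ℝ) × ℝ

theorem gap_exists_dual (σ : Fin n → ℝ) (hσ : ∀ i, 0 < σ i)
    (p : Fin n → Fin m → ℝ) (S : Finset (Fin n)) (Φ : ℝ) (hΦ : 0 ≤ Φ)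
    (hub : ∀ x : Fin n → Fin m → ℝ,
      (∀ i j, 0 ≤ x i j) → (∀ i, ∑ j, x i j ≤ 1) →
      (∀ j, ∑ i, x i j * σ i ≤ 1) → (∀ i ∉ S, ∀ j, x i j = 0) →
      ∑ i, ∑ j, x i j * p i j ≤ Φ) :
    ∃ u : Fin n → ℝ, ∃ v : Fin m → ℝ,
      (∀ i, 0 ≤ u i) ∧ (∀ j, 0 ≤ v j) ∧
      (∀ i ∈ S, ∀ j, p i j ≤ u i + σ i * v j) ∧
      (∑ i, u i) + (∑ j, v j) ≤ Φ := by
  classical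
  set U : Set (Etyp n m) := ⋃ (x : Fin n → Fin m → ℝ)
      (_ : (∀ i j, 0 ≤ x i j) ∧ (∀ i ∉ S, ∀ j, x i j = 0)),
      {q : Etyp n m |
        (∀ i, ∑ j, x i j < q.1 i) ∧ (∀ j, ∑ i, x i j * σ i < q.2.1 j) ∧
          q.2.2 < ∑ i, ∑ j, x i j * p i j} with hU
  have hmemU : ∀ (x : Fin n → Fin m → ℝ),
      (∀ i j, 0 ≤ x i j) → (∀ i ∉ S, ∀ j, x i j = 0) →
      ∀ q : Etyp n m, (∀ i, ∑ j, x i j < q.1 i) → (∀ j, ∑ i, x i j * σ i < q.2.1 j) →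
      q.2.2 < ∑ i, ∑ j, x i j * p i j → q ∈ U := by
    intro x hx0 hxS q h1 h2 h3
    rw [hU]
    exact Set.mem_iUnion.2 ⟨x, Set.mem_iUnion.2 ⟨⟨hx0, hxS⟩, ⟨h1, h2, h3⟩⟩⟩
  have hUopen : IsOpen U := by
    rw [hU]
    refine isOpen_iUnion fun x => isOpen_iUnion fun hx => ?_
    have h1 : IsOpen {q : Etyp n m | ∀ i, ∑ j, x i j < q.1 i} := by
      rw [Set.setOf_forall]
      exact isOpen_iInter_of_finite fun i =>
        isOpen_lt continuous_const ((continuous_apply i).comp continuous_fst)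
    have h2 : IsOpen {q : Etyp n m | ∀ j, ∑ i, x i j * σ i < q.2.1 j} := by
      rw [Set.setOf_forall]
      exact isOpen_iInter_of_finite fun j =>
        isOpen_lt continuous_const ((continuous_apply j).comp (continuous_fst.comp continuous_snd))
    have h3 : IsOpen {q : Etyp n m | q.2.2 < ∑ i, ∑ j, x i j * p i j} :=
      isOpen_lt (continuous_snd.comp continuous_snd) continuous_const
    have : {q : Etyp n m |
        (∀ i, ∑ j, x i j < q.1 i) ∧ (∀ j, ∑ i, x i j * σ i < q.2.1 j) ∧
          q.2.2 < ∑ i, ∑ j, x i j * p i j} =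
        ({q : Etyp n m | ∀ i, ∑ j, x i j < q.1 i} ∩
          {q : Etyp n m | ∀ j, ∑ i, x i j * σ i < q.2.1 j}) ∩
          {q : Etyp n m | q.2.2 < ∑ i, ∑ j, x i j * p i j} := by
      ext q; simp [and_assoc]
    rw [this]
    exact (h1.inter h2).inter h3
  have hUconv : Convex ℝ U := by
    rintro q hq q' hq' a b ha hb hab
    rw [hU] at hq hq'
    simp only [Set.mem_iUnion] at hq hq'
    obtain ⟨x, ⟨hx0, hxS⟩, hq1, hq2, hq3⟩ := hq
    obtain ⟨x', ⟨hx0', hxS'⟩, hq1', hq2', hq3'⟩ := hq'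
    refine hmemU (fun i j => a * x i j + b * x' i j)
      (fun i j => by
        show 0 ≤ a * x i j + b * x' i j
        have := hx0 i j; have := hx0' i j; positivity)
      (fun i hi j => by
        show a * x i j + b * x' i j = 0
        rw [hxS i hi j, hxS' i hi j]; ring) _ ?_ ?_ ?_
    · intro i
      show ∑ j, (a * x i j + b * x' i j) < (a • q + b • q').1 i
      have : ∑ j, (a * x i j + b * x' i j) = a * (∑ j, x i j) + b * (∑ j, x' i j) := by
        rw [Finset.sum_add_distrib, Finset.mul_sum, Finset.mul_sum]
      rw [this]
      have : (a • q + b • q').1 i = a * q.1 i + b * q'.1 i := by simp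
      rw [this]
      exact helper_comb_lt ha hb hab (hq1 i) (hq1' i)
    · intro j
      show ∑ i, (a * x i j + b * x' i j) * σ i < (a • q + b • q').2.1 j
      have : ∑ i, (a * x i j + b * x' i j) * σ i
          = a * (∑ i, x i j * σ i) + b * (∑ i, x' i j * σ i) := by
        rw [Finset.mul_sum, Finset.mul_sum, ← Finset.sum_add_distrib]
        exact Finset.sum_congr rfl fun i _ => by ring
      rw [this]
      have : (a • q + b • q').2.1 j = a * q.2.1 j + b * q'.2.1 j := by simp
      rw [this]
      exact helper_comb_lt ha hb hab (hq2 j) (hq2' j)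
    · show (a • q + b • q').2.2 < ∑ i, ∑ j, (a * x i j + b * x' i j) * p i j
      have : ∑ i, ∑ j, (a * x i j + b * x' i j) * p i j
          = a * (∑ i, ∑ j, x i j * p i j) + b * (∑ i, ∑ j, x' i j * p i j) := by
        rw [Finset.mul_sum, Finset.mul_sum, ← Finset.sum_add_distrib]
        refine Finset.sum_congr rfl fun i _ => ?_
        rw [Finset.mul_sum, Finset.mul_sum, ← Finset.sum_add_distrib]
        exact Finset.sum_congr rfl fun j _ => by ring
      rw [this]
      have h22 : (a • q + b • q').2.2 = a * q.2.2 + b * q'.2.2 := by simp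
      rw [h22]
      exact helper_comb_lt ha hb hab hq3 hq3'
  have hz0 : ((fun _ => (1:ℝ), fun _ => (1:ℝ), Φ) : Etyp n m) ∉ U := by
    intro hmem
    rw [hU] at hmem
    simp only [Set.mem_iUnion, Set.mem_setOf_eq] at hmem
    obtain ⟨x, ⟨hx0, hxS⟩, h1, h2, h3⟩ := hmem
    exact absurd (hub x hx0 (fun i => (h1 i).le) (fun j => (h2 j).le) hxS) (not_le.2 h3)
  obtain ⟨L, hL⟩ := geometric_hahn_banach_open_point hUconv hUopen hz0
  set κ : ℝ := L (0, 0, 1) with hκdef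
  have hmem0 : ∀ (r : Fin n → ℝ) (c : Fin m → ℝ) (t : ℝ),
      (∀ i, 0 < r i) → (∀ j, 0 < c j) → t < 0 → ((r, c, t) : Etyp n m) ∈ U := by
    intro r c t hr hc ht
    refine hmemU (fun _ _ => 0) (fun _ _ => le_refl 0) (fun _ _ _ => rfl) _ ?_ ?_ ?_ <;>
      simp [hr, hc, ht]
  have hκpos : 0 < κ := by
    have hm : ((fun _ => (1:ℝ), fun _ => (1:ℝ), (-1:ℝ)) : Etyp n m) ∈ U :=
      hmem0 _ _ _ (fun _ => one_pos) (fun _ => one_pos) (by norm_num)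
    have hlt := hL _ hm
    have hrepr : ((fun _ => (1:ℝ), fun _ => (1:ℝ), (-1:ℝ)) : Etyp n m)
        = ((fun _ => (1:ℝ), fun _ => (1:ℝ), Φ) : Etyp n m)
          + (-1 - Φ) • ((0, 0, 1) : Etyp n m) := by
      refine Prod.ext ?_ (Prod.ext ?_ ?_) <;> simp
    rw [hrepr, map_add, map_smul] at hlt
    have hlt2 : (-1 - Φ) * κ < 0 := by
      have := hlt
      simp only [smul_eq_mul] at this
      linarith
    by_contra hcon
    push_neg at hcon
    nlinarith
  have hLdec : ∀ (r : Fin n → ℝ) (c : Fin m → ℝ) (t : ℝ),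
      L (r, c, t) = (∑ i, r i * L (Pi.single i 1, 0, 0))
        + (∑ j, c j * L (0, Pi.single j 1, 0)) + t * κ := by
    intro r c t
    have hrepr : ((r, c, t) : Etyp n m)
        = (∑ i, r i • ((Pi.single i 1 : Fin n → ℝ), (0 : Fin m → ℝ), (0:ℝ)))
          + (∑ j, c j • ((0 : Fin n → ℝ), (Pi.single j 1 : Fin m → ℝ), (0:ℝ)))
          + t • ((0, 0, 1) : Etyp n m) := by
      refine Prod.ext ?_ (Prod.ext ?_ ?_)
      · simp only [Prod.fst_add, Prod.fst_sum, Prod.smul_fst]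
        simp [← Pi.single_smul]
        exact (Finset.univ_sum_single r).symm
      · simp only [Prod.snd_add, Prod.snd_sum, Prod.smul_snd, Prod.fst_add, Prod.fst_sum,
          Prod.smul_fst]
        simp [← Pi.single_smul]
        exact (Finset.univ_sum_single c).symm
      · simp only [Prod.snd_add, Prod.snd_sum, Prod.smul_snd]
        simp
    rw [hrepr, map_add, map_add, map_sum, map_sum, map_smul]
    simp only [smul_eq_mul]
    rw [hκdef]
    congr 1
    · congr 1 <;> exact Finset.sum_congr rfl fun _ _ => by rw [map_smul, smul_eq_mul]
  set u : Fin n → ℝ := fun i => -(L (Pi.single i 1, 0, 0)) / κ with hu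
  set v : Fin m → ℝ := fun j => -(L (0, Pi.single j 1, 0)) / κ with hv
  have hLu : ∀ i, L ((Pi.single i 1 : Fin n → ℝ), (0 : Fin m → ℝ), (0:ℝ)) = -(κ * u i) := by
    intro i; rw [hu]; field_simp
  have hLv : ∀ j, L ((0 : Fin n → ℝ), (Pi.single j 1 : Fin m → ℝ), (0:ℝ)) = -(κ * v j) := by
    intro j; rw [hv]; field_simp
  have hkey : ∀ (r : Fin n → ℝ) (c : Fin m → ℝ) (x : Fin n → Fin m → ℝ),
      (∀ i j, 0 ≤ x i j) → (∀ i ∉ S, ∀ j, x i j = 0) →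
      (∀ i, ∑ j, x i j ≤ r i) → (∀ j, ∑ i, x i j * σ i ≤ c j) →
      ∑ i, ∑ j, x i j * p i j
        ≤ Φ + (∑ i, u i * (r i - 1)) + ∑ j, v j * (c j - 1) := by
    intro r c x hx0 hxS hr hc
    have hstep : ∀ δ : ℝ, 0 < δ →
        L (fun i => r i + δ, fun j => c j + δ, (∑ i, ∑ j, x i j * p i j) - δ)
          < L (fun _ => 1, fun _ => 1, Φ) := by
      intro δ hδ
      refine hL _ (hmemU x hx0 hxS _ ?_ ?_ ?_)
      · intro i; exact lt_of_le_of_lt (hr i) (by simp [hδ])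
      · intro j; exact lt_of_le_of_lt (hc j) (by simp [hδ])
      · simp [hδ]
    -- expand both sides
    set V := ∑ i, ∑ j, x i j * p i j with hV
    set SU := ∑ i, κ * u i with hSU
    set SV := ∑ j, κ * v j with hSV
    set RU := ∑ i, r i * (κ * u i) with hRU
    set CV := ∑ j, c j * (κ * v j) with hCV
    have hexp : ∀ δ : ℝ, 0 < δ →
        (-RU - δ * SU) + (-CV - δ * SV) + (V - δ) * κ < -SU + -SV + Φ * κ := by
      intro δ hδ
      have h3 := hstep δ hδ
      rw [hLdec, hLdec] at h3
      simp only [hLu, hLv] at h3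
      have e1 : ∑ i, (r i + δ) * (-(κ * u i)) = -RU - δ * SU := by
        rw [hRU, hSU, Finset.mul_sum, ← Finset.sum_neg_distrib, ← Finset.sum_sub_distrib]
        exact Finset.sum_congr rfl fun i _ => by ring
      have e2 : ∑ j, (c j + δ) * (-(κ * v j)) = -CV - δ * SV := by
        rw [hCV, hSV, Finset.mul_sum, ← Finset.sum_neg_distrib, ← Finset.sum_sub_distrib]
        exact Finset.sum_congr rfl fun j _ => by ring
      have e3 : ∑ i, (1:ℝ) * (-(κ * u i)) = -SU := by
        rw [hSU, ← Finset.sum_neg_distrib]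
        exact Finset.sum_congr rfl fun i _ => by ring
      have e4 : ∑ j, (1:ℝ) * (-(κ * v j)) = -SV := by
        rw [hSV, ← Finset.sum_neg_distrib]
        exact Finset.sum_congr rfl fun j _ => by ring
      rw [e1, e2, e3, e4] at h3
      exact h3
    have hA : V * κ - Φ * κ - ((RU - SU) + (CV - SV)) ≤ 0 := by
      set A := V * κ - Φ * κ - ((RU - SU) + (CV - SV)) with hAdef
      set B := SU + SV + κ with hBdef
      have hAB : ∀ δ : ℝ, 0 < δ → A < δ * B := by
        intro δ hδ
        have := hexp δ hδ
        rw [hAdef, hBdef]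
        nlinarith
      by_contra hcon
      push_neg at hcon
      rcases le_or_gt B 0 with hB0 | hB0
      · have := hAB 1 one_pos
        nlinarith
      · have h6 := hAB (A / (2 * B)) (by positivity)
        have h7 : (A / (2 * B)) * B = A / 2 := by
          field_simp
        rw [h7] at h6
        linarith
    -- divide by κ
    have hfin : (RU - SU) + (CV - SV)
        = κ * ((∑ i, u i * (r i - 1)) + ∑ j, v j * (c j - 1)) := by
      rw [hSU, hRU, hSV, hCV, mul_add, Finset.mul_sum, Finset.mul_sum,
        ← Finset.sum_sub_distrib, ← Finset.sum_sub_distrib]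
      congr 1 <;> exact Finset.sum_congr rfl fun _ _ => by ring
    rw [hfin] at hA
    have h5 : κ * V ≤ κ * (Φ + ((∑ i, u i * (r i - 1)) + ∑ j, v j * (c j - 1))) := by
      nlinarith
    have := (mul_le_mul_iff_right₀ hκpos).1 h5
    linarith
  -- now the consequences
  have hu0 : ∀ i, 0 ≤ u i := by
    intro i
    have h0 : ∀ t : ℝ, 0 < t → 0 ≤ Φ + u i * t := by
      intro t ht
      have h := hkey (fun i' => 1 + (if i' = i then t else 0)) (fun _ => 1)
        (fun _ _ => 0) (fun _ _ => le_refl 0) (fun _ _ _ => rfl)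
        (fun i' => by
          simp only [Finset.sum_const_zero]
          have : (0:ℝ) ≤ if i' = i then t else 0 := by split <;> linarith
          linarith)
        (fun j => by simp)
      simp only [Finset.sum_const_zero, zero_mul, sub_self, mul_zero] at h
      have e : ∑ i', u i' * ((1 + if i' = i then t else 0) - 1) = u i * t := by
        have : ∀ i' ∈ Finset.univ, u i' * ((1 + if i' = i then t else 0) - 1)
            = if i' = i then u i' * t else 0 := by
          intro i' _; split <;> ring
        rw [Finset.sum_congr rfl this, Finset.sum_ite_eq' Finset.univ i fun i' => u i' * t]
        simp
      rw [e] at h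
      linarith
    have hle : -u i ≤ 0 := by
      refine helper_nonpos hΦ fun t ht => ?_
      have := h0 t ht
      nlinarith
    linarith
  have hv0 : ∀ j, 0 ≤ v j := by
    intro j
    have h0 : ∀ t : ℝ, 0 < t → 0 ≤ Φ + v j * t := by
      intro t ht
      have h := hkey (fun _ => 1) (fun j' => 1 + (if j' = j then t else 0))
        (fun _ _ => 0) (fun _ _ => le_refl 0) (fun _ _ _ => rfl)
        (fun i' => by simp)
        (fun j' => by
          simp only [zero_mul, Finset.sum_const_zero]
          have : (0:ℝ) ≤ if j' = j then t else 0 := by split <;> linarith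
          linarith)
      simp only [Finset.sum_const_zero, zero_mul, sub_self, mul_zero] at h
      have e : ∑ j', v j' * ((1 + if j' = j then t else 0) - 1) = v j * t := by
        have : ∀ j' ∈ Finset.univ, v j' * ((1 + if j' = j then t else 0) - 1)
            = if j' = j then v j' * t else 0 := by
          intro j' _; split <;> ring
        rw [Finset.sum_congr rfl this, Finset.sum_ite_eq' Finset.univ j fun j' => v j' * t]
        simp
      rw [e] at h
      linarith
    have hle : -v j ≤ 0 := by
      refine helper_nonpos hΦ fun t ht => ?_
      have := h0 t ht
      nlinarith
    linarith
  have hfeas : ∀ i ∈ S, ∀ j, p i j ≤ u i + σ i * v j := by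
    intro i hiS j
    have h0 : ∀ t : ℝ, 0 < t → t * (p i j - u i - σ i * v j) ≤ Φ := by
      intro t ht
      have hrow : ∀ i', ∑ j', (if i' = i ∧ j' = j then t else 0)
          ≤ 1 + (if i' = i then t else 0) := by
        intro i'
        by_cases hi : i' = i
        · have e : ∀ j' ∈ Finset.univ, (if i' = i ∧ j' = j then t else 0)
              = if j' = j then t else 0 := fun j' _ => by simp [hi]
          rw [Finset.sum_congr rfl e, Finset.sum_ite_eq' Finset.univ j fun _ => t]
          simp only [Finset.mem_univ, if_true, hi]
          linarith
        · have e : ∀ j' ∈ Finset.univ, (if i' = i ∧ j' = j then t else 0) = 0 :=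
            fun j' _ => by simp [hi]
          rw [Finset.sum_congr rfl e]
          simp [hi]
      have hcol : ∀ j', ∑ i', (if i' = i ∧ j' = j then t else 0) * σ i'
          ≤ 1 + (if j' = j then t * σ i else 0) := by
        intro j'
        by_cases hj : j' = j
        · have e : ∀ i' ∈ Finset.univ, (if i' = i ∧ j' = j then t else 0) * σ i'
              = if i' = i then t * σ i' else 0 := fun i' _ => by
            by_cases hi : i' = i <;> simp [hi, hj]
          rw [Finset.sum_congr rfl e, Finset.sum_ite_eq' Finset.univ i fun i' => t * σ i']
          simp only [Finset.mem_univ, if_true, hj]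
          linarith
        · have e : ∀ i' ∈ Finset.univ, (if i' = i ∧ j' = j then t else 0) * σ i' = 0 :=
            fun i' _ => by simp [hj]
          rw [Finset.sum_congr rfl e]
          simp [hj]
      have hval : ∑ i', ∑ j', (if i' = i ∧ j' = j then t else 0) * p i' j' = t * p i j := by
        have e : ∀ i' ∈ Finset.univ, (∑ j', (if i' = i ∧ j' = j then t else 0) * p i' j')
            = if i' = i then t * p i' j else 0 := by
          intro i' _
          by_cases hi : i' = i
          · have e2 : ∀ j' ∈ Finset.univ, (if i' = i ∧ j' = j then t else 0) * p i' j'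
                = if j' = j then t * p i' j' else 0 := fun j' _ => by
              by_cases hj : j' = j <;> simp [hi, hj]
            rw [Finset.sum_congr rfl e2,
              Finset.sum_ite_eq' Finset.univ j fun j' => t * p i' j']
            simp [hi]
          · have e2 : ∀ j' ∈ Finset.univ, (if i' = i ∧ j' = j then t else 0) * p i' j' = 0 :=
              fun j' _ => by simp [hi]
            rw [Finset.sum_congr rfl e2]
            simp [hi]
        rw [Finset.sum_congr rfl e, Finset.sum_ite_eq' Finset.univ i fun i' => t * p i' j]
        simp
      have h := hkey (fun i' => 1 + (if i' = i then t else 0))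
        (fun j' => 1 + (if j' = j then t * σ i else 0))
        (fun i' j' => if i' = i ∧ j' = j then t else 0)
        (fun i' j' => by
          show (0:ℝ) ≤ if i' = i ∧ j' = j then t else 0
          split <;> linarith)
        (fun i' hi' j' => by
          have hne : ¬(i' = i ∧ j' = j) := fun hh => hi' (hh.1 ▸ hiS)
          show (if i' = i ∧ j' = j then t else 0) = 0
          simp [hne])
        hrow hcol
      rw [hval] at h
      have e3 : ∑ i', u i' * ((1 + if i' = i then t else 0) - 1) = u i * t := by
        have e : ∀ i' ∈ Finset.univ, u i' * ((1 + if i' = i then t else 0) - 1)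
            = if i' = i then u i' * t else 0 := by
          intro i' _; split <;> ring
        rw [Finset.sum_congr rfl e, Finset.sum_ite_eq' Finset.univ i fun i' => u i' * t]
        simp
      have e4 : ∑ j', v j' * ((1 + if j' = j then t * σ i else 0) - 1)
          = v j * (t * σ i) := by
        have e : ∀ j' ∈ Finset.univ, v j' * ((1 + if j' = j then t * σ i else 0) - 1)
            = if j' = j then v j' * (t * σ i) else 0 := by
          intro j' _; split <;> ring
        rw [Finset.sum_congr rfl e,
          Finset.sum_ite_eq' Finset.univ j fun j' => v j' * (t * σ i)]
        simp
      rw [e3, e4] at h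
      nlinarith
    have := helper_nonpos hΦ h0
    linarith
  refine ⟨u, v, hu0, hv0, hfeas, ?_⟩
  have h := hkey (fun _ => 0) (fun _ => 0) (fun _ _ => 0)
    (fun _ _ => le_refl 0) (fun _ _ _ => rfl) (fun i' => by simp) (fun j' => by simp)
  simp only [Finset.sum_const_zero, zero_mul] at h
  have e1 : ∑ i, u i * ((0:ℝ) - 1) = -∑ i, u i := by
    rw [← Finset.sum_neg_distrib]
    exact Finset.sum_congr rfl fun i _ => by ring
  have e2 : ∑ j, v j * ((0:ℝ) - 1) = -∑ j, v j := by
    rw [← Finset.sum_neg_distrib]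
    exact Finset.sum_congr rfl fun j _ => by ring
  rw [e1, e2] at h
  linarith
end



theorem gap_weak_dual {n m : ℕ} (σ : Fin n → ℝ) (hσ : ∀ i, 0 ≤ σ i)
    (p : Fin n → Fin m → ℝ) (R : Finset (Fin n)) (u : Fin n → ℝ) (v : Fin m → ℝ)
    (hu : ∀ i ∈ R, 0 ≤ u i) (hv : ∀ j, 0 ≤ v j)
    (hfeas : ∀ i ∈ R, ∀ j, p i j ≤ u i + σ i * v j)
    (x : Fin n → Fin m → ℝ) (hx0 : ∀ i j, 0 ≤ x i j)
    (hrow : ∀ i, ∑ j, x i j ≤ 1) (hcol : ∀ j, ∑ i, x i j * σ i ≤ 1)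
    (hsupp : ∀ i ∉ R, ∀ j, x i j = 0) :
    ∑ i, ∑ j, x i j * p i j ≤ (∑ i ∈ R, u i) + ∑ j, v j := by
  have step1 : ∑ i, ∑ j, x i j * p i j
      ≤ ∑ i, ∑ j, (x i j * u i + x i j * σ i * v j) := by
    refine Finset.sum_le_sum fun i _ => ?_
    by_cases hiR : i ∈ R
    · refine Finset.sum_le_sum fun j _ => ?_
      have h1 : x i j * p i j ≤ x i j * (u i + σ i * v j) :=
        mul_le_mul_of_nonneg_left (hfeas i hiR j) (hx0 i j)
      nlinarith [h1]
    · refine le_of_eq (Finset.sum_congr rfl fun j _ => ?_)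
      rw [hsupp i hiR j]
      ring
  have step2 : ∑ i, ∑ j, (x i j * u i + x i j * σ i * v j)
      = (∑ i, u i * ∑ j, x i j) + ∑ j, v j * ∑ i, x i j * σ i := by
    have e1 : ∀ i ∈ Finset.univ, (∑ j, (x i j * u i + x i j * σ i * v j))
        = u i * (∑ j, x i j) + ∑ j, x i j * σ i * v j := by
      intro i _
      rw [Finset.sum_add_distrib, Finset.mul_sum]
      congr 1
      exact Finset.sum_congr rfl fun j _ => by ring
    rw [Finset.sum_congr rfl e1, Finset.sum_add_distrib]
    congr 1
    rw [Finset.sum_comm]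
    exact Finset.sum_congr rfl fun j _ => by
      rw [Finset.mul_sum]
      exact Finset.sum_congr rfl fun i _ => by ring
  have step3 : ∑ i, u i * ∑ j, x i j ≤ ∑ i ∈ R, u i := by
    have e1 : ∑ i, u i * ∑ j, x i j = ∑ i ∈ R, u i * ∑ j, x i j := by
      symm
      refine Finset.sum_subset (Finset.subset_univ R) fun i _ hiR => ?_
      have : ∑ j, x i j = 0 := Finset.sum_eq_zero fun j _ => hsupp i hiR j
      rw [this, mul_zero]
    rw [e1]
    exact Finset.sum_le_sum fun i hiR => mul_le_of_le_one_right (hu i hiR) (hrow i)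
  have step4 : ∑ j, v j * ∑ i, x i j * σ i ≤ ∑ j, v j :=
    Finset.sum_le_sum fun j _ => mul_le_of_le_one_right (hv j) (hcol j)
  linarith


/-- The LP-value function φ of the generalized assignment LP is submodular,
monotone and non-negative. -/
theorem phi_submodular_monotone_nonneg
    (n m : ℕ) (s : Fin n → ℚ) (hs : ∀ i, 0 < s i)
    (p : Fin n → Fin m → ℝ) (hp : ∀ i j, 0 ≤ p i j)
    (φ : Finset (Fin n) → ℝ)
    (hφ : ∀ S : Finset (Fin n), IsGreatest
      { v : ℝ | ∃ x : Fin n → Fin m → ℝ,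
          (∀ i j, 0 ≤ x i j) ∧
          (∀ i, ∑ j, x i j ≤ 1) ∧
          (∀ j, ∑ i, x i j * (s i : ℝ) ≤ 1) ∧
          (∀ i ∉ S, ∀ j, x i j = 0) ∧
          v = ∑ i, ∑ j, x i j * p i j } (φ S)) :
    (∀ S T : Finset (Fin n), φ (S ∪ T) + φ (S ∩ T) ≤ φ S + φ T) ∧
    (∀ S T : Finset (Fin n), S ⊆ T → φ S ≤ φ T) ∧
    (∀ S : Finset (Fin n), 0 ≤ φ S) := by
  classical
  set σ : Fin n → ℝ := fun i => (s i : ℝ) with hσdef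
  have hσpos : ∀ i, 0 < σ i := fun i => by
    show (0:ℝ) < (s i : ℝ)
    exact_mod_cast hs i
  have hnonneg : ∀ S, 0 ≤ φ S := by
    intro S
    refine (hφ S).2 ⟨fun _ _ => 0, fun _ _ => le_refl 0, by simp, by simp,
      fun _ _ _ => rfl, by simp⟩
  have hmono : ∀ S T : Finset (Fin n), S ⊆ T → φ S ≤ φ T := by
    intro S T hST
    obtain ⟨x, hx0, hrow, hcol, hsupp, hval⟩ := (hφ S).1
    exact (hφ T).2 ⟨x, hx0, hrow, hcol,
      fun i hiT j => hsupp i (fun hiS => hiT (hST hiS)) j, hval⟩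
  have hsub : ∀ S T : Finset (Fin n), φ (S ∪ T) + φ (S ∩ T) ≤ φ S + φ T := by
    intro S T
    obtain ⟨u, v, hu0, hv0, hufeas, huval⟩ := gap_exists_dual σ hσpos p S (φ S) (hnonneg S)
      (fun x hx0 hrow hcol hsupp => (hφ S).2 ⟨x, hx0, hrow, hcol, hsupp, rfl⟩)
    obtain ⟨u', w, hu0', hw0, hufeas', huval'⟩ := gap_exists_dual σ hσpos p T (φ T) (hnonneg T)
      (fun x hx0 hrow hcol hsupp => (hφ T).2 ⟨x, hx0, hrow, hcol, hsupp, rfl⟩)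
    have h1 : φ (S ∪ T) ≤ (∑ i ∈ S ∪ T,
        (if i ∈ S then (if i ∈ T then min (u i) (u' i) else u i) else u' i))
        + ∑ j, max (v j) (w j) := by
      obtain ⟨x, hx0, hrow, hcol, hsupp, hval⟩ := (hφ (S ∪ T)).1
      rw [hval]
      refine gap_weak_dual σ (fun i => (hσpos i).le) p (S ∪ T) _ _ ?_ ?_ ?_ x hx0 hrow hcol hsupp
      · intro i _
        by_cases hiS : i ∈ S <;> by_cases hiT : i ∈ T <;>
          simp only [hiS, hiT, if_true, if_false, le_min_iff] <;>
          first
          | exact ⟨hu0 i, hu0' i⟩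
          | exact hu0 i
          | exact hu0' i
      · intro j
        exact le_max_of_le_left (hv0 j)
      · intro i hi j
        have hvmax : σ i * v j ≤ σ i * max (v j) (w j) :=
          mul_le_mul_of_nonneg_left (le_max_left _ _) (hσpos i).le
        have hwmax : σ i * w j ≤ σ i * max (v j) (w j) :=
          mul_le_mul_of_nonneg_left (le_max_right _ _) (hσpos i).le
        by_cases hiS : i ∈ S <;> by_cases hiT : i ∈ T <;>
          simp only [hiS, hiT, if_true, if_false]
        · rcases min_cases (u i) (u' i) with ⟨hmin, -⟩ | ⟨hmin, -⟩ <;> rw [hmin]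
          · have := hufeas i hiS j; linarith
          · have := hufeas' i hiT j; linarith
        · have := hufeas i hiS j; linarith
        · have := hufeas' i hiT j; linarith
        · exact absurd hi (by simp [hiS, hiT])
    have h2 : φ (S ∩ T) ≤ (∑ i ∈ S ∩ T, max (u i) (u' i)) + ∑ j, min (v j) (w j) := by
      obtain ⟨x, hx0, hrow, hcol, hsupp, hval⟩ := (hφ (S ∩ T)).1
      rw [hval]
      refine gap_weak_dual σ (fun i => (hσpos i).le) p (S ∩ T) _ _ ?_ ?_ ?_ x hx0 hrow hcol hsupp
      · intro i _
        exact le_max_of_le_left (hu0 i)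
      · intro j
        exact le_min (hv0 j) (hw0 j)
      · intro i hi j
        rw [Finset.mem_inter] at hi
        rcases min_cases (v j) (w j) with ⟨hmin, -⟩ | ⟨hmin, -⟩ <;> rw [hmin]
        · have := hufeas i hi.1 j
          have : u i ≤ max (u i) (u' i) := le_max_left _ _
          nlinarith [hufeas i hi.1 j]
        · have : u' i ≤ max (u i) (u' i) := le_max_right _ _
          nlinarith [hufeas' i hi.2 j]
    -- accounting
    have acc1 : (∑ i ∈ S ∪ T,
        (if i ∈ S then (if i ∈ T then min (u i) (u' i) else u i) else u' i))
        + (∑ i ∈ S ∩ T, max (u i) (u' i))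
        = (∑ i ∈ S, u i) + ∑ i ∈ T, u' i := by
      set f : Fin n → ℝ :=
        fun i => if i ∈ S then (if i ∈ T then min (u i) (u' i) else u i) else u' i with hf
      have e0 : ∑ i ∈ S ∪ T, f i = ∑ i ∈ S \ T, f i + ∑ i ∈ T, f i := by
        rw [← Finset.sdiff_union_self_eq_union, Finset.sum_union Finset.sdiff_disjoint]
      have e1 : ∑ i ∈ T, f i = ∑ i ∈ T ∩ S, f i + ∑ i ∈ T \ S, f i :=
        (Finset.sum_inter_add_sum_sdiff T S f).symm
      have e2 : ∑ i ∈ S \ T, f i = ∑ i ∈ S \ T, u i :=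
        Finset.sum_congr rfl fun i hi => by
          rw [Finset.mem_sdiff] at hi
          simp [hf, hi.1, hi.2]
      have e3 : ∑ i ∈ T \ S, f i = ∑ i ∈ T \ S, u' i :=
        Finset.sum_congr rfl fun i hi => by
          rw [Finset.mem_sdiff] at hi
          simp [hf, hi.2]
      have e4 : ∑ i ∈ T ∩ S, f i = ∑ i ∈ T ∩ S, min (u i) (u' i) :=
        Finset.sum_congr rfl fun i hi => by
          rw [Finset.mem_inter] at hi
          simp [hf, hi.1, hi.2]
      have e5 : ∑ i ∈ S ∩ T, max (u i) (u' i) = ∑ i ∈ T ∩ S, max (u i) (u' i) := by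
        rw [Finset.inter_comm]
      have e6 : (∑ i ∈ T ∩ S, min (u i) (u' i)) + ∑ i ∈ T ∩ S, max (u i) (u' i)
          = (∑ i ∈ T ∩ S, u i) + ∑ i ∈ T ∩ S, u' i := by
        rw [← Finset.sum_add_distrib, ← Finset.sum_add_distrib]
        exact Finset.sum_congr rfl fun i _ => min_add_max _ _
      have e7 : ∑ i ∈ S, u i = (∑ i ∈ S ∩ T, u i) + ∑ i ∈ S \ T, u i :=
        (Finset.sum_inter_add_sum_sdiff S T u).symm
      have e8 : ∑ i ∈ T, u' i = (∑ i ∈ T ∩ S, u' i) + ∑ i ∈ T \ S, u' i :=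
        (Finset.sum_inter_add_sum_sdiff T S u').symm
      have e9 : ∑ i ∈ S ∩ T, u i = ∑ i ∈ T ∩ S, u i := by
        rw [Finset.inter_comm]
      linarith [e0, e1, e2, e3, e4, e5, e6, e7, e8, e9]
    have acc2 : (∑ j, max (v j) (w j)) + (∑ j, min (v j) (w j)) = (∑ j, v j) + ∑ j, w j := by
      rw [← Finset.sum_add_distrib, ← Finset.sum_add_distrib]
      exact Finset.sum_congr rfl fun j _ => max_add_min _ _
    have hSu : ∑ i ∈ S, u i ≤ ∑ i, u i :=
      Finset.sum_le_sum_of_subset_of_nonneg (Finset.subset_univ S) fun i _ _ => hu0 i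
    have hTu : ∑ i ∈ T, u' i ≤ ∑ i, u' i :=
      Finset.sum_le_sum_of_subset_of_nonneg (Finset.subset_univ T) fun i _ _ => hu0' i
    linarith
  exact ⟨hsub, hmono, hnonneg⟩
end

section
/- Let Ω = {1,...,n} be a finite ground set, let m > 0 be a knapsack capacity, and suppose every element i ∈ Ω has a size s_i with 0 ≤ s_i ≤ m/2. Let f: 2^Ω → ℝ be a non-negative, monotone, submodular set function, and let OPT = max{ f(S) : S ⊆ Ω, Σ_{i∈S} s_i ≤ m }. Then there exists a subset S ⊆ Ω with Σ_{i∈S} s_i ≤ m/2 and f(S) ≥ OPT/3. -/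
/-- Subadditivity from submodularity and nonnegativity. -/
lemma subadd_of_submod {n : ℕ} (f : Finset (Fin n) → ℝ)
    (hf_nonneg : ∀ S, 0 ≤ f S)
    (hf_submod : ∀ S T : Finset (Fin n), f (S ∪ T) + f (S ∩ T) ≤ f S + f T)
    (S T : Finset (Fin n)) : f (S ∪ T) ≤ f S + f T := by
  have := hf_submod S T
  have := hf_nonneg (S ∩ T)
  linarith

/-- Submodular optimization with reserved capacity: if every element has size
at most `m/2`, there is a set of total size at most `m/2` whose value is at
least one third of the optimum over sets of total size at most `m`. -/
theorem submodular_reserved_capacity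
    (n : ℕ) (m : ℝ) (hm : 0 < m)
    (s : Fin n → ℝ) (hs : ∀ i, 0 ≤ s i ∧ s i ≤ m / 2)
    (f : Finset (Fin n) → ℝ)
    (hf_nonneg : ∀ S, 0 ≤ f S)
    (hf_mono : ∀ S T : Finset (Fin n), S ⊆ T → f S ≤ f T)
    (hf_submod : ∀ S T : Finset (Fin n), f (S ∪ T) + f (S ∩ T) ≤ f S + f T)
    (OPT : ℝ)
    (hOPT : IsGreatest
      { v : ℝ | ∃ S : Finset (Fin n), (∑ i ∈ S, s i) ≤ m ∧ v = f S } OPT) :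
    ∃ S : Finset (Fin n), (∑ i ∈ S, s i) ≤ m / 2 ∧ OPT / 3 ≤ f S := by
  obtain ⟨T, hTm, hOPTeq⟩ := hOPT.1
  have hOPTnn : 0 ≤ OPT := hOPTeq ▸ hf_nonneg T
  set P := T.powerset.filter (fun A => (∑ i ∈ A, s i) ≤ m / 2) with hP
  have hne : P.Nonempty := ⟨∅, by simp [hP]; linarith⟩
  obtain ⟨A, hAP, hAmax⟩ := P.exists_max_image Finset.card hne
  simp only [hP, Finset.mem_filter, Finset.mem_powerset] at hAP
  obtain ⟨hAT, hAs⟩ := hAP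
  by_cases hTA : T ⊆ A
  · refine ⟨T, le_trans (Finset.sum_le_sum_of_subset_of_nonneg hTA
      (fun i _ _ => (hs i).1)) hAs, ?_⟩
    rw [hOPTeq]
    linarith [hf_nonneg T]
  · obtain ⟨e, heT, heA⟩ := Finset.not_subset.mp hTA
    set B : Finset (Fin n) := {e}
    set C : Finset (Fin n) := T \ insert e A with hC
    have hins : insert e A ⊆ T := Finset.insert_subset heT hAT
    -- maximality: s A + s e > m/2
    have hbig : m / 2 < s e + ∑ i ∈ A, s i := by
      by_contra h
      push_neg at h
      have hmem : insert e A ∈ P := by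
        simp only [hP, Finset.mem_filter, Finset.mem_powerset]
        refine ⟨hins, ?_⟩
        rw [Finset.sum_insert heA]
        exact h
      have := hAmax _ hmem
      rw [Finset.card_insert_of_notMem heA] at this
      omega
    have hsumsplit : (∑ i ∈ C, s i) + (∑ i ∈ insert e A, s i) = ∑ i ∈ T, s i :=
      Finset.sum_sdiff hins
    have hsC : (∑ i ∈ C, s i) ≤ m / 2 := by
      rw [Finset.sum_insert heA] at hsumsplit
      linarith
    have hunion : A ∪ (B ∪ C) = T := by
      have : A ∪ B = insert e A := by
        ext x; simp [B, Finset.mem_insert, or_comm]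
      rw [← Finset.union_assoc, this, Finset.union_sdiff_of_subset hins]
    have h1 : f T ≤ f A + f (B ∪ C) := by
      rw [← hunion]; exact subadd_of_submod f hf_nonneg hf_submod _ _
    have h2 : f (B ∪ C) ≤ f B + f C := subadd_of_submod f hf_nonneg hf_submod _ _
    have hsum3 : OPT ≤ f A + f B + f C := by rw [hOPTeq]; linarith
    have hsB : (∑ i ∈ B, s i) ≤ m / 2 := by
      simp only [B, Finset.sum_singleton]; exact (hs e).2
    by_cases hA3 : OPT / 3 ≤ f A
    · exact ⟨A, hAs, hA3⟩
    by_cases hB3 : OPT / 3 ≤ f B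
    · exact ⟨B, hsB, hB3⟩
    refine ⟨C, hsC, by linarith⟩
end

section
/- Let I be a finite set of items with sizes s_i > 0, let M = {1,...,m} be a set of m unit-capacity bins, and let p_{i,j} ≥ 0 be profits. Let S ⊆ I be a set of items with total size s(S) = Σ_{i∈S} s_i ≤ m, and let x be a feasible fractional solution, i.e., x_{i,j} ≥ 0 for all i, j, Σ_{j∈M} x_{i,j} ≤ 1 for every i ∈ I, Σ_{i∈I} x_{i,j}·s_i ≤ 1 for every j ∈ M, and x_{i,j} = 0 for i ∉ S. Then there exists an assignment U = (U_1,...,U_m) of items to bins, with U_j ⊆ I pairwise disjoint and ∪_{j=1}^m U_j = S, which is almost feasible (for every bin j there is an element u_j* ∈ U_j ∪ {∅} with Σ_{i ∈ U_j\{u_j*}} s_i ≤ 1), and whose profit Σ_{j=1}^m Σ_{i∈U_j} p_{i,j} is at least Σ_{i∈I, j∈M} x_{i,j}·p_{i,j}. -/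
open Finset

noncomputable def ov (a a' u u' : ℝ) : ℝ := max 0 (min a' u' - max a u)
lemma ov_nonneg (a a' u u' : ℝ) : 0 ≤ ov a a' u u' := le_max_left _ _
lemma ov_swap (a a' u u' : ℝ) : ov a a' u u' = ov u u' a a' := by
  unfold ov; rw [min_comm a' u', max_comm a u]
lemma ov_le_len (a a' u u' : ℝ) (h : a ≤ a') : ov a a' u u' ≤ a' - a := by
  unfold ov
  have h1 : min a' u' ≤ a' := min_le_left _ _
  have h2 : a ≤ max a u := le_max_left _ _
  exact max_le (by linarith) (by linarith)
lemma ov_eq (a a' u u' : ℝ) (ha : a ≤ a') (hu : u ≤ u') :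
    ov a a' u u' = min a' (max a u') - min a' (max a u) := by
  unfold ov
  simp only [min_def, max_def]
  split_ifs <;> linarith

lemma ov_pos (a a' u u' : ℝ) (h : 0 < ov a a' u u') : a < u' ∧ u < a' := by
  unfold ov at h
  have h2 : 0 < min a' u' - max a u := by
    rcases max_cases 0 (min a' u' - max a u) with ⟨he, hle⟩ | ⟨he, hlt⟩
    · rw [he] at h; exact absurd h (lt_irrefl 0)
    · linarith
  have h3 : max a u < min a' u' := by linarith
  constructor
  · exact lt_of_le_of_lt (le_max_left a u) (lt_of_lt_of_le h3 (min_le_right _ _))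
  · exact lt_of_le_of_lt (le_max_right a u) (lt_of_lt_of_le h3 (min_le_left _ _))

lemma ovsum (a a' : ℝ) (ha0 : 0 ≤ a) (ha : a ≤ a') (g : ℕ → ℝ) (hg : ∀ r, 0 ≤ g r) (M : ℕ) :
    ∑ r ∈ Finset.range M, ov a a' (∑ r' ∈ Finset.range r, g r') (∑ r' ∈ Finset.range (r+1), g r')
      = min a' (max a (∑ r' ∈ Finset.range M, g r')) - a := by
  have key : ∀ r : ℕ, ov a a' (∑ r' ∈ Finset.range r, g r') (∑ r' ∈ Finset.range (r+1), g r')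
      = min a' (max a (∑ r' ∈ Finset.range (r+1), g r')) - min a' (max a (∑ r' ∈ Finset.range r, g r')) := by
    intro r
    exact ov_eq _ _ _ _ ha (by rw [Finset.sum_range_succ]; exact le_add_of_nonneg_right (hg r))
  calc ∑ r ∈ Finset.range M, ov a a' (∑ r' ∈ Finset.range r, g r') (∑ r' ∈ Finset.range (r+1), g r')
      = ∑ r ∈ Finset.range M, ((fun k => min a' (max a (∑ r' ∈ Finset.range k, g r'))) (r+1)
          - (fun k => min a' (max a (∑ r' ∈ Finset.range k, g r'))) r) := by
        exact Finset.sum_congr rfl fun r _ => key r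
    _ = min a' (max a (∑ r' ∈ Finset.range M, g r')) - min a' (max a (∑ r' ∈ Finset.range 0, g r')) := by
        simpa using Finset.sum_range_sub (fun k => min a' (max a (∑ r' ∈ Finset.range k, g r'))) M
    _ = min a' (max a (∑ r' ∈ Finset.range M, g r')) - a := by
        simp [max_eq_left ha0, min_eq_right ha]

lemma extend_rows (n m : ℕ) (s : Fin n → ℝ) (hs : ∀ i, 0 < s i)
    (S : Finset (Fin n)) (hS : (∑ i ∈ S, s i) ≤ (m : ℝ))
    (x : Fin n → Fin m → ℝ)
    (hx0 : ∀ i j, 0 ≤ x i j) (hrow : ∀ i, ∑ j, x i j ≤ 1)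
    (hcap : ∀ j, ∑ i, x i j * s i ≤ 1) (hout : ∀ i ∉ S, ∀ j, x i j = 0) :
    ∃ x' : Fin n → Fin m → ℝ,
      (∀ i j, x i j ≤ x' i j) ∧ (∀ i j, 0 ≤ x' i j) ∧
      (∀ i, ∑ j, x' i j ≤ 1) ∧ (∀ i ∈ S, ∑ j, x' i j = 1) ∧
      (∀ i ∉ S, ∀ j, x' i j = 0) ∧ (∀ j, ∑ i, x' i j * s i ≤ 1) := by
  classical
  set dd : ℕ → ℝ := fun r => if h : r < n then
      (if (⟨r, h⟩ : Fin n) ∈ S then (1 - ∑ j, x ⟨r, h⟩ j) * s ⟨r, h⟩ else 0) else 0 with hdd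
  set cc : ℕ → ℝ := fun r => if h : r < m then 1 - ∑ i, x i ⟨r, h⟩ * s i else 0 with hcc
  set A : ℕ → ℝ := fun e => ∑ r ∈ Finset.range e, dd r with hA
  set Bc : ℕ → ℝ := fun e => ∑ r ∈ Finset.range e, cc r with hBc
  have hdd0 : ∀ r, 0 ≤ dd r := by
    intro r
    simp only [hdd]
    split_ifs with h h2
    · have := hrow (⟨r, h⟩ : Fin n)
      have := (hs (⟨r, h⟩ : Fin n)).le
      nlinarith [hrow (⟨r, h⟩ : Fin n), (hs (⟨r, h⟩ : Fin n)).le]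
    · exact le_refl 0
    · exact le_refl 0
  have hcc0 : ∀ r, 0 ≤ cc r := by
    intro r
    simp only [hcc]
    split_ifs with h
    · linarith [hcap (⟨r, h⟩ : Fin m)]
    · exact le_refl 0
  have hAmono : ∀ {e e' : ℕ}, e ≤ e' → A e ≤ A e' := by
    intro e e' h
    exact Finset.sum_le_sum_of_subset_of_nonneg (Finset.range_subset_range.2 h) (fun r _ _ => hdd0 r)
  have hBmono : ∀ {e e' : ℕ}, e ≤ e' → Bc e ≤ Bc e' := by
    intro e e' h
    exact Finset.sum_le_sum_of_subset_of_nonneg (Finset.range_subset_range.2 h) (fun r _ _ => hcc0 r)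
  have hA0 : ∀ e, 0 ≤ A e := fun e => Finset.sum_nonneg fun r _ => hdd0 r
  have hB0 : ∀ e, 0 ≤ Bc e := fun e => Finset.sum_nonneg fun r _ => hcc0 r
  have hddi : ∀ i : Fin n, dd i.val = if i ∈ S then (1 - ∑ j, x i j) * s i else 0 := by
    intro i; simp only [hdd, i.isLt, dif_pos, Fin.eta]
  have hcci : ∀ j : Fin m, cc j.val = 1 - ∑ i, x i j * s i := by
    intro j; simp only [hcc, j.isLt, dif_pos, Fin.eta]
  have hAd : ∀ i : Fin n, A (i.val+1) = A i.val + dd i.val := fun i => Finset.sum_range_succ _ _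
  have hBd : ∀ j : Fin m, Bc (j.val+1) = Bc j.val + cc j.val := fun j => Finset.sum_range_succ _ _
  have e1 : A n = ∑ i ∈ S, (1 - ∑ j, x i j) * s i := by
    have : A n = ∑ i : Fin n, dd i.val := (Fin.sum_univ_eq_sum_range (fun r => dd r) n).symm
    rw [this]
    rw [Finset.sum_congr rfl (fun i _ => hddi i)]
    rw [Finset.sum_ite_mem, Finset.univ_inter]
  have e2 : Bc m = (m : ℝ) - ∑ j, ∑ i, x i j * s i := by
    have : Bc m = ∑ j : Fin m, cc j.val := (Fin.sum_univ_eq_sum_range (fun r => cc r) m).symm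
    rw [this, Finset.sum_congr rfl (fun j _ => hcci j), Finset.sum_sub_distrib]
    simp
  have e3 : ∑ j, ∑ i, x i j * s i = ∑ i ∈ S, (∑ j, x i j) * s i := by
    rw [Finset.sum_comm]
    rw [show ∑ i : Fin n, ∑ j, x i j * s i = ∑ i : Fin n, (∑ j, x i j) * s i from
      Finset.sum_congr rfl fun i _ => (Finset.sum_mul _ _ _).symm]
    exact (Finset.sum_subset (Finset.subset_univ S) (fun i _ hi => by
      rw [Finset.sum_congr rfl (fun j _ => hout i hi j)]; simp)).symm
  have hAB : A n ≤ Bc m := by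
    rw [e1, e2, e3]
    have : ∑ i ∈ S, (1 - ∑ j, x i j) * s i
        = ∑ i ∈ S, s i - ∑ i ∈ S, (∑ j, x i j) * s i := by
      rw [← Finset.sum_sub_distrib]
      exact Finset.sum_congr rfl fun i _ => by ring
    rw [this]; linarith
  have hrowsum : ∀ i : Fin n,
      ∑ j : Fin m, ov (A i.val) (A (i.val+1)) (Bc j.val) (Bc (j.val+1)) = dd i.val := by
    intro i
    have conv : ∑ j : Fin m, ov (A i.val) (A (i.val+1)) (Bc j.val) (Bc (j.val+1))
        = ∑ r ∈ Finset.range m, ov (A i.val) (A (i.val+1)) (Bc r) (Bc (r+1)) :=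
      Fin.sum_univ_eq_sum_range (fun r => ov (A i.val) (A (i.val+1)) (Bc r) (Bc (r+1))) m
    have hle : A i.val ≤ A (i.val+1) := by rw [hAd i]; linarith [hdd0 i.val]
    have h1 : A (i.val+1) ≤ Bc m := le_trans (hAmono i.isLt) hAB
    rw [conv]
    rw [show (∑ r ∈ Finset.range m, ov (A i.val) (A (i.val+1)) (Bc r) (Bc (r+1)))
        = min (A (i.val+1)) (max (A i.val) (Bc m)) - A i.val from by
      simpa only [hBc] using ovsum (A i.val) (A (i.val+1)) (hA0 _) hle cc hcc0 m]
    rw [max_eq_right (le_trans hle h1), min_eq_left h1, hAd i]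
    ring
  have hcolsum : ∀ j : Fin m,
      ∑ i : Fin n, ov (A i.val) (A (i.val+1)) (Bc j.val) (Bc (j.val+1)) ≤ cc j.val := by
    intro j
    have conv : ∑ i : Fin n, ov (A i.val) (A (i.val+1)) (Bc j.val) (Bc (j.val+1))
        = ∑ r ∈ Finset.range n, ov (Bc j.val) (Bc (j.val+1)) (A r) (A (r+1)) := by
      rw [show (fun (i : Fin n) => ov (A i.val) (A (i.val+1)) (Bc j.val) (Bc (j.val+1)))
          = fun (i : Fin n) => ov (Bc j.val) (Bc (j.val+1)) (A i.val) (A (i.val+1)) from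
        funext fun i => ov_swap _ _ _ _]
      exact Fin.sum_univ_eq_sum_range (fun r => ov (Bc j.val) (Bc (j.val+1)) (A r) (A (r+1))) n
    have hle : Bc j.val ≤ Bc (j.val+1) := by rw [hBd j]; linarith [hcc0 j.val]
    rw [conv]
    rw [show (∑ r ∈ Finset.range n, ov (Bc j.val) (Bc (j.val+1)) (A r) (A (r+1)))
        = min (Bc (j.val+1)) (max (Bc j.val) (A n)) - Bc j.val from by
      simpa only [hA] using ovsum (Bc j.val) (Bc (j.val+1)) (hB0 _) hle dd hdd0 n]
    have h1 : min (Bc (j.val+1)) (max (Bc j.val) (A n)) ≤ Bc (j.val+1) := min_le_left _ _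
    have h2 := hBd j
    linarith
  refine ⟨fun i j => x i j + ov (A i.val) (A (i.val+1)) (Bc j.val) (Bc (j.val+1)) / s i,
    ?_, ?_, ?_, ?_, ?_, ?_⟩
  · intro i j
    have h1 := div_nonneg (ov_nonneg (A i.val) (A (i.val+1)) (Bc j.val) (Bc (j.val+1))) (hs i).le
    linarith
  · intro i j
    have h1 := div_nonneg (ov_nonneg (A i.val) (A (i.val+1)) (Bc j.val) (Bc (j.val+1))) (hs i).le
    linarith [hx0 i j]
  · intro i
    rw [Finset.sum_add_distrib, ← Finset.sum_div, hrowsum i, hddi i]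
    split_ifs with hiS
    · rw [mul_div_assoc, div_self (hs i).ne', mul_one]
      linarith
    · simp only [zero_div, add_zero]
      exact hrow i
  · intro i hiS
    rw [Finset.sum_add_distrib, ← Finset.sum_div, hrowsum i, hddi i, if_pos hiS,
      mul_div_assoc, div_self (hs i).ne', mul_one]
    ring
  · intro i hiS j
    have hdz : dd i.val = 0 := by rw [hddi i, if_neg hiS]
    have hlen : A i.val ≤ A (i.val+1) := by rw [hAd i]; linarith [hdd0 i.val]
    have h1 : ov (A i.val) (A (i.val+1)) (Bc j.val) (Bc (j.val+1)) ≤ 0 := by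
      have hb := ov_le_len (A i.val) (A (i.val+1)) (Bc j.val) (Bc (j.val+1)) hlen
      have heq : A (i.val+1) - A i.val = 0 := by rw [hAd i, hdz]; ring
      linarith
    have h2 := ov_nonneg (A i.val) (A (i.val+1)) (Bc j.val) (Bc (j.val+1))
    show x i j + ov (A i.val) (A (i.val+1)) (Bc j.val) (Bc (j.val+1)) / s i = 0
    rw [hout i hiS j, le_antisymm h1 h2]
    norm_num
  · intro j
    have expand : ∀ i : Fin n,
        (x i j + ov (A i.val) (A (i.val+1)) (Bc j.val) (Bc (j.val+1)) / s i) * s i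
        = x i j * s i + ov (A i.val) (A (i.val+1)) (Bc j.val) (Bc (j.val+1)) := by
      intro i
      rw [add_mul, div_mul_cancel₀ _ (hs i).ne']
    rw [Finset.sum_congr rfl (fun i _ => expand i), Finset.sum_add_distrib]
    have h3 := hcolsum j
    rw [hcci j] at h3
    linarith

set_option maxHeartbeats 2000000 in
lemma core (n m : ℕ) (s : Fin n → ℝ) (hs : ∀ i, 0 ≤ s i)
    (hanti : ∀ i i' : Fin n, i ≤ i' → s i' ≤ s i)
    (p : Fin n → Fin m → ℝ) (hp : ∀ i j, 0 ≤ p i j)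
    (S : Finset (Fin n)) (x : Fin n → Fin m → ℝ)
    (hx0 : ∀ i j, 0 ≤ x i j) (hrow : ∀ i, ∑ j, x i j ≤ 1)
    (hrowS : ∀ i ∈ S, ∑ j, x i j = 1)
    (hout : ∀ i ∉ S, ∀ j, x i j = 0)
    (hcap : ∀ j, ∑ i, x i j * s i ≤ 1) :
    ∃ U : Fin m → Finset (Fin n),
      (∀ j k, j ≠ k → Disjoint (U j) (U k)) ∧
      (Finset.univ.biUnion U = S) ∧
      (∀ j, (∑ i ∈ U j, s i) ≤ 1 ∨ ∃ u ∈ U j, (∑ i ∈ (U j).erase u, s i) ≤ 1) ∧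
      (∑ i, ∑ j, x i j * p i j) ≤ ∑ j, ∑ i ∈ U j, p i j := by
  classical
  set xx : ℕ → Fin m → ℝ := fun r j => if h : r < n then x ⟨r, h⟩ j else 0 with hxx
  set c : Fin m → ℕ → ℝ := fun j e => ∑ r ∈ Finset.range e, xx r j with hc
  have hxx0 : ∀ r j, 0 ≤ xx r j := by
    intro r j; simp only [hxx]; split_ifs
    · exact hx0 _ _
    · exact le_refl 0
  have hxxi : ∀ (i : Fin n) (j : Fin m), xx i.val j = x i j := by
    intro i j; simp only [hxx, i.isLt, dif_pos, Fin.eta]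
  have hcmono : ∀ (j : Fin m) {e e' : ℕ}, e ≤ e' → c j e ≤ c j e' := by
    intro j e e' h
    exact Finset.sum_le_sum_of_subset_of_nonneg (Finset.range_subset_range.2 h) (fun r _ _ => hxx0 r j)
  have hc0 : ∀ j e, 0 ≤ c j e := fun j e => Finset.sum_nonneg fun r _ => hxx0 r j
  have hcsucc : ∀ (j : Fin m) (i : Fin n), c j (i.val+1) = c j i.val + x i j := by
    intro j i
    rw [hc]
    simp only
    rw [Finset.sum_range_succ, hxxi]
  have hxle1 : ∀ r j, xx r j ≤ 1 := by
    intro r j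
    simp only [hxx]
    split_ifs with h
    · calc x ⟨r, h⟩ j ≤ ∑ j', x ⟨r, h⟩ j' :=
        Finset.single_le_sum (fun j' _ => hx0 _ j') (Finset.mem_univ j)
      _ ≤ 1 := hrow _
    · exact zero_le_one
  have hcn : ∀ j, c j n ≤ (n : ℝ) := by
    intro j
    calc c j n ≤ ∑ r ∈ Finset.range n, (1:ℝ) :=
      Finset.sum_le_sum fun r _ => hxle1 r j
    _ = n := by simp
  -- the slot-splitting fractional matching
  set y : Fin n → Fin m × Fin n → ℝ :=
    fun k q => ov (c q.1 k.val) (c q.1 (k.val + 1)) (q.2.val : ℝ) ((q.2.val : ℝ) + 1) with hy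
  have hy0 : ∀ k q, 0 ≤ y k q := fun k q => ov_nonneg _ _ _ _
  have F1 : ∀ (k : Fin n) (j : Fin m), ∑ t : Fin n, y k (j, t) = x k j := by
    intro k j
    have conv : ∑ t : Fin n, y k (j, t)
        = ∑ r ∈ Finset.range n, ov (c j k.val) (c j (k.val+1)) (r : ℝ) ((r : ℝ) + 1) :=
      Fin.sum_univ_eq_sum_range (fun r => ov (c j k.val) (c j (k.val+1)) (r : ℝ) ((r : ℝ) + 1)) n
    rw [conv]
    have hone : ∀ r : ℕ, (∑ r' ∈ Finset.range r, (1:ℝ)) = (r : ℝ) := by intro r; simp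
    have conv2 : ∀ r : ℕ, ov (c j k.val) (c j (k.val+1)) (r : ℝ) ((r : ℝ) + 1)
        = ov (c j k.val) (c j (k.val+1)) (∑ r' ∈ Finset.range r, (1:ℝ))
            (∑ r' ∈ Finset.range (r+1), (1:ℝ)) := by
      intro r
      rw [hone r, hone (r+1)]
      push_cast
      ring_nf
    rw [Finset.sum_congr rfl fun r _ => conv2 r]
    have hle : c j k.val ≤ c j (k.val + 1) := by rw [hcsucc j k]; linarith [hx0 k j]
    rw [ovsum (c j k.val) (c j (k.val+1)) (hc0 j _) hle (fun _ => (1:ℝ)) (fun _ => zero_le_one) n]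
    rw [hone n]
    have h1 : c j (k.val+1) ≤ (n : ℝ) := le_trans (hcmono j k.isLt) (hcn j)
    rw [max_eq_right (le_trans hle h1), min_eq_left h1, hcsucc j k]
    ring
  have F2 : ∀ (j : Fin m) (t : Fin n),
      ∑ k : Fin n, y k (j, t) = min ((t.val : ℝ) + 1) (max (t.val : ℝ) (c j n)) - (t.val : ℝ) := by
    intro j t
    have conv : ∑ k : Fin n, y k (j, t)
        = ∑ r ∈ Finset.range n, ov ((t.val : ℝ)) ((t.val : ℝ)+1) (c j r) (c j (r+1)) := by
      rw [show (fun (k : Fin n) => y k (j, t))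
          = fun (k : Fin n) => ov ((t.val : ℝ)) ((t.val : ℝ)+1) (c j k.val) (c j (k.val+1)) from
        funext fun k => ov_swap _ _ _ _]
      exact Fin.sum_univ_eq_sum_range (fun r => ov ((t.val : ℝ)) ((t.val : ℝ)+1) (c j r) (c j (r+1))) n
    rw [conv]
    have := ovsum ((t.val : ℝ)) ((t.val : ℝ)+1) (by positivity) (by linarith) (fun r => xx r j)
      (fun r => hxx0 r j) n
    simpa only [← hc] using this
  -- column masses
  set cm : Fin m × Fin n → ℝ := fun q => ∑ k, y k q with hcm
  have hcm0 : ∀ q, 0 ≤ cm q := fun q => Finset.sum_nonneg fun k _ => hy0 k q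
  have hcm1 : ∀ q, cm q ≤ 1 := by
    rintro ⟨j, t⟩
    rw [hcm]
    simp only
    rw [F2 j t]
    have := min_le_left ((t.val : ℝ) + 1) (max (t.val : ℝ) (c j n))
    linarith
  have hcmfull : ∀ (j : Fin m) (t : Fin n), (t.val : ℝ) + 1 ≤ c j n → cm (j, t) = 1 := by
    intro j t h
    rw [hcm]
    simp only
    rw [F2 j t]
    rw [max_eq_right (by linarith), min_eq_left h]
    ring
  have hyc : ∀ (k : Fin n) (j : Fin m) (t : Fin n), 0 < y k (j, t) →
      c j k.val < (t.val : ℝ) + 1 ∧ (t.val : ℝ) < c j (k.val + 1) := by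
    intro k j t h
    exact ov_pos _ _ _ _ h
  have hrowy : ∀ k : Fin n, ∑ q : Fin m × Fin n, y k q = ∑ j, x k j := by
    intro k
    rw [Fintype.sum_prod_type]
    exact Finset.sum_congr rfl fun j _ => F1 k j
  -- total masses
  set rwx : Fin n → ℝ := fun k => ∑ j, x k j with hrwx
  have hrwx1 : ∀ k, rwx k ≤ 1 := hrow
  have hrwx0 : ∀ k, 0 ≤ rwx k := fun k => Finset.sum_nonneg fun j _ => hx0 k j
  -- enumeration of slots and the filler block
  set E : Fin m × Fin n ≃ Fin (m * n) := finProdFinEquiv with hE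
  set ff : ℕ → ℝ := fun r => if h : r < m * n then cm (E.symm ⟨r, h⟩) else 0 with hff
  set gg : ℕ → ℝ := fun r => if h : r < n then rwx ⟨r, h⟩ else 0 with hgg
  have hff0 : ∀ r, 0 ≤ ff r := by
    intro r; simp only [hff]; split_ifs
    · exact hcm0 _
    · exact le_refl 0
  have hgg0 : ∀ r, 0 ≤ gg r := by
    intro r; simp only [hgg]; split_ifs
    · exact hrwx0 _
    · exact le_refl 0
  set P : ℕ → ℝ := fun e => ∑ r ∈ Finset.range e, ff r with hP
  set Q : ℕ → ℝ := fun e => ∑ r ∈ Finset.range e, gg r with hQ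
  have hP0 : ∀ e, 0 ≤ P e := fun e => Finset.sum_nonneg fun r _ => hff0 r
  have hQ0 : ∀ e, 0 ≤ Q e := fun e => Finset.sum_nonneg fun r _ => hgg0 r
  have hPmono : ∀ {e e' : ℕ}, e ≤ e' → P e ≤ P e' := by
    intro e e' h
    exact Finset.sum_le_sum_of_subset_of_nonneg (Finset.range_subset_range.2 h) (fun r _ _ => hff0 r)
  have hQmono : ∀ {e e' : ℕ}, e ≤ e' → Q e ≤ Q e' := by
    intro e e' h
    exact Finset.sum_le_sum_of_subset_of_nonneg (Finset.range_subset_range.2 h) (fun r _ _ => hgg0 r)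
  have hffq : ∀ q : Fin m × Fin n, ff (E q).val = cm q := by
    intro q
    simp only [hff, (E q).isLt, dif_pos, Fin.eta, Equiv.symm_apply_apply]
  have hggk : ∀ k : Fin n, gg k.val = rwx k := by
    intro k
    simp only [hgg, k.isLt, dif_pos, Fin.eta]
  have hPQ : P (m * n) = Q n := by
    have h1 : P (m * n) = ∑ w : Fin (m * n), ff w.val :=
      (Fin.sum_univ_eq_sum_range (fun r => ff r) (m * n)).symm
    have h2 : Q n = ∑ k : Fin n, gg k.val :=
      (Fin.sum_univ_eq_sum_range (fun r => gg r) n).symm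
    rw [h1, h2]
    rw [show (fun w : Fin (m*n) => ff w.val) = fun w : Fin (m*n) => cm (E.symm w) from
      funext fun w => by rw [← hffq (E.symm w), Equiv.apply_symm_apply]]
    rw [Equiv.sum_comp E.symm cm]
    rw [Finset.sum_congr rfl fun k (_ : k ∈ Finset.univ) => hggk k]
    rw [hcm]
    simp only
    rw [Finset.sum_comm]
    exact Finset.sum_congr rfl fun k _ => hrowy k
  have hPsucc : ∀ q : Fin m × Fin n, P ((E q).val + 1) = P (E q).val + cm q := by
    intro q
    rw [hP]
    simp only
    rw [Finset.sum_range_succ, hffq]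
  have hQsucc : ∀ k : Fin n, Q (k.val + 1) = Q k.val + rwx k := by
    intro k
    rw [hQ]
    simp only
    rw [Finset.sum_range_succ, hggk]
  -- the square doubly stochastic matrix
  set B : Matrix (Fin n ⊕ (Fin m × Fin n)) (Fin n ⊕ (Fin m × Fin n)) ℝ :=
    fun r c' =>
      match r, c' with
      | .inl k, .inl k' => if k = k' then 1 - rwx k else 0
      | .inl k, .inr q => y k q
      | .inr q, .inl k' => ov (P (E q).val) (P ((E q).val + 1)) (Q k'.val) (Q (k'.val + 1))
      | .inr q, .inr q' => if q = q' then 1 - cm q else 0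
    with hB
  have hBds : B ∈ doublyStochastic ℝ (Fin n ⊕ (Fin m × Fin n)) := by
    rw [mem_doublyStochastic_iff_sum]
    refine ⟨?_, ?_, ?_⟩
    · rintro (k | q) (k' | q')
      · simp only [hB]
        split_ifs
        · linarith [hrwx1 k]
        · exact le_refl 0
      · exact hy0 k q'
      · exact ov_nonneg _ _ _ _
      · simp only [hB]
        split_ifs
        · linarith [hcm1 q]
        · exact le_refl 0
    · rintro (k | q)
      · rw [Fintype.sum_sum_type]
        have e1 : ∑ k' : Fin n, B (Sum.inl k) (Sum.inl k') = 1 - rwx k := by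
          simp only [hB]
          rw [Finset.sum_ite_eq _ k (fun k' => 1 - rwx k)]
          simp
        have e2 : ∑ q : Fin m × Fin n, B (Sum.inl k) (Sum.inr q) = rwx k := by
          simp only [hB]
          exact hrowy k
        rw [e1, e2]
        ring
      · rw [Fintype.sum_sum_type]
        have e1 : ∑ k' : Fin n, B (Sum.inr q) (Sum.inl k') = cm q := by
          simp only [hB]
          have conv : ∑ k' : Fin n, ov (P (E q).val) (P ((E q).val + 1)) (Q k'.val) (Q (k'.val + 1))
              = ∑ r ∈ Finset.range n, ov (P (E q).val) (P ((E q).val + 1)) (Q r) (Q (r + 1)) :=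
            Fin.sum_univ_eq_sum_range (fun r => ov (P (E q).val) (P ((E q).val + 1)) (Q r) (Q (r+1))) n
          rw [conv]
          have hle : P (E q).val ≤ P ((E q).val + 1) := by rw [hPsucc q]; linarith [hcm0 q]
          rw [show (∑ r ∈ Finset.range n, ov (P (E q).val) (P ((E q).val + 1)) (Q r) (Q (r + 1)))
              = min (P ((E q).val + 1)) (max (P (E q).val) (Q n)) - P (E q).val from by
            simpa only [hQ] using ovsum (P (E q).val) (P ((E q).val + 1)) (hP0 _) hle gg hgg0 n]
          have h1 : P ((E q).val + 1) ≤ Q n := by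
            rw [← hPQ]
            exact hPmono (E q).isLt
          rw [max_eq_right (le_trans hle h1), min_eq_left h1, hPsucc q]
          ring
        have e2 : ∑ q' : Fin m × Fin n, B (Sum.inr q) (Sum.inr q') = 1 - cm q := by
          simp only [hB]
          rw [Finset.sum_ite_eq _ q (fun q' => 1 - cm q)]
          simp
        rw [e1, e2]
        ring
    · rintro (k' | q')
      · rw [Fintype.sum_sum_type]
        have e1 : ∑ k : Fin n, B (Sum.inl k) (Sum.inl k') = 1 - rwx k' := by
          simp only [hB]
          rw [Finset.sum_ite_eq' _ k' (fun k => 1 - rwx k)]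
          simp
        have e2 : ∑ q : Fin m × Fin n, B (Sum.inr q) (Sum.inl k') = rwx k' := by
          simp only [hB]
          have conv : ∑ q : Fin m × Fin n,
              ov (P (E q).val) (P ((E q).val + 1)) (Q k'.val) (Q (k'.val + 1))
              = ∑ r ∈ Finset.range (m * n), ov (Q k'.val) (Q (k'.val + 1)) (P r) (P (r + 1)) := by
            calc ∑ q : Fin m × Fin n, ov (P (E q).val) (P ((E q).val + 1)) (Q k'.val) (Q (k'.val + 1))
                = ∑ q : Fin m × Fin n,
                    ov (Q k'.val) (Q (k'.val + 1)) (P (E q).val) (P ((E q).val + 1)) :=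
                  Finset.sum_congr rfl fun q _ => ov_swap _ _ _ _
              _ = ∑ w : Fin (m*n), ov (Q k'.val) (Q (k'.val + 1)) (P w.val) (P (w.val + 1)) :=
                  Fintype.sum_equiv E _ _ (fun q => rfl)
              _ = ∑ r ∈ Finset.range (m * n), ov (Q k'.val) (Q (k'.val + 1)) (P r) (P (r + 1)) :=
                  Fin.sum_univ_eq_sum_range (fun r => ov (Q k'.val) (Q (k'.val + 1)) (P r) (P (r+1))) (m*n)
          rw [conv]
          have hle : Q k'.val ≤ Q (k'.val + 1) := by rw [hQsucc k']; linarith [hrwx0 k']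
          rw [show (∑ r ∈ Finset.range (m*n), ov (Q k'.val) (Q (k'.val + 1)) (P r) (P (r + 1)))
              = min (Q (k'.val + 1)) (max (Q k'.val) (P (m*n))) - Q k'.val from by
            simpa only [hP] using ovsum (Q k'.val) (Q (k'.val + 1)) (hQ0 _) hle ff hff0 (m*n)]
          have h1 : Q (k'.val + 1) ≤ P (m * n) := by
            rw [hPQ]
            exact hQmono k'.isLt
          rw [max_eq_right (le_trans hle h1), min_eq_left h1, hQsucc k']
          ring
        rw [e1, e2]
        ring
      · rw [Fintype.sum_sum_type]
        have e1 : ∑ k : Fin n, B (Sum.inl k) (Sum.inr q') = cm q' := rfl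
        have e2 : ∑ q : Fin m × Fin n, B (Sum.inr q) (Sum.inr q') = 1 - cm q' := by
          simp only [hB]
          rw [Finset.sum_ite_eq' _ q' (fun q => 1 - cm q)]
          simp
        rw [e1, e2]
        ring
  obtain ⟨w, hw0, hw1, hwB⟩ := exists_eq_sum_perm_of_mem_doublyStochastic hBds
  set W : (Fin n ⊕ (Fin m × Fin n)) → (Fin n ⊕ (Fin m × Fin n)) → ℝ :=
    fun r c' => match r, c' with
      | .inl k, .inr q => if k ∈ S then p k q.1 else 0
      | _, _ => 0
    with hW
  have hW0 : ∀ r c', 0 ≤ W r c' := by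
    rintro (k | q) (k' | q') <;> simp only [hW]
    · exact le_refl 0
    · split_ifs
      · exact hp _ _
      · exact le_refl 0
    · exact le_refl 0
    · exact le_refl 0
  have hBW : ∑ r, ∑ c', B r c' * W r c' = ∑ k, ∑ j, x k j * p k j := by
    rw [Fintype.sum_sum_type]
    have h2 : ∑ q : Fin m × Fin n, ∑ c', B (Sum.inr q) c' * W (Sum.inr q) c' = 0 := by
      apply Finset.sum_eq_zero
      intro q _
      apply Finset.sum_eq_zero
      rintro (k' | q') _ <;> simp [hW]
    have h1 : ∀ k : Fin n, ∑ c', B (Sum.inl k) c' * W (Sum.inl k) c'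
        = ∑ j, x k j * (if k ∈ S then p k j else 0) := by
      intro k
      rw [Fintype.sum_sum_type]
      have z : ∑ k' : Fin n, B (Sum.inl k) (Sum.inl k') * W (Sum.inl k) (Sum.inl k') = 0 := by
        apply Finset.sum_eq_zero
        intro k' _
        simp [hW]
      rw [z, zero_add, Fintype.sum_prod_type]
      refine Finset.sum_congr rfl fun j _ => ?_
      have : ∑ t : Fin n, B (Sum.inl k) (Sum.inr (j, t)) * W (Sum.inl k) (Sum.inr (j, t))
          = ∑ t : Fin n, y k (j, t) * (if k ∈ S then p k j else 0) := by
        refine Finset.sum_congr rfl fun t _ => ?_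
        simp [hB, hW]
      rw [this, ← Finset.sum_mul, F1 k j]
    rw [h2, add_zero]
    rw [Finset.sum_congr rfl fun k (_ : k ∈ Finset.univ) => h1 k]
    refine Finset.sum_congr rfl fun k _ => Finset.sum_congr rfl fun j _ => ?_
    split_ifs with hk
    · rfl
    · rw [hout k hk j]
      ring
  have hperm : ∀ (σ : Equiv.Perm (Fin n ⊕ (Fin m × Fin n))) r c',
      (σ.permMatrix ℝ) r c' = if σ r = c' then 1 else 0 := by
    intro σ r c'
    simp [Equiv.Perm.permMatrix, PEquiv.toMatrix_apply, Equiv.toPEquiv_apply]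
  have hBe : ∀ r c', B r c' = ∑ σ, w σ * (σ.permMatrix ℝ) r c' := by
    intro r c'
    rw [← hwB]
    rw [Matrix.sum_apply]
    refine Finset.sum_congr rfl fun σ _ => ?_
    simp
  set prof : Equiv.Perm (Fin n ⊕ (Fin m × Fin n)) → ℝ := fun σ => ∑ r, W r (σ r) with hprof
  have hdecomp : ∑ σ, w σ * prof σ = ∑ r, ∑ c', B r c' * W r c' := by
    have inner : ∀ (σ : Equiv.Perm (Fin n ⊕ (Fin m × Fin n))) r,
        ∑ c', (σ.permMatrix ℝ) r c' * W r c' = W r (σ r) := by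
      intro σ r
      have : ∀ c', (σ.permMatrix ℝ) r c' * W r c' = if σ r = c' then W r c' else 0 := by
        intro c'
        rw [hperm σ r c']
        split_ifs
        · ring
        · ring
      rw [Finset.sum_congr rfl fun c' _ => this c']
      rw [Finset.sum_ite_eq]
      simp
    calc ∑ σ, w σ * prof σ = ∑ σ, ∑ r, w σ * W r (σ r) := by
          refine Finset.sum_congr rfl fun σ _ => ?_
          rw [hprof]
          simp only
          rw [Finset.mul_sum]
      _ = ∑ σ, ∑ r, ∑ c', w σ * ((σ.permMatrix ℝ) r c' * W r c') := by
          refine Finset.sum_congr rfl fun σ _ => Finset.sum_congr rfl fun r _ => ?_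
          rw [← Finset.mul_sum, inner σ r]
      _ = ∑ r, ∑ c', ∑ σ, w σ * ((σ.permMatrix ℝ) r c' * W r c') := by
          rw [Finset.sum_comm]
          refine Finset.sum_congr rfl fun r _ => Finset.sum_comm
      _ = ∑ r, ∑ c', B r c' * W r c' := by
          refine Finset.sum_congr rfl fun r _ => Finset.sum_congr rfl fun c' _ => ?_
          rw [hBe r c', Finset.sum_mul]
          refine Finset.sum_congr rfl fun σ _ => ?_
          ring
  have hσ : ∃ σ, w σ ≠ 0 ∧ (∑ k, ∑ j, x k j * p k j) ≤ prof σ := by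
    by_contra hcon
    push_neg at hcon
    have hex : ∃ σ0 : Equiv.Perm (Fin n ⊕ (Fin m × Fin n)), w σ0 ≠ 0 := by
      by_contra h
      push_neg at h
      rw [Finset.sum_eq_zero (fun σ _ => h σ)] at hw1
      exact one_ne_zero hw1.symm
    obtain ⟨σ0, hσ0⟩ := hex
    set tot := ∑ k, ∑ j, x k j * p k j with htot
    have hlt : ∑ σ, w σ * prof σ < ∑ σ, w σ * tot := by
      refine Finset.sum_lt_sum (fun σ _ => ?_) ⟨σ0, Finset.mem_univ σ0, ?_⟩
      · rcases eq_or_ne (w σ) 0 with h | h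
        · rw [h]; ring_nf; exact le_refl 0
        · exact mul_le_mul_of_nonneg_left (hcon σ h).le (hw0 σ)
      · have hwpos : 0 < w σ0 := (hw0 σ0).lt_of_ne (Ne.symm hσ0)
        exact mul_lt_mul_of_pos_left (hcon σ0 hσ0) hwpos
    rw [← Finset.sum_mul, hw1, one_mul] at hlt
    rw [hdecomp, hBW] at hlt
    exact lt_irrefl tot hlt
  obtain ⟨σs, hws, hprofge⟩ := hσ
  have hwpos : 0 < w σs := (hw0 σs).lt_of_ne (Ne.symm hws)
  have hBpos : ∀ r, 0 < B r (σs r) := by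
    intro r
    have hterm : ∀ σ' : Equiv.Perm (Fin n ⊕ (Fin m × Fin n)),
        0 ≤ w σ' * (σ'.permMatrix ℝ) r (σs r) := by
      intro σ'
      apply mul_nonneg (hw0 σ')
      rw [hperm]
      split_ifs
      · exact zero_le_one
      · exact le_refl 0
    have hle : w σs ≤ B r (σs r) := by
      have h1 : w σs * (σs.permMatrix ℝ) r (σs r) = w σs := by
        rw [hperm, if_pos rfl]
        ring
      rw [hBe r (σs r), ← h1]
      exact Finset.single_le_sum (fun σ' _ => hterm σ') (Finset.mem_univ σs)
    exact lt_of_lt_of_le hwpos hle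
  have hyq : ∀ (k : Fin n) (q : Fin m × Fin n), σs (Sum.inl k) = Sum.inr q → 0 < y k q := by
    intro k q h
    have hb := hBpos (Sum.inl k)
    rw [h] at hb
    exact hb
  have hkq : ∀ k ∈ S, ∃ q : Fin m × Fin n, σs (Sum.inl k) = Sum.inr q := by
    intro k hk
    rcases hq : σs (Sum.inl k) with k' | q
    · exfalso
      have hb := hBpos (Sum.inl k)
      rw [hq] at hb
      have hr1 : rwx k = 1 := hrowS k hk
      have : B (Sum.inl k) (Sum.inl k') = if k = k' then 1 - rwx k else 0 := rfl
      rw [this, hr1] at hb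
      split_ifs at hb with he
      · norm_num at hb
      · exact lt_irrefl 0 hb
    · exact ⟨q, rfl⟩
  set U : Fin m → Finset (Fin n) :=
    fun j => S.filter (fun k => ∃ t : Fin n, σs (Sum.inl k) = Sum.inr (j, t)) with hU
  have hUmem : ∀ (j : Fin m) (k : Fin n),
      k ∈ U j ↔ (k ∈ S ∧ ∃ t : Fin n, σs (Sum.inl k) = Sum.inr (j, t)) := by
    intro j k
    rw [hU]
    simp [Finset.mem_filter]
  refine ⟨U, ?_, ?_, ?_, ?_⟩
  · -- disjointness
    intro j j' hne
    rw [Finset.disjoint_left]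
    intro k hk hk'
    obtain ⟨-, t, ht⟩ := (hUmem j k).1 hk
    obtain ⟨-, t', ht'⟩ := (hUmem j' k).1 hk'
    rw [ht] at ht'
    injection ht' with h
    exact hne (Prod.ext_iff.1 h).1
  · -- biUnion = S
    apply Finset.Subset.antisymm
    · intro k hk
      rw [Finset.mem_biUnion] at hk
      obtain ⟨j, -, hkj⟩ := hk
      exact ((hUmem j k).1 hkj).1
    · intro k hk
      obtain ⟨q, hq⟩ := hkq k hk
      rw [Finset.mem_biUnion]
      exact ⟨q.1, Finset.mem_univ _, (hUmem q.1 k).2 ⟨hk, q.2, by rw [hq]⟩⟩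
  · -- almost feasibility
    intro j
    set tt : Fin n → Fin n := fun k => Sum.elim (fun _ => k) (fun q => q.2) (σs (Sum.inl k)) with htt
    have htt_eq : ∀ k ∈ U j, σs (Sum.inl k) = Sum.inr (j, tt k) := by
      intro k hk
      obtain ⟨-, t, ht⟩ := (hUmem j k).1 hk
      rw [htt]
      simp only [ht, Sum.elim_inr]
    have httinj : ∀ k ∈ U j, ∀ k' ∈ U j, tt k = tt k' → k = k' := by
      intro k hk k' hk' he
      have h1 := htt_eq k hk
      have h2 := htt_eq k' hk'
      rw [he] at h1
      exact Sum.inl.inj (σs.injective (h1.trans h2.symm))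
    have hypos : ∀ k ∈ U j, 0 < y k (j, tt k) := fun k hk => hyq k (j, tt k) (htt_eq k hk)
    have main : ∀ L' : Finset (Fin n), L' ⊆ U j → (∀ k ∈ L', 1 ≤ (tt k).val) →
        ∑ k ∈ L', s k ≤ 1 := by
      intro L' hsub hpos1
      set prv : Fin n → Fin n :=
        fun t => ⟨t.val - 1, lt_of_le_of_lt (Nat.sub_le _ _) t.isLt⟩ with hprv
      set slotsum : Fin n → ℝ := fun t => ∑ k', y k' (j, t) * s k' with hslot
      have hss0 : ∀ t, 0 ≤ slotsum t :=
        fun t => Finset.sum_nonneg fun k' _ => mul_nonneg (hy0 _ _) (hs k')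
      have step1 : ∀ k ∈ L', s k ≤ slotsum (prv (tt k)) := by
        intro k hk
        have hk1 : 1 ≤ (tt k).val := hpos1 k hk
        have hy1 : 0 < y k (j, tt k) := hypos k (hsub hk)
        have hcc := hyc k j (tt k) hy1
        have hXn : (((tt k).val : ℝ)) < c j n :=
          lt_of_lt_of_le hcc.2 (hcmono j (Nat.succ_le_of_lt k.isLt))
        have hprvv : (((prv (tt k)).val : ℝ)) + 1 = (((tt k).val : ℝ)) := by
          rw [hprv]
          simp only
          rw [Nat.cast_sub hk1]
          ring
        have hfull : cm (j, prv (tt k)) = 1 := by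
          apply hcmfull
          rw [hprvv]
          exact hXn.le
        have hsz : ∀ k', 0 < y k' (j, prv (tt k)) → s k ≤ s k' := by
          intro k' hyk'
          have hcc' := hyc k' j (prv (tt k)) hyk'
          rcases le_or_gt k' k with h | h
          · exact hanti k' k h
          · exfalso
            have h1 : c j (k.val + 1) ≤ c j k'.val := hcmono j (Nat.succ_le_of_lt h)
            rw [hprvv] at hcc'
            linarith [hcc.2, hcc'.1]
        have heq1 : s k = s k * cm (j, prv (tt k)) := by rw [hfull]; ring
        rw [heq1, hcm]
        simp only
        rw [Finset.mul_sum, hslot]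
        simp only
        apply Finset.sum_le_sum
        intro k' _
        rcases (hy0 k' (j, prv (tt k))).eq_or_lt with hz | hz
        · rw [← hz]
          simp
        · have hss := hsz k' hz
          calc s k * y k' (j, prv (tt k)) = y k' (j, prv (tt k)) * s k := by ring
            _ ≤ y k' (j, prv (tt k)) * s k' := mul_le_mul_of_nonneg_left hss hz.le
      have hinj2 : ∀ k ∈ L', ∀ k' ∈ L', prv (tt k) = prv (tt k') → k = k' := by
        intro k hk k' hk' he
        apply httinj k (hsub hk) k' (hsub hk')
        have h1 : (tt k).val - 1 = (tt k').val - 1 := congrArg Fin.val he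
        have h2 := hpos1 k hk
        have h3 := hpos1 k' hk'
        apply Fin.ext
        omega
      calc ∑ k ∈ L', s k ≤ ∑ k ∈ L', slotsum (prv (tt k)) := Finset.sum_le_sum step1
        _ = ∑ t ∈ L'.image (fun k => prv (tt k)), slotsum t := (Finset.sum_image hinj2).symm
        _ ≤ ∑ t : Fin n, slotsum t :=
            Finset.sum_le_sum_of_subset_of_nonneg (Finset.subset_univ _) (fun t _ _ => hss0 t)
        _ = ∑ k', x k' j * s k' := by
            rw [hslot]
            simp only
            rw [Finset.sum_comm]
            refine Finset.sum_congr rfl fun k' _ => ?_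
            rw [← Finset.sum_mul, F1 k' j]
        _ ≤ 1 := hcap j
    by_cases hex : ∃ u ∈ U j, (tt u).val = 0
    · obtain ⟨u, hu, hu0⟩ := hex
      right
      refine ⟨u, hu, ?_⟩
      apply main
      · exact Finset.erase_subset _ _
      · intro k hk
        have hkU : k ∈ U j := Finset.mem_of_mem_erase hk
        by_contra hk0
        have hv0 : (tt k).val = 0 := by omega
        have hte : tt k = tt u := Fin.ext (by rw [hv0, hu0])
        exact (Finset.ne_of_mem_erase hk) (httinj k hkU u hu hte)
    · left
      apply main _ (Finset.Subset.refl _)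
      intro k hk
      push_neg at hex
      have := hex k hk
      omega
  · -- profit
    have hprofU : prof σs = ∑ j, ∑ k ∈ U j, p k j := by
      rw [hprof]
      simp only
      rw [Fintype.sum_sum_type]
      have h2 : ∑ q : Fin m × Fin n, W (Sum.inr q) (σs (Sum.inr q)) = 0 := by
        apply Finset.sum_eq_zero
        intro q _
        rcases h : σs (Sum.inr q) with k' | q' <;> simp [hW]
      rw [h2, add_zero]
      have h1 : ∀ k : Fin n,
          W (Sum.inl k) (σs (Sum.inl k)) = ∑ j, if k ∈ U j then p k j else 0 := by
        intro k
        by_cases hk : k ∈ S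
        · obtain ⟨q, hq⟩ := hkq k hk
          have hcond : ∀ j : Fin m, (k ∈ U j) ↔ j = q.1 := by
            intro j
            rw [hUmem j k]
            constructor
            · rintro ⟨-, t, ht⟩
              rw [hq] at ht
              injection ht with h'
              exact (congrArg Prod.fst h').symm
            · rintro rfl
              exact ⟨hk, q.2, by rw [hq]⟩
          have hthis : ∀ j : Fin m,
              (if k ∈ U j then p k j else 0) = if j = q.1 then p k j else 0 := by
            intro j
            by_cases h : j = q.1
            · rw [if_pos ((hcond j).2 h), if_pos h]
            · rw [if_neg (fun hh => h ((hcond j).1 hh)), if_neg h]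
          rw [hq]
          rw [Finset.sum_congr rfl fun j _ => hthis j]
          rw [Finset.sum_ite_eq' Finset.univ q.1 (fun j => p k j)]
          simp only [Finset.mem_univ, if_true]
          show (if k ∈ S then p k q.1 else 0) = p k q.1
          rw [if_pos hk]
        · have hL : W (Sum.inl k) (σs (Sum.inl k)) = 0 := by
            rcases h : σs (Sum.inl k) with k' | q <;> simp [hW, hk]
          rw [hL]
          symm
          apply Finset.sum_eq_zero
          intro j _
          rw [if_neg]
          intro hkj
          exact hk ((hUmem j k).1 hkj).1
      rw [Finset.sum_congr rfl fun k (_ : k ∈ Finset.univ) => h1 k]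
      rw [Finset.sum_comm]
      refine Finset.sum_congr rfl fun j _ => ?_
      rw [Finset.sum_ite_mem, Finset.univ_inter]
    calc ∑ i, ∑ j, x i j * p i j ≤ prof σs := hprofge
      _ = ∑ j, ∑ k ∈ U j, p k j := hprofU

/-- Rounding a feasible fractional GAP solution on a set `S` of total size at
most `m` yields an almost feasible assignment of exactly the items of `S`
whose profit is at least the fractional profit. -/
theorem fractional_to_almost_feasible
    (n m : ℕ) (s : Fin n → ℝ) (hs : ∀ i, 0 < s i)
    (p : Fin n → Fin m → ℝ) (hp : ∀ i j, 0 ≤ p i j)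
    (S : Finset (Fin n)) (hS : (∑ i ∈ S, s i) ≤ (m : ℝ))
    (x : Fin n → Fin m → ℝ)
    (hx_nonneg : ∀ i j, 0 ≤ x i j)
    (hx_item : ∀ i, ∑ j, x i j ≤ 1)
    (hx_cap : ∀ j, ∑ i, x i j * s i ≤ 1)
    (hx_out : ∀ i ∉ S, ∀ j, x i j = 0) :
    ∃ U : Fin m → Finset (Fin n),
      (∀ j k, j ≠ k → Disjoint (U j) (U k)) ∧
      (Finset.univ.biUnion U = S) ∧
      (∀ j, (∑ i ∈ U j, s i) ≤ 1 ∨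
        ∃ u ∈ U j, (∑ i ∈ (U j).erase u, s i) ≤ 1) ∧
      (∑ i, ∑ j, x i j * p i j) ≤ ∑ j, ∑ i ∈ U j, p i j := by
  classical
  obtain ⟨xe, hxe_ge, hxe0, hxe_row, hxe_rowS, hxe_out, hxe_cap⟩ :=
    extend_rows n m s hs S hS x hx_nonneg hx_item hx_cap hx_out
  set σ : Equiv.Perm (Fin n) := Tuple.sort (fun i => -s i) with hσdef
  have hmono := Tuple.monotone_sort (fun i => -s i)
  have hanti : ∀ k k' : Fin n, k ≤ k' → s (σ k') ≤ s (σ k) := by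
    intro k k' h
    have h2 := hmono h
    simp only [Function.comp] at h2
    rw [← hσdef] at h2
    linarith
  set S' : Finset (Fin n) := Finset.univ.filter (fun k => σ k ∈ S) with hS'
  have hS'mem : ∀ k, k ∈ S' ↔ σ k ∈ S := by
    intro k
    rw [hS']
    simp
  obtain ⟨U', hdisj, hbi, hfeas, hprofit⟩ :=
    core n m (fun k => s (σ k)) (fun k => (hs (σ k)).le) hanti
      (fun k j => p (σ k) j) (fun k j => hp (σ k) j)
      S' (fun k j => xe (σ k) j)
      (fun k j => hxe0 (σ k) j) (fun k => hxe_row (σ k))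
      (fun k hk => hxe_rowS (σ k) ((hS'mem k).1 hk))
      (fun k hk j => hxe_out (σ k) (fun hc => hk ((hS'mem k).2 hc)) j)
      (fun j => by
        have h3 : ∑ k, xe (σ k) j * s (σ k) = ∑ i, xe i j * s i :=
          Equiv.sum_comp σ (fun i => xe i j * s i)
        rw [h3]
        exact hxe_cap j)
  refine ⟨fun j => (U' j).image σ, ?_, ?_, ?_, ?_⟩
  · intro j j' hne
    rw [Finset.disjoint_image σ.injective]
    exact hdisj j j' hne
  · ext i
    simp only [Finset.mem_biUnion, Finset.mem_image, Finset.mem_univ, true_and]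
    constructor
    · rintro ⟨j, k, hk, rfl⟩
      have hmem : k ∈ Finset.univ.biUnion U' := Finset.mem_biUnion.2 ⟨j, Finset.mem_univ _, hk⟩
      rw [hbi] at hmem
      exact (hS'mem k).1 hmem
    · intro hi
      have hk : σ.symm i ∈ S' := (hS'mem _).2 (by rw [Equiv.apply_symm_apply]; exact hi)
      rw [← hbi] at hk
      obtain ⟨j, -, hkj⟩ := Finset.mem_biUnion.1 hk
      exact ⟨j, σ.symm i, hkj, Equiv.apply_symm_apply σ i⟩
  · intro j
    rcases hfeas j with h | ⟨u, hu, h⟩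
    · left
      rw [Finset.sum_image (fun a _ b _ hab => σ.injective hab)]
      exact h
    · right
      refine ⟨σ u, Finset.mem_image_of_mem σ hu, ?_⟩
      rw [← Finset.image_erase σ.injective]
      rw [Finset.sum_image (fun a _ b _ hab => σ.injective hab)]
      exact h
  · calc ∑ i, ∑ j, x i j * p i j ≤ ∑ i, ∑ j, xe i j * p i j := by
          apply Finset.sum_le_sum
          intro i _
          apply Finset.sum_le_sum
          intro j _
          exact mul_le_mul_of_nonneg_right (hxe_ge i j) (hp i j)
      _ = ∑ k, ∑ j, xe (σ k) j * p (σ k) j :=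
          (Equiv.sum_comp σ (fun i => ∑ j, xe i j * p i j)).symm
      _ ≤ ∑ j, ∑ k ∈ U' j, p (σ k) j := hprofit
      _ = ∑ j, ∑ i ∈ (U' j).image σ, p i j := by
          refine Finset.sum_congr rfl fun j _ => ?_
          rw [Finset.sum_image (fun a _ b _ hab => σ.injective hab)]
end

section
/- Let I be a finite set of items with sizes s_i satisfying 0 < s_i ≤ 1, let M = {1,...,m} be a set of m unit-capacity bins, and let p_{i,j} ≥ 0 be profits. Let U = (U_1,...,U_m) be an almost feasible assignment (for each bin j there is an element u_j* ∈ U_j such that Σ_{i∈U_j\{u_j*}} s_i ≤ 1) whose assigned items I(U) = ∪_{j=1}^m U_j satisfy Σ_{i∈I(U)} s_i ≤ m/2. Then there exists a feasible assignment U' = (U'_1,...,U'_m), i.e., with Σ_{i∈U'_j} s_i ≤ 1 for every bin j, such that I(U') = I(U) and p(U') ≥ (1/2)·p(U), where p(U) = Σ_{j=1}^m Σ_{i∈U_j} p_{i,j}. -/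
open Finset

/-- Greedily place "small" items (size ≤ 1/2) into bins: as long as the grand total
is at most m/2, some bin has load ≤ 1/2, so any small item fits there. -/
lemma aux_place_smalls {n m : ℕ} (s : Fin n → ℝ) (hs : ∀ i, 0 < s i)
    (P : Finset (Fin n)) (V : Fin m → Finset (Fin n))
    (hdisj : ∀ j k, j ≠ k → Disjoint (V j) (V k))
    (hPV : ∀ i ∈ P, ∀ j, i ∉ V j)
    (hsmall : ∀ i ∈ P, s i ≤ 1 / 2)
    (hload : ∀ j, ∑ i ∈ V j, s i ≤ 1)
    (htot : (∑ j, ∑ i ∈ V j, s i) + ∑ i ∈ P, s i ≤ (m : ℝ) / 2) :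
    ∃ V' : Fin m → Finset (Fin n),
      (∀ j, V j ⊆ V' j) ∧ (∀ j k, j ≠ k → Disjoint (V' j) (V' k)) ∧
      (∀ j, ∑ i ∈ V' j, s i ≤ 1) ∧
      Finset.univ.biUnion V' = Finset.univ.biUnion V ∪ P := by
  classical
  induction P using Finset.strongInduction generalizing V with
  | _ P IH =>
    by_cases hP : P.Nonempty
    · obtain ⟨x, hx⟩ := hP
      have hxV : ∀ j, x ∉ V j := hPV x hx
      have hbin : ∃ j₀, ∑ i ∈ V j₀, s i ≤ 1 / 2 := by
        by_contra h
        push_neg at h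
        have h1 : (m : ℝ) / 2 ≤ ∑ j, ∑ i ∈ V j, s i := by
          have := Finset.sum_le_sum (fun j (_ : j ∈ Finset.univ) => (h j).le)
          simpa [Finset.sum_const, Finset.card_univ, mul_comm, div_eq_mul_inv] using this
        have h2 : 0 < ∑ i ∈ P, s i :=
          Finset.sum_pos (fun i _ => hs i) ⟨x, hx⟩
        linarith
      obtain ⟨j₀, hj₀⟩ := hbin
      set W : Fin m → Finset (Fin n) := Function.update V j₀ (insert x (V j₀)) with hW
      have hWj₀ : W j₀ = insert x (V j₀) := by simp [hW]
      have hWne : ∀ j, j ≠ j₀ → W j = V j := by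
        intro j hj; simp [hW, Function.update_of_ne hj]
      have hsub : ∀ j, V j ⊆ W j := by
        intro j
        by_cases hj : j = j₀
        · subst hj; rw [hWj₀]; exact Finset.subset_insert _ _
        · rw [hWne j hj]
      have hWdisj : ∀ j k, j ≠ k → Disjoint (W j) (W k) := by
        intro j k hjk
        have hVd := hdisj j k hjk
        by_cases hj : j = j₀
        · have hkj : k ≠ j₀ := by rw [← hj]; exact Ne.symm hjk
          rw [hj, hWj₀, hWne k hkj]
          have hVd' := hdisj j₀ k (by rw [← hj]; exact hjk)
          exact Finset.disjoint_insert_left.2 ⟨hxV k, hVd'⟩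
        · by_cases hk : k = j₀
          · rw [hWne j hj, hk, hWj₀]
            have hVd' := hdisj j j₀ (by rw [← hk]; exact hjk)
            exact Finset.disjoint_insert_right.2 ⟨hxV j, hVd'⟩
          · rw [hWne j hj, hWne k hk]; exact hVd
      have hWPV : ∀ i ∈ P.erase x, ∀ j, i ∉ W j := by
        intro i hi j
        have hine : i ≠ x := Finset.ne_of_mem_erase hi
        have hiP : i ∈ P := Finset.mem_of_mem_erase hi
        by_cases hj : j = j₀
        · rw [hj, hWj₀]
          simp only [Finset.mem_insert]
          push_neg
          exact ⟨hine, hPV i hiP j₀⟩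
        · rw [hWne j hj]; exact hPV i hiP j
      have hsumW : ∀ j, ∑ i ∈ W j, s i ≤ 1 := by
        intro j
        by_cases hj : j = j₀
        · rw [hj, hWj₀, Finset.sum_insert (hxV j₀)]
          have := hsmall x hx
          linarith
        · rw [hWne j hj]; exact hload j
      have hsumWtot : (∑ j, ∑ i ∈ W j, s i) = (∑ j, ∑ i ∈ V j, s i) + s x := by
        have : ∑ j, ∑ i ∈ W j, s i
            = ∑ j ∈ Finset.univ.erase j₀, (∑ i ∈ V j, s i) + ∑ i ∈ W j₀, s i := by
          rw [← Finset.sum_erase_add Finset.univ _ (Finset.mem_univ j₀)]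
          congr 1
          apply Finset.sum_congr rfl
          intro j hj
          rw [hWne j (Finset.ne_of_mem_erase hj)]
        rw [this, hWj₀, Finset.sum_insert (hxV j₀)]
        rw [← Finset.sum_erase_add Finset.univ _ (Finset.mem_univ j₀)]
        ring
      have htotW : (∑ j, ∑ i ∈ W j, s i) + ∑ i ∈ P.erase x, s i ≤ (m : ℝ) / 2 := by
        have h3 : ∑ i ∈ P.erase x, s i + s x = ∑ i ∈ P, s i :=
          Finset.sum_erase_add P _ hx
        rw [hsumWtot]
        linarith
      obtain ⟨V', h1, h2, h3, h4⟩ :=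
        IH (P.erase x) (Finset.erase_ssubset hx) W hWdisj hWPV
          (fun i hi => hsmall i (Finset.mem_of_mem_erase hi)) hsumW htotW
      refine ⟨V', fun j => (hsub j).trans (h1 j), h2, h3, ?_⟩
      rw [h4]
      have hbW : Finset.univ.biUnion W = insert x (Finset.univ.biUnion V) := by
        ext i
        simp only [Finset.mem_biUnion, Finset.mem_univ, true_and, Finset.mem_insert]
        constructor
        · rintro ⟨j, hj⟩
          by_cases hjj : j = j₀
          · rw [hjj, hWj₀] at hj
            rcases Finset.mem_insert.1 hj with h | h
            · exact Or.inl h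
            · exact Or.inr ⟨j₀, h⟩
          · rw [hWne j hjj] at hj; exact Or.inr ⟨j, hj⟩
        · rintro (rfl | ⟨j, hj⟩)
          · exact ⟨j₀, by rw [hWj₀]; exact Finset.mem_insert_self _ _⟩
          · exact ⟨j, hsub j hj⟩
      rw [hbW]
      ext i
      simp only [Finset.mem_union, Finset.mem_insert, Finset.mem_erase]
      constructor
      · rintro ((rfl | h) | ⟨hne, hiP⟩)
        · exact Or.inr hx
        · exact Or.inl h
        · exact Or.inr hiP
      · rintro (h | hiP)
        · exact Or.inl (Or.inr h)
        · by_cases hix : i = x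
          · exact Or.inl (Or.inl hix)
          · exact Or.inr ⟨hix, hiP⟩
    · rw [Finset.not_nonempty_iff_eq_empty] at hP
      subst hP
      exact ⟨V, fun j => le_refl _, hdisj, hload, by simp⟩


/-- Place each item of `Q` (each of size ≤ 1) alone into its own currently-empty bin
drawn from `E`, provided `Q.card ≤ E.card`. -/
lemma aux_place_bigs {n m : ℕ} (s : Fin n → ℝ)
    (Q : Finset (Fin n)) (E : Finset (Fin m)) (V : Fin m → Finset (Fin n))
    (hE : ∀ j ∈ E, V j = ∅)
    (hcard : Q.card ≤ E.card)
    (hdisj : ∀ j k, j ≠ k → Disjoint (V j) (V k))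
    (hQV : ∀ i ∈ Q, ∀ j, i ∉ V j)
    (hload : ∀ j, ∑ i ∈ V j, s i ≤ 1)
    (hone : ∀ i ∈ Q, s i ≤ 1) :
    ∃ V' : Fin m → Finset (Fin n),
      (∀ j, V j ⊆ V' j) ∧ (∀ j k, j ≠ k → Disjoint (V' j) (V' k)) ∧
      (∀ j, ∑ i ∈ V' j, s i ≤ 1) ∧
      Finset.univ.biUnion V' = Finset.univ.biUnion V ∪ Q := by
  classical
  induction Q using Finset.strongInduction generalizing V E with
  | _ Q IH =>
    by_cases hQ : Q.Nonempty
    · obtain ⟨x, hx⟩ := hQ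
      have hxV : ∀ j, x ∉ V j := hQV x hx
      have hEne : E.Nonempty := by
        rw [← Finset.card_pos]
        calc 0 < Q.card := Finset.card_pos.2 ⟨x, hx⟩
          _ ≤ E.card := hcard
      obtain ⟨j₀, hj₀E⟩ := hEne
      have hVj₀ : V j₀ = ∅ := hE j₀ hj₀E
      set W : Fin m → Finset (Fin n) := Function.update V j₀ (insert x (V j₀)) with hW
      have hWj₀ : W j₀ = insert x (V j₀) := by simp [hW]
      have hWne : ∀ j, j ≠ j₀ → W j = V j := by
        intro j hj; simp [hW, Function.update_of_ne hj]
      have hsub : ∀ j, V j ⊆ W j := by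
        intro j
        by_cases hj : j = j₀
        · rw [hj, hWj₀]; exact Finset.subset_insert _ _
        · rw [hWne j hj]
      have hWdisj : ∀ j k, j ≠ k → Disjoint (W j) (W k) := by
        intro j k hjk
        have hVd := hdisj j k hjk
        by_cases hj : j = j₀
        · have hkj : k ≠ j₀ := by rw [← hj]; exact Ne.symm hjk
          rw [hj, hWj₀, hWne k hkj]
          have hVd' := hdisj j₀ k (by rw [← hj]; exact hjk)
          exact Finset.disjoint_insert_left.2 ⟨hxV k, hVd'⟩
        · by_cases hk : k = j₀
          · rw [hWne j hj, hk, hWj₀]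
            have hVd' := hdisj j j₀ (by rw [← hk]; exact hjk)
            exact Finset.disjoint_insert_right.2 ⟨hxV j, hVd'⟩
          · rw [hWne j hj, hWne k hk]; exact hVd
      have hWE : ∀ j ∈ E.erase j₀, W j = ∅ := by
        intro j hj
        rw [hWne j (Finset.ne_of_mem_erase hj)]
        exact hE j (Finset.mem_of_mem_erase hj)
      have hcard' : (Q.erase x).card ≤ (E.erase j₀).card := by
        rw [Finset.card_erase_of_mem hx, Finset.card_erase_of_mem hj₀E]
        omega
      have hWQV : ∀ i ∈ Q.erase x, ∀ j, i ∉ W j := by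
        intro i hi j
        have hine : i ≠ x := Finset.ne_of_mem_erase hi
        have hiQ : i ∈ Q := Finset.mem_of_mem_erase hi
        by_cases hj : j = j₀
        · rw [hj, hWj₀]
          simp only [Finset.mem_insert]
          push_neg
          exact ⟨hine, hQV i hiQ j₀⟩
        · rw [hWne j hj]; exact hQV i hiQ j
      have hsumW : ∀ j, ∑ i ∈ W j, s i ≤ 1 := by
        intro j
        by_cases hj : j = j₀
        · rw [hj, hWj₀, Finset.sum_insert (hxV j₀), hVj₀]
          simpa using hone x hx
        · rw [hWne j hj]; exact hload j
      obtain ⟨V', h1, h2, h3, h4⟩ :=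
        IH (Q.erase x) (Finset.erase_ssubset hx) (E.erase j₀) W hWE hcard' hWdisj hWQV
          hsumW (fun i hi => hone i (Finset.mem_of_mem_erase hi))
      refine ⟨V', fun j => (hsub j).trans (h1 j), h2, h3, ?_⟩
      rw [h4]
      have hbW : Finset.univ.biUnion W = insert x (Finset.univ.biUnion V) := by
        ext i
        simp only [Finset.mem_biUnion, Finset.mem_univ, true_and, Finset.mem_insert]
        constructor
        · rintro ⟨j, hj⟩
          by_cases hjj : j = j₀
          · rw [hjj, hWj₀] at hj
            rcases Finset.mem_insert.1 hj with h | h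
            · exact Or.inl h
            · exact Or.inr ⟨j₀, h⟩
          · rw [hWne j hjj] at hj; exact Or.inr ⟨j, hj⟩
        · rintro (rfl | ⟨j, hj⟩)
          · exact ⟨j₀, by rw [hWj₀]; exact Finset.mem_insert_self _ _⟩
          · exact ⟨j, hsub j hj⟩
      rw [hbW]
      ext i
      simp only [Finset.mem_union, Finset.mem_insert, Finset.mem_erase]
      constructor
      · rintro ((rfl | h) | ⟨hne, hiQ⟩)
        · exact Or.inr hx
        · exact Or.inl h
        · exact Or.inr hiQ
      · rintro (h | hiQ)
        · exact Or.inl (Or.inr h)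
        · by_cases hix : i = x
          · exact Or.inl (Or.inl hix)
          · exact Or.inr ⟨hix, hiQ⟩
    · rw [Finset.not_nonempty_iff_eq_empty] at hQ
      subst hQ
      exact ⟨V, fun j => le_refl _, hdisj, hload, by simp⟩


/-- Filling phase: an almost feasible assignment whose items have total size
at most `m/2` can be converted into a feasible assignment of the same items
with at least half the profit. -/
theorem almost_feasible_to_feasible
    (n m : ℕ) (s : Fin n → ℝ) (hs : ∀ i, 0 < s i ∧ s i ≤ 1)
    (p : Fin n → Fin m → ℝ) (hp : ∀ i j, 0 ≤ p i j)
    (U : Fin m → Finset (Fin n))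
    (hdisj : ∀ j k, j ≠ k → Disjoint (U j) (U k))
    (halmost : ∀ j, (∑ i ∈ U j, s i) ≤ 1 ∨
      ∃ u ∈ U j, (∑ i ∈ (U j).erase u, s i) ≤ 1)
    (hsize : (∑ i ∈ Finset.univ.biUnion U, s i) ≤ (m : ℝ) / 2) :
    ∃ U' : Fin m → Finset (Fin n),
      (∀ j k, j ≠ k → Disjoint (U' j) (U' k)) ∧
      (∀ j, (∑ i ∈ U' j, s i) ≤ 1) ∧
      Finset.univ.biUnion U' = Finset.univ.biUnion U ∧
      (1 / 2) * (∑ j, ∑ i ∈ U j, p i j) ≤ ∑ j, ∑ i ∈ U' j, p i j := by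
  classical
  -- trivial case: everything already fits
  by_cases hS0 : ∀ j, (∑ i ∈ U j, s i) ≤ 1
  · refine ⟨U, hdisj, hS0, rfl, ?_⟩
    have h0 : (0:ℝ) ≤ ∑ j, ∑ i ∈ U j, p i j :=
      Finset.sum_nonneg fun j _ => Finset.sum_nonneg fun i _ => hp i j
    linarith
  push_neg at hS0
  obtain ⟨jbad, hjbad⟩ := hS0
  -- basic positivity facts
  have spos : ∀ i, 0 ≤ s i := fun i => (hs i).1.le
  have hone : ∀ i, s i ≤ 1 := fun i => (hs i).2
  -- home uniqueness
  have hhome : ∀ i : Fin n, ∀ a b : Fin m, i ∈ U a → i ∈ U b → a = b := by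
    intro i a b ha hb
    by_contra hab
    exact (Finset.disjoint_left.1 (hdisj a b hab)) ha hb
  -- σ-positivity and nonemptiness
  have hsig_nonneg : ∀ j, 0 ≤ ∑ i ∈ U j, s i :=
    fun j => Finset.sum_nonneg fun i _ => spos i
  have hne_of_big : ∀ j : Fin m, 1 < ∑ i ∈ U j, s i → (U j).Nonempty := by
    intro j hj
    rcases Finset.eq_empty_or_nonempty (U j) with h | h
    · rw [h] at hj; simp at hj; linarith
    · exact h
  have hUjbad : (U jbad).Nonempty := hne_of_big jbad hjbad
  obtain ⟨i₀, hi₀⟩ := hUjbad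
  -- the maximal-size item of each bin
  have hmax : ∀ j : Fin m, (U j).Nonempty → ∃ i, i ∈ U j ∧ ∀ i' ∈ U j, s i' ≤ s i := by
    intro j hj
    obtain ⟨b, hb, hble⟩ := Finset.exists_max_image (U j) s hj
    exact ⟨b, hb, hble⟩
  set u : Fin m → Fin n := fun j =>
    if hj : (U j).Nonempty then (hmax j hj).choose else i₀ with hu_def
  have hu_mem : ∀ j : Fin m, (U j).Nonempty → u j ∈ U j := by
    intro j hj
    simp only [hu_def, dif_pos hj]
    exact (hmax j hj).choose_spec.1
  have hu_max : ∀ j : Fin m, ∀ i ∈ U j, s i ≤ s (u j) := by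
    intro j i hi
    have hj : (U j).Nonempty := ⟨i, hi⟩
    simp only [hu_def, dif_pos hj]
    exact (hmax j hj).choose_spec.2 i hi
  -- the first-phase leftovers A j
  set A : Fin m → Finset (Fin n) := fun j => (U j).erase (u j) with hA_def
  have hA_sub : ∀ j, A j ⊆ U j := fun j => Finset.erase_subset _ _
  have hA_sum_add : ∀ j : Fin m, (U j).Nonempty →
      (∑ i ∈ A j, s i) + s (u j) = ∑ i ∈ U j, s i := by
    intro j hj
    rw [hA_def]
    exact Finset.sum_erase_add _ _ (hu_mem j hj)
  -- the overfull bins and fitting bins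
  set S : Finset (Fin m) := Finset.univ.filter (fun j => 1 < ∑ i ∈ U j, s i) with hS_def
  set Fit : Finset (Fin m) := Finset.univ \ S with hFit_def
  have hS_mem : ∀ j, j ∈ S ↔ 1 < ∑ i ∈ U j, s i := by
    intro j; rw [hS_def]; simp
  have hFit_mem : ∀ j, j ∈ Fit ↔ (∑ i ∈ U j, s i) ≤ 1 := by
    intro j; rw [hFit_def, hS_def]; simp
  have hS_ne : ∀ j ∈ S, (U j).Nonempty := fun j hj => hne_of_big j ((hS_mem j).1 hj)
  have hSFit_disj : Disjoint S Fit := by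
    rw [hFit_def]; exact Finset.disjoint_sdiff
  have hS_nonempty : S.Nonempty := ⟨jbad, (hS_mem jbad).2 hjbad⟩
  have hcards : S.card + Fit.card = m := by
    rw [hFit_def, Finset.card_sdiff_of_subset (Finset.subset_univ S), Finset.card_univ, Fintype.card_fin]
    have := Finset.card_le_card (Finset.subset_univ S)
    rw [Finset.card_univ, Fintype.card_fin] at this
    omega
  have hA_sum : ∀ j ∈ S, ∑ i ∈ A j, s i ≤ 1 := by
    intro j hjS
    have h1 : 1 < ∑ i ∈ U j, s i := (hS_mem j).1 hjS
    rcases halmost j with h | ⟨w, hw, hle⟩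
    · linarith
    · have hne : (U j).Nonempty := ⟨w, hw⟩
      have h2 := hA_sum_add j hne
      have h3 : ∑ i ∈ (U j).erase w, s i + s w = ∑ i ∈ U j, s i :=
        Finset.sum_erase_add _ _ hw
      have h4 : s w ≤ s (u j) := hu_max j w hw
      linarith
  -- the total size, written per bin
  have hT : ∑ j, ∑ i ∈ U j, s i ≤ (m : ℝ) / 2 := by
    have hpd : (↑(Finset.univ : Finset (Fin m)) : Set (Fin m)).PairwiseDisjoint U :=
      fun a _ b _ hab => hdisj a b hab
    rw [← Finset.sum_biUnion hpd]
    exact hsize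
  -- pair bound : two distinct members of a bin bound its σ from below
  have hpair : ∀ (t : Finset (Fin n)) (a b : Fin n), a ∈ t → b ∈ t → a ≠ b →
      s a + s b ≤ ∑ i ∈ t, s i := by
    intro t a b ha hb hab
    have h1 : a ∈ t.erase b := Finset.mem_erase.2 ⟨hab, ha⟩
    have h2 : s a ≤ ∑ i ∈ t.erase b, s i :=
      Finset.single_le_sum (fun i _ => spos i) h1
    have h3 : (∑ i ∈ t.erase b, s i) + s b = ∑ i ∈ t, s i :=
      Finset.sum_erase_add _ _ hb
    linarith
  -- single bound
  have hsingle : ∀ (t : Finset (Fin n)) (a : Fin n), a ∈ t → s a ≤ ∑ i ∈ t, s i :=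
    fun t a ha => Finset.single_le_sum (fun i _ => spos i) ha
  -- fine classification of fitting bins
  set BigBins : Finset (Fin m) := Fit.filter (fun k => ∃ i ∈ U k, 1/2 < s i) with hBB_def
  set BFF : Finset (Fin m) := Fit \ BigBins with hBFF_def
  have hBB_sub : BigBins ⊆ Fit := Finset.filter_subset _ _
  have hBFF_sub : BFF ⊆ Fit := Finset.sdiff_subset
  have hBFF_nobig : ∀ k ∈ BFF, ∀ i ∈ U k, s i ≤ 1/2 := by
    intro k hk i hi
    by_contra h
    push_neg at h
    have : k ∈ BigBins := by
      rw [hBB_def, Finset.mem_filter]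
      exact ⟨hBFF_sub hk, ⟨i, hi, h⟩⟩
    rw [hBFF_def] at hk
    exact (Finset.mem_sdiff.1 hk).2 this
  -- mass bound 1 : S.card + BigBins.card ≤ Fit.card
  have hsum_split2 : ∀ (X Y : Finset (Fin m)), Disjoint X Y →
      (∑ j ∈ X, ∑ i ∈ U j, s i) + (∑ j ∈ Y, ∑ i ∈ U j, s i) ≤ ∑ j, ∑ i ∈ U j, s i := by
    intro X Y hXY
    rw [← Finset.sum_union hXY]
    exact Finset.sum_le_sum_of_subset_of_nonneg (Finset.subset_univ _)
      (fun j _ _ => hsig_nonneg j)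
  have hS_lb : (S.card : ℝ) ≤ ∑ j ∈ S, ∑ i ∈ U j, s i := by
    have : ∑ j ∈ S, (1:ℝ) ≤ ∑ j ∈ S, ∑ i ∈ U j, s i :=
      Finset.sum_le_sum (fun j hj => ((hS_mem j).1 hj).le)
    simpa using this
  have hBB_lb : (BigBins.card : ℝ) * (1/2) ≤ ∑ j ∈ BigBins, ∑ i ∈ U j, s i := by
    have : ∑ j ∈ BigBins, (1/2 : ℝ) ≤ ∑ j ∈ BigBins, ∑ i ∈ U j, s i := by
      apply Finset.sum_le_sum
      intro k hk
      rw [hBB_def, Finset.mem_filter] at hk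
      obtain ⟨-, i, hi, hbig⟩ := hk
      have := hsingle (U k) i hi
      linarith
    simpa [mul_comm] using this
  have hM1 : S.card + BigBins.card ≤ Fit.card := by
    have h1 := hsum_split2 S BigBins
      (Finset.disjoint_of_subset_right hBB_sub hSFit_disj)
    have h2 : (S.card : ℝ) + (BigBins.card : ℝ) * (1/2) ≤ (m:ℝ)/2 := by linarith
    have h3 : (S.card : ℝ) + (Fit.card : ℝ) = (m:ℝ) := by exact_mod_cast hcards
    have h4 : (S.card : ℝ) + (BigBins.card : ℝ) ≤ (Fit.card : ℝ) := by linarith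
    exact_mod_cast h4
  -- max-size item of A j
  have hmaxA : ∀ j : Fin m, (A j).Nonempty → ∃ i, i ∈ A j ∧ ∀ i' ∈ A j, s i' ≤ s i := by
    intro j hj
    obtain ⟨b, hb, hble⟩ := Finset.exists_max_image (A j) s hj
    exact ⟨b, hb, hble⟩
  set v : Fin m → Fin n := fun j =>
    if hj : (A j).Nonempty then (hmaxA j hj).choose else i₀ with hv_def
  have hv_mem : ∀ j : Fin m, (A j).Nonempty → v j ∈ A j := by
    intro j hj
    simp only [hv_def, dif_pos hj]
    exact (hmaxA j hj).choose_spec.1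
  have hv_max : ∀ j : Fin m, ∀ i ∈ A j, s i ≤ s (v j) := by
    intro j i hi
    have hj : (A j).Nonempty := ⟨i, hi⟩
    simp only [hv_def, dif_pos hj]
    exact (hmaxA j hj).choose_spec.2 i hi
  -- the bins of S whose leftover contains a big item
  set S' : Finset (Fin m) := S.filter (fun j => ∃ i ∈ A j, 1/2 < s i) with hS'_def
  have hS'_sub : S' ⊆ S := Finset.filter_subset _ _
  have hS'_Ane : ∀ j ∈ S', (A j).Nonempty := by
    intro j hj
    rw [hS'_def, Finset.mem_filter] at hj
    obtain ⟨-, i, hi, -⟩ := hj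
    exact ⟨i, hi⟩
  have hv_big : ∀ j ∈ S', 1/2 < s (v j) := by
    intro j hj
    have h := hj
    rw [hS'_def, Finset.mem_filter] at h
    obtain ⟨-, i, hi, hbig⟩ := h
    exact lt_of_lt_of_le hbig (hv_max j i hi)
  have hv_memA : ∀ j ∈ S', v j ∈ A j := fun j hj => hv_mem j (hS'_Ane j hj)
  have hv_memU : ∀ j ∈ S', v j ∈ U j := fun j hj => hA_sub j (hv_memA j hj)
  have hv_ne_u : ∀ j ∈ S', v j ≠ u j := by
    intro j hj
    have := hv_memA j hj
    rw [hA_def] at this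
    exact Finset.ne_of_mem_erase this
  -- uniqueness of the big item of A j
  have hv_unique : ∀ j ∈ S', ∀ i ∈ A j, 1/2 < s i → i = v j := by
    intro j hj i hi hbig
    by_contra hne
    have h1 : s i + s (v j) ≤ ∑ i' ∈ A j, s i' := hpair (A j) i (v j) hi (hv_memA j hj) hne
    have h2 := hA_sum j (hS'_sub hj)
    have h3 := hv_big j hj
    linarith
  -- the injection φ from S' into the big-free fitting bins
  have hS'BFF : S'.card ≤ BFF.card := by
    have h1 : S'.card ≤ S.card := Finset.card_le_card hS'_sub
    have h2 : BFF.card = Fit.card - BigBins.card := by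
      rw [hBFF_def, Finset.card_sdiff_of_subset hBB_sub]
    omega
  have hmne : Nonempty (Fin m) := ⟨jbad⟩
  obtain ⟨φ, hφmap, hφinj⟩ :
      ∃ φ : Fin m → Fin m, ↑S' ⊆ φ ⁻¹' ↑BFF ∧ Set.InjOn φ ↑S' := by
    apply Set.Finite.exists_injOn_of_encard_le (Set.toFinite _)
    rw [Set.encard_coe_eq_coe_finsetCard, Set.encard_coe_eq_coe_finsetCard]
    exact_mod_cast hS'BFF
  have hφBFF : ∀ j ∈ S', φ j ∈ BFF := by
    intro j hj
    have := hφmap (Finset.mem_coe.2 hj)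
    simpa using this
  have hφinj' : ∀ j₁ ∈ S', ∀ j₂ ∈ S', φ j₁ = φ j₂ → j₁ = j₂ := by
    intro j₁ h₁ j₂ h₂ he
    exact hφinj (Finset.mem_coe.2 h₁) (Finset.mem_coe.2 h₂) he
  -- the partial inverse of φ
  set ρ : Fin m → Fin m := fun k =>
    if hk : ∃ j ∈ S', φ j = k then hk.choose else jbad with hρ_def
  have hρ_spec : ∀ k ∈ S'.image φ, ρ k ∈ S' ∧ φ (ρ k) = k := by
    intro k hk
    rw [Finset.mem_image] at hk
    obtain ⟨j, hj, hjk⟩ := hk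
    have hex : ∃ j' ∈ S', φ j' = k := ⟨j, hj, hjk⟩
    simp only [hρ_def, dif_pos hex]
    exact ⟨hex.choose_spec.1, hex.choose_spec.2⟩
  have hρφ : ∀ j ∈ S', ρ (φ j) = j := by
    intro j hj
    have hk : φ j ∈ S'.image φ := Finset.mem_image_of_mem φ hj
    obtain ⟨h1, h2⟩ := hρ_spec (φ j) hk
    exact hφinj' _ h1 _ hj h2
  -- the sacrificed bins
  set Z : Finset (Fin m) := (S'.image φ).filter
    (fun k => ¬ ((∑ i ∈ U k, s i) + s (v (ρ k)) ≤ 1)) with hZ_def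
  have hZ_sub_img : Z ⊆ S'.image φ := Finset.filter_subset _ _
  have himg_sub_BFF : S'.image φ ⊆ BFF := by
    intro k hk
    rw [Finset.mem_image] at hk
    obtain ⟨j, hj, hjk⟩ := hk
    rw [← hjk]
    exact hφBFF j hj
  have hZ_sub_BFF : Z ⊆ BFF := hZ_sub_img.trans himg_sub_BFF
  have hZ_stuck : ∀ k ∈ Z, 1 < (∑ i ∈ U k, s i) + s (v (ρ k)) := by
    intro k hk
    rw [hZ_def, Finset.mem_filter] at hk
    push_neg at hk
    exact hk.2
  -- the trigger bins (homes of the stuck big leftovers)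
  set TH : Finset (Fin m) := Z.image ρ with hTH_def
  have hρinjZ : ∀ k₁ ∈ Z, ∀ k₂ ∈ Z, ρ k₁ = ρ k₂ → k₁ = k₂ := by
    intro k₁ h₁ k₂ h₂ he
    obtain ⟨hm₁, hph₁⟩ := hρ_spec k₁ (hZ_sub_img h₁)
    obtain ⟨hm₂, hph₂⟩ := hρ_spec k₂ (hZ_sub_img h₂)
    rw [← hph₁, ← hph₂, he]
  have hρinjZ' : Set.InjOn ρ ↑Z := fun k₁ h₁ k₂ h₂ he =>
    hρinjZ k₁ (Finset.mem_coe.1 h₁) k₂ (Finset.mem_coe.1 h₂) he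
  have hTH_card : TH.card = Z.card := by
    rw [hTH_def]
    exact Finset.card_image_of_injOn hρinjZ'
  have hTH_sub' : TH ⊆ S' := by
    intro j hj
    rw [hTH_def, Finset.mem_image] at hj
    obtain ⟨k, hk, hkj⟩ := hj
    rw [← hkj]
    exact (hρ_spec k (hZ_sub_img hk)).1
  have hTH_sub : TH ⊆ S := hTH_sub'.trans hS'_sub
  -- mass bound 2 : S.card + BigBins.card + Z.card ≤ Fit.card
  have hM2 : S.card + BigBins.card + Z.card ≤ Fit.card := by
    -- three-way split of the total
    have hdSB : Disjoint S BigBins := Finset.disjoint_of_subset_right hBB_sub hSFit_disj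
    have hdSZ : Disjoint S Z :=
      Finset.disjoint_of_subset_right (hZ_sub_BFF.trans hBFF_sub) hSFit_disj
    have hdBZ : Disjoint BigBins Z := by
      have : Disjoint BigBins BFF := by
        rw [hBFF_def]
        exact Finset.disjoint_sdiff
      exact Finset.disjoint_of_subset_right hZ_sub_BFF this
    have hsplit3 : (∑ j ∈ S, ∑ i ∈ U j, s i) + (∑ j ∈ BigBins, ∑ i ∈ U j, s i)
        + (∑ j ∈ Z, ∑ i ∈ U j, s i) ≤ ∑ j, ∑ i ∈ U j, s i := by
      rw [← Finset.sum_union hdSB, ← Finset.sum_union (Finset.disjoint_union_left.2 ⟨hdSZ, hdBZ⟩)]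
      exact Finset.sum_le_sum_of_subset_of_nonneg (Finset.subset_univ _)
        (fun j _ _ => hsig_nonneg j)
    -- the S-part, split at TH
    have hgg : (∑ j ∈ S \ TH, ∑ i ∈ U j, s i) + (∑ j ∈ TH, ∑ i ∈ U j, s i)
        = ∑ j ∈ S, ∑ i ∈ U j, s i := Finset.sum_sdiff hTH_sub
    have ha : ((S \ TH).card : ℝ) ≤ ∑ j ∈ S \ TH, ∑ i ∈ U j, s i := by
      have : ∑ j ∈ S \ TH, (1:ℝ) ≤ ∑ j ∈ S \ TH, ∑ i ∈ U j, s i := by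
        apply Finset.sum_le_sum
        intro j hj
        exact ((hS_mem j).1 (Finset.mem_sdiff.1 hj).1).le
      simpa using this
    have hb : ∑ j ∈ TH, (s (u j) + s (v j)) ≤ ∑ j ∈ TH, ∑ i ∈ U j, s i := by
      apply Finset.sum_le_sum
      intro j hj
      have hj' : j ∈ S' := hTH_sub' hj
      exact hpair (U j) (u j) (v j) (hu_mem j (hS_ne j (hS'_sub hj'))) (hv_memU j hj')
        (Ne.symm (hv_ne_u j hj'))
    have hc1 : ∑ j ∈ TH, s (v j) ≤ ∑ j ∈ TH, s (u j) := by
      apply Finset.sum_le_sum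
      intro j hj
      exact hu_max j (v j) (hv_memU j (hTH_sub' hj))
    have hc2' : (TH.card : ℝ) * (1/2) ≤ ∑ j ∈ TH, s (v j) := by
      have : ∑ j ∈ TH, (1/2 : ℝ) ≤ ∑ j ∈ TH, s (v j) :=
        Finset.sum_le_sum (fun j hj => (hv_big j (hTH_sub' hj)).le)
      simpa [mul_comm] using this
    have hd : (Z.card : ℝ) - (∑ k ∈ Z, s (v (ρ k))) ≤ ∑ k ∈ Z, ∑ i ∈ U k, s i := by
      have h1 : ∑ k ∈ Z, ((1:ℝ) - s (v (ρ k))) ≤ ∑ k ∈ Z, ∑ i ∈ U k, s i := by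
        apply Finset.sum_le_sum
        intro k hk
        have := hZ_stuck k hk
        linarith
      rw [Finset.sum_sub_distrib] at h1
      simpa using h1
    have he : ∑ j ∈ TH, s (v j) = ∑ k ∈ Z, s (v (ρ k)) := by
      rw [hTH_def]
      exact Finset.sum_image (fun k₁ h₁ k₂ h₂ he => hρinjZ k₁ h₁ k₂ h₂ he)
    have hcardsplit : ((S \ TH).card : ℝ) + (TH.card : ℝ) = (S.card : ℝ) := by
      have := Finset.card_sdiff_add_card_eq_card hTH_sub
      exact_mod_cast this
    have hcast : (S.card : ℝ) + (Fit.card : ℝ) = (m:ℝ) := by exact_mod_cast hcards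
    have hb'' : (∑ j ∈ TH, s (u j)) + (∑ j ∈ TH, s (v j)) ≤ ∑ j ∈ TH, ∑ i ∈ U j, s i := by
      rw [← Finset.sum_add_distrib]
      exact hb
    have hfin : (S.card : ℝ) + (BigBins.card : ℝ) + (Z.card : ℝ) ≤ (Fit.card : ℝ) := by
      have hTHZ : (TH.card : ℝ) = (Z.card : ℝ) := by exact_mod_cast hTH_card
      linarith [hT, hsplit3, hgg, ha, hb'', hc1, hc2', hd, he, hBB_lb, hcardsplit, hcast, hTHZ]
    exact_mod_cast hfin
  -- ===== Solution 2 : keep u j home on S, keep fitting bins, rescue the big leftovers =====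
  set c2 : Fin m → Finset (Fin n) := fun k =>
    if k ∈ S then {u k}
    else if k ∈ S'.image φ then
      (if (∑ i ∈ U k, s i) + s (v (ρ k)) ≤ 1 then insert (v (ρ k)) (U k) else {v (ρ k)})
    else U k with hc2_def
  have himg_notS : ∀ k ∈ S'.image φ, k ∉ S := by
    intro k hk
    have h1 : k ∈ Fit := hBFF_sub (himg_sub_BFF hk)
    intro h2
    exact (Finset.disjoint_left.1 hSFit_disj) h2 h1
  have hc2_S : ∀ k ∈ S, c2 k = {u k} := by
    intro k hk; rw [hc2_def]; simp [hk]
  have hc2_img : ∀ k ∈ S'.image φ, c2 k =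
      (if (∑ i ∈ U k, s i) + s (v (ρ k)) ≤ 1 then insert (v (ρ k)) (U k) else {v (ρ k)}) := by
    intro k hk
    rw [hc2_def]
    simp [himg_notS k hk, hk]
  have hc2_other : ∀ k, k ∉ S → k ∉ S'.image φ → c2 k = U k := by
    intro k h1 h2; rw [hc2_def]; simp [h1, h2]
  -- the `v (ρ k)` item is foreign to bin k when k ∈ image φ
  have hvρ_notU : ∀ k ∈ S'.image φ, v (ρ k) ∉ U k := by
    intro k hk hmem
    obtain ⟨hρS', hφρ⟩ := hρ_spec k hk
    have h1 : v (ρ k) ∈ U (ρ k) := hv_memU (ρ k) hρS'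
    have h2 : ρ k = k := hhome _ _ _ h1 hmem
    have h3 : ρ k ∈ S := hS'_sub hρS'
    rw [h2] at h3
    exact himg_notS k hk h3
  -- element characterization of c2
  have hc2_elem : ∀ k, ∀ i ∈ c2 k, i ∈ U k ∨ (k ∈ S'.image φ ∧ i = v (ρ k)) := by
    intro k i hi
    by_cases hkS : k ∈ S
    · rw [hc2_S k hkS] at hi
      have : i = u k := Finset.mem_singleton.1 hi
      exact Or.inl (this ▸ hu_mem k (hS_ne k hkS))
    · by_cases hkimg : k ∈ S'.image φ
      · rw [hc2_img k hkimg] at hi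
        by_cases hfit : (∑ i ∈ U k, s i) + s (v (ρ k)) ≤ 1
        · rw [if_pos hfit] at hi
          rcases Finset.mem_insert.1 hi with h | h
          · exact Or.inr ⟨hkimg, h⟩
          · exact Or.inl h
        · rw [if_neg hfit] at hi
          exact Or.inr ⟨hkimg, Finset.mem_singleton.1 hi⟩
      · rw [hc2_other k hkS hkimg] at hi
        exact Or.inl hi
  -- disjointness of c2
  have hc2_disj : ∀ j k, j ≠ k → Disjoint (c2 j) (c2 k) := by
    have key : ∀ (i : Fin n) (a b : Fin m), a ≠ b → i ∈ U a →
        b ∈ S'.image φ → i = v (ρ b) → i ∈ c2 a → False := by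
      intro i a b hab hUa hbimg hivb hia
      have hρS' : ρ b ∈ S' := (hρ_spec b hbimg).1
      have h1 : i ∈ U (ρ b) := hivb ▸ hv_memU (ρ b) hρS'
      have h2 : a = ρ b := hhome i a (ρ b) hUa h1
      have h3 : a ∈ S := h2 ▸ hS'_sub hρS'
      rw [hc2_S a h3] at hia
      have h4 : i = u a := Finset.mem_singleton.1 hia
      have h5 : i ∈ A a := by rw [h2]; exact hivb ▸ hv_memA (ρ b) hρS'
      rw [hA_def] at h5
      exact (Finset.ne_of_mem_erase h5) h4
    intro j k hjk
    rw [Finset.disjoint_left]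
    intro i hij hik
    rcases hc2_elem j i hij with h1 | ⟨hj2, h1⟩
    · rcases hc2_elem k i hik with h2 | ⟨hk2, h2⟩
      · exact hjk (hhome i j k h1 h2)
      · exact key i j k hjk h1 hk2 h2 hij
    · rcases hc2_elem k i hik with h2 | ⟨hk2, h2⟩
      · exact key i k j (Ne.symm hjk) h2 hj2 h1 hik
      · -- both are rescued big leftovers
        have hρj : ρ j ∈ S' := (hρ_spec j hj2).1
        have hρk : ρ k ∈ S' := (hρ_spec k hk2).1
        have m1 : i ∈ U (ρ j) := h1 ▸ hv_memU (ρ j) hρj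
        have m2 : i ∈ U (ρ k) := h2 ▸ hv_memU (ρ k) hρk
        have : ρ j = ρ k := hhome i (ρ j) (ρ k) m1 m2
        have : j = k := by
          rw [← (hρ_spec j hj2).2, ← (hρ_spec k hk2).2, this]
        exact hjk this
  -- load bound for c2
  have hc2_load : ∀ k, ∑ i ∈ c2 k, s i ≤ 1 := by
    intro k
    by_cases hkS : k ∈ S
    · rw [hc2_S k hkS]
      simpa using hone (u k)
    · by_cases hkimg : k ∈ S'.image φ
      · rw [hc2_img k hkimg]
        by_cases hfit : (∑ i ∈ U k, s i) + s (v (ρ k)) ≤ 1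
        · rw [if_pos hfit, Finset.sum_insert (hvρ_notU k hkimg)]
          linarith
        · rw [if_neg hfit]
          simpa using hone (v (ρ k))
      · rw [hc2_other k hkS hkimg]
        by_contra h
        push_neg at h
        exact hkS ((hS_mem k).2 h)
  -- coverage of c2 : u j home for j ∈ S, U k home for fitting k ∉ Z
  have hc2_cov_S : ∀ j ∈ S, u j ∈ c2 j := by
    intro j hj
    rw [hc2_S j hj]
    exact Finset.mem_singleton_self _
  have hc2_cov_Fit : ∀ k ∈ Fit, k ∉ Z → U k ⊆ c2 k := by
    intro k hkF hkZ
    have hkS : k ∉ S := fun h => (Finset.disjoint_left.1 hSFit_disj) h hkF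
    by_cases hkimg : k ∈ S'.image φ
    · have hfit : (∑ i ∈ U k, s i) + s (v (ρ k)) ≤ 1 := by
        by_contra h
        exact hkZ (by rw [hZ_def, Finset.mem_filter]; exact ⟨hkimg, h⟩)
      rw [hc2_img k hkimg, if_pos hfit]
      exact Finset.subset_insert _ _
    · rw [hc2_other k hkS hkimg]
  -- every big item is placed by c2
  have hc2_bigs : ∀ i ∈ Finset.univ.biUnion U, 1/2 < s i → ∃ k, i ∈ c2 k := by
    intro i hiI hbig
    rw [Finset.mem_biUnion] at hiI
    obtain ⟨j, -, hij⟩ := hiI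
    by_cases hjS : j ∈ S
    · by_cases hiu : i = u j
      · exact ⟨j, by rw [hc2_S j hjS]; simp [hiu]⟩
      · have hiA : i ∈ A j := by
          rw [hA_def]
          exact Finset.mem_erase.2 ⟨hiu, hij⟩
        have hjS' : j ∈ S' := by
          rw [hS'_def, Finset.mem_filter]
          exact ⟨hjS, ⟨i, hiA, hbig⟩⟩
        have hiv : i = v j := hv_unique j hjS' i hiA hbig
        refine ⟨φ j, ?_⟩
        have hkimg : φ j ∈ S'.image φ := Finset.mem_image_of_mem φ hjS'
        rw [hc2_img _ hkimg, hρφ j hjS']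
        by_cases hfit : (∑ i' ∈ U (φ j), s i') + s (v j) ≤ 1
        · rw [if_pos hfit]
          exact hiv ▸ Finset.mem_insert_self _ _
        · rw [if_neg hfit]
          exact hiv ▸ Finset.mem_singleton_self _
    · -- j is a fitting bin, hence a big bin, and cannot be hit by φ
      have hjF : j ∈ Fit := by
        rw [hFit_def, Finset.mem_sdiff]
        exact ⟨Finset.mem_univ j, hjS⟩
      have hjimg : j ∉ S'.image φ := by
        intro h
        have h2 : j ∈ BigBins := by
          rw [hBB_def, Finset.mem_filter]
          exact ⟨hjF, ⟨i, hij, hbig⟩⟩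
        have h3 := himg_sub_BFF h
        rw [hBFF_def, Finset.mem_sdiff] at h3
        exact h3.2 h2
      exact ⟨j, by rw [hc2_other j hjS hjimg]; exact hij⟩
  -- c2 only uses genuine items
  have hc2_subI : ∀ k, c2 k ⊆ Finset.univ.biUnion U := by
    intro k i hi
    rcases hc2_elem k i hi with h | ⟨hkimg, h⟩
    · exact Finset.mem_biUnion.2 ⟨k, Finset.mem_univ k, h⟩
    · have hρS' : ρ k ∈ S' := (hρ_spec k hkimg).1
      exact Finset.mem_biUnion.2 ⟨ρ k, Finset.mem_univ _, h ▸ hv_memU (ρ k) hρS'⟩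
  -- extend c2 by greedily placing the remaining (small) items
  have hV2 : ∃ V2 : Fin m → Finset (Fin n),
      (∀ j, c2 j ⊆ V2 j) ∧ (∀ j k, j ≠ k → Disjoint (V2 j) (V2 k)) ∧
      (∀ j, ∑ i ∈ V2 j, s i ≤ 1) ∧
      Finset.univ.biUnion V2 = Finset.univ.biUnion U := by
    have hbsub : Finset.univ.biUnion c2 ⊆ Finset.univ.biUnion U := by
      intro i hi
      rw [Finset.mem_biUnion] at hi
      obtain ⟨k, -, hik⟩ := hi
      exact hc2_subI k hik
    have hpd2 : (↑(Finset.univ : Finset (Fin m)) : Set (Fin m)).PairwiseDisjoint c2 :=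
      fun a _ b _ hab => hc2_disj a b hab
    have hsum2 : ∑ j, ∑ i ∈ c2 j, s i = ∑ i ∈ Finset.univ.biUnion c2, s i :=
      (Finset.sum_biUnion hpd2).symm
    have htot2 : (∑ j, ∑ i ∈ c2 j, s i)
        + ∑ i ∈ (Finset.univ.biUnion U) \ (Finset.univ.biUnion c2), s i ≤ (m:ℝ)/2 := by
      have heq : ∑ i ∈ (Finset.univ.biUnion U) \ (Finset.univ.biUnion c2), s i
          = ∑ i ∈ Finset.univ.biUnion U, s i - ∑ i ∈ Finset.univ.biUnion c2, s i :=
        Finset.sum_sdiff_eq_sub hbsub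
      rw [hsum2, heq]
      linarith
    obtain ⟨V2, h1, h2, h3, h4⟩ := aux_place_smalls s (fun i => (hs i).1)
      ((Finset.univ.biUnion U) \ (Finset.univ.biUnion c2)) c2 hc2_disj
      (by
        intro i hi j hij
        rw [Finset.mem_sdiff] at hi
        exact hi.2 (Finset.mem_biUnion.2 ⟨j, Finset.mem_univ j, hij⟩))
      (by
        intro i hi
        rw [Finset.mem_sdiff] at hi
        by_contra hb
        push_neg at hb
        obtain ⟨k, hk⟩ := hc2_bigs i hi.1 hb
        exact hi.2 (Finset.mem_biUnion.2 ⟨k, Finset.mem_univ k, hk⟩))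
      hc2_load htot2
    refine ⟨V2, h1, h2, h3, ?_⟩
    rw [h4, Finset.union_comm, Finset.sdiff_union_of_subset hbsub]
  obtain ⟨V2, hV2sub, hV2disj, hV2load, hV2bU⟩ := hV2
  -- ===== Solution 1 : keep A j home on S, keep the sacrificed bins, park all big items =====
  set Sbb : Finset (Fin m) := S.filter (fun j => 1/2 < s (u j)) with hSbb_def
  set c1 : Fin m → Finset (Fin n) := fun k =>
    if k ∈ S then A k
    else if k ∈ Z then U k
    else if k ∈ BigBins then {u k}
    else ∅ with hc1_def
  have hZ_notS : ∀ k ∈ Z, k ∉ S := fun k hk => himg_notS k (hZ_sub_img hk)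
  have hBB_notS : ∀ k ∈ BigBins, k ∉ S :=
    fun k hk h => (Finset.disjoint_left.1 hSFit_disj) h (hBB_sub hk)
  have hBB_notZ : ∀ k ∈ BigBins, k ∉ Z := by
    intro k hk hkZ
    have h := hZ_sub_BFF hkZ
    rw [hBFF_def, Finset.mem_sdiff] at h
    exact h.2 hk
  have hc1_S : ∀ k ∈ S, c1 k = A k := by
    intro k hk; rw [hc1_def]; simp [hk]
  have hc1_Z : ∀ k ∈ Z, c1 k = U k := by
    intro k hk; rw [hc1_def]; simp [hZ_notS k hk, hk]
  have hc1_BB : ∀ k ∈ BigBins, c1 k = {u k} := by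
    intro k hk; rw [hc1_def]; simp [hBB_notS k hk, hBB_notZ k hk, hk]
  have hc1_other : ∀ k, k ∉ S → k ∉ Z → k ∉ BigBins → c1 k = ∅ := by
    intro k h1 h2 h3; rw [hc1_def]; simp [h1, h2, h3]
  have hBB_ne : ∀ k ∈ BigBins, (U k).Nonempty := by
    intro k hk
    rw [hBB_def, Finset.mem_filter] at hk
    obtain ⟨-, i, hi, -⟩ := hk
    exact ⟨i, hi⟩
  have hc1_sub : ∀ k, c1 k ⊆ U k := by
    intro k
    by_cases h1 : k ∈ S
    · rw [hc1_S k h1]; exact hA_sub k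
    · by_cases h2 : k ∈ Z
      · rw [hc1_Z k h2]
      · by_cases h3 : k ∈ BigBins
        · rw [hc1_BB k h3]
          intro i hi
          rw [Finset.mem_singleton.1 hi]
          exact hu_mem k (hBB_ne k h3)
        · rw [hc1_other k h1 h2 h3]
          exact Finset.empty_subset _
  have hc1_disj : ∀ j k, j ≠ k → Disjoint (c1 j) (c1 k) :=
    fun j k hjk => Finset.disjoint_of_subset_left (hc1_sub j)
      (Finset.disjoint_of_subset_right (hc1_sub k) (hdisj j k hjk))
  have hc1_load : ∀ k, ∑ i ∈ c1 k, s i ≤ 1 := by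
    intro k
    by_cases h1 : k ∈ S
    · rw [hc1_S k h1]; exact hA_sum k h1
    · by_cases h2 : k ∈ Z
      · rw [hc1_Z k h2]
        exact (hFit_mem k).1 (hBFF_sub (hZ_sub_BFF h2))
      · by_cases h3 : k ∈ BigBins
        · rw [hc1_BB k h3]
          simpa using hone (u k)
        · rw [hc1_other k h1 h2 h3]
          simp
  -- the parked big items : the big u j for overfull bins j
  set Q1 : Finset (Fin n) := Sbb.image u with hQ1_def
  set E1 : Finset (Fin m) := BFF \ Z with hE1_def
  have hE1_empty : ∀ k ∈ E1, c1 k = ∅ := by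
    intro k hk
    rw [hE1_def, Finset.mem_sdiff] at hk
    obtain ⟨hkBFF, hkZ⟩ := hk
    rw [hBFF_def, Finset.mem_sdiff] at hkBFF
    obtain ⟨hkF, hkBB⟩ := hkBFF
    exact hc1_other k (fun h => (Finset.disjoint_left.1 hSFit_disj) h hkF) hkZ hkBB
  have hu_injS : ∀ j₁ ∈ S, ∀ j₂ ∈ S, u j₁ = u j₂ → j₁ = j₂ := by
    intro j₁ h₁ j₂ h₂ he
    exact hhome (u j₁) j₁ j₂ (hu_mem j₁ (hS_ne j₁ h₁)) (he ▸ hu_mem j₂ (hS_ne j₂ h₂))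
  have hQ1_card : Q1.card ≤ E1.card := by
    have h1 : Q1.card = Sbb.card := by
      rw [hQ1_def]
      apply Finset.card_image_of_injOn
      intro j₁ h₁ j₂ h₂ he
      have hs1 : j₁ ∈ S := Finset.mem_of_mem_filter _ (by rw [hSbb_def] at h₁; exact h₁)
      have hs2 : j₂ ∈ S := Finset.mem_of_mem_filter _ (by rw [hSbb_def] at h₂; exact h₂)
      exact hu_injS j₁ hs1 j₂ hs2 he
    have h2 : Sbb.card ≤ S.card := Finset.card_le_card (by rw [hSbb_def]; exact Finset.filter_subset _ _)
    have h3 : E1.card = BFF.card - Z.card := by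
      rw [hE1_def]
      exact Finset.card_sdiff_of_subset hZ_sub_BFF
    have h4 : BFF.card = Fit.card - BigBins.card := by
      rw [hBFF_def]
      exact Finset.card_sdiff_of_subset hBB_sub
    have h5 : Z.card ≤ BFF.card := Finset.card_le_card hZ_sub_BFF
    have h6 : BigBins.card ≤ Fit.card := Finset.card_le_card hBB_sub
    omega
  have hQ1_mem : ∀ i ∈ Q1, ∃ j ∈ Sbb, i = u j := by
    intro i hi
    rw [hQ1_def, Finset.mem_image] at hi
    obtain ⟨j, hj, hji⟩ := hi
    exact ⟨j, hj, hji.symm⟩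
  have hSbb_S : Sbb ⊆ S := by rw [hSbb_def]; exact Finset.filter_subset _ _
  have hQ1_notc1 : ∀ i ∈ Q1, ∀ k, i ∉ c1 k := by
    intro i hi k hik
    obtain ⟨j, hj, rfl⟩ := hQ1_mem i hi
    have hjS : j ∈ S := hSbb_S hj
    have h1 : u j ∈ U k := hc1_sub k hik
    have h2 : k = j := hhome (u j) k j h1 (hu_mem j (hS_ne j hjS))
    rw [h2, hc1_S j hjS, hA_def] at hik
    exact (Finset.ne_of_mem_erase hik) rfl
  -- place the parked big items into their own empty bins
  have hV1mid : ∃ W : Fin m → Finset (Fin n),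
      (∀ j, c1 j ⊆ W j) ∧ (∀ j k, j ≠ k → Disjoint (W j) (W k)) ∧
      (∀ j, ∑ i ∈ W j, s i ≤ 1) ∧
      Finset.univ.biUnion W = Finset.univ.biUnion c1 ∪ Q1 :=
    aux_place_bigs s Q1 E1 c1 hE1_empty hQ1_card hc1_disj hQ1_notc1 hc1_load
      (fun i _ => hone i)
  obtain ⟨W, hWsub, hWdisj, hWload, hWbU⟩ := hV1mid
  -- every big item is placed by W
  have hW_bigs : ∀ i ∈ Finset.univ.biUnion U, 1/2 < s i → ∃ k, i ∈ W k := by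
    intro i hiI hbig
    rw [Finset.mem_biUnion] at hiI
    obtain ⟨j, -, hij⟩ := hiI
    by_cases hjS : j ∈ S
    · by_cases hiu : i = u j
      · have hjSbb : j ∈ Sbb := by
          rw [hSbb_def, Finset.mem_filter]
          exact ⟨hjS, hiu ▸ hbig⟩
        have hiQ : i ∈ Q1 := by
          rw [hQ1_def, hiu]
          exact Finset.mem_image_of_mem u hjSbb
        have : i ∈ Finset.univ.biUnion W := by
          rw [hWbU]
          exact Finset.mem_union_right _ hiQ
        rw [Finset.mem_biUnion] at this
        obtain ⟨k, -, hk⟩ := this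
        exact ⟨k, hk⟩
      · refine ⟨j, hWsub j ?_⟩
        rw [hc1_S j hjS, hA_def]
        exact Finset.mem_erase.2 ⟨hiu, hij⟩
    · have hjF : j ∈ Fit := by
        rw [hFit_def, Finset.mem_sdiff]
        exact ⟨Finset.mem_univ j, hjS⟩
      have hjBB : j ∈ BigBins := by
        rw [hBB_def, Finset.mem_filter]
        exact ⟨hjF, ⟨i, hij, hbig⟩⟩
      have hiu : i = u j := by
        by_contra hne
        have h1 : s i + s (u j) ≤ ∑ i' ∈ U j, s i' :=
          hpair (U j) i (u j) hij (hu_mem j ⟨i, hij⟩) hne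
        have h2 : (∑ i' ∈ U j, s i') ≤ 1 := (hFit_mem j).1 hjF
        have h3 : 1/2 < s (u j) := lt_of_lt_of_le hbig (hu_max j i hij)
        linarith
      refine ⟨j, hWsub j ?_⟩
      rw [hc1_BB j hjBB, hiu]
      exact Finset.mem_singleton_self _
  -- W only uses genuine items
  have hW_subI : Finset.univ.biUnion W ⊆ Finset.univ.biUnion U := by
    rw [hWbU]
    apply Finset.union_subset
    · intro i hi
      rw [Finset.mem_biUnion] at hi
      obtain ⟨k, -, hik⟩ := hi
      exact Finset.mem_biUnion.2 ⟨k, Finset.mem_univ k, hc1_sub k hik⟩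
    · intro i hi
      obtain ⟨j, hj, rfl⟩ := hQ1_mem i hi
      exact Finset.mem_biUnion.2 ⟨j, Finset.mem_univ j,
        hu_mem j (hS_ne j (hSbb_S hj))⟩
  -- extend W by greedily placing the remaining (small) items
  have hV1 : ∃ V1 : Fin m → Finset (Fin n),
      (∀ j, c1 j ⊆ V1 j) ∧ (∀ j k, j ≠ k → Disjoint (V1 j) (V1 k)) ∧
      (∀ j, ∑ i ∈ V1 j, s i ≤ 1) ∧
      Finset.univ.biUnion V1 = Finset.univ.biUnion U := by
    have hpdW : (↑(Finset.univ : Finset (Fin m)) : Set (Fin m)).PairwiseDisjoint W :=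
      fun a _ b _ hab => hWdisj a b hab
    have hsumW : ∑ j, ∑ i ∈ W j, s i = ∑ i ∈ Finset.univ.biUnion W, s i :=
      (Finset.sum_biUnion hpdW).symm
    have htotW : (∑ j, ∑ i ∈ W j, s i)
        + ∑ i ∈ (Finset.univ.biUnion U) \ (Finset.univ.biUnion W), s i ≤ (m:ℝ)/2 := by
      have heq : ∑ i ∈ (Finset.univ.biUnion U) \ (Finset.univ.biUnion W), s i
          = ∑ i ∈ Finset.univ.biUnion U, s i - ∑ i ∈ Finset.univ.biUnion W, s i :=
        Finset.sum_sdiff_eq_sub hW_subI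
      rw [hsumW, heq]
      linarith
    obtain ⟨V1, h1, h2, h3, h4⟩ := aux_place_smalls s (fun i => (hs i).1)
      ((Finset.univ.biUnion U) \ (Finset.univ.biUnion W)) W hWdisj
      (by
        intro i hi j hij
        rw [Finset.mem_sdiff] at hi
        exact hi.2 (Finset.mem_biUnion.2 ⟨j, Finset.mem_univ j, hij⟩))
      (by
        intro i hi
        rw [Finset.mem_sdiff] at hi
        by_contra hb
        push_neg at hb
        obtain ⟨k, hk⟩ := hW_bigs i hi.1 hb
        exact hi.2 (Finset.mem_biUnion.2 ⟨k, Finset.mem_univ k, hk⟩))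
      hWload htotW
    refine ⟨V1, fun j => (hWsub j).trans (h1 j), h2, h3, ?_⟩
    rw [h4, Finset.union_comm, Finset.sdiff_union_of_subset hW_subI]
  obtain ⟨V1, hV1sub, hV1disj, hV1load, hV1bU⟩ := hV1
  -- ===== profit accounting =====
  have hp_nonneg : ∀ (t : Finset (Fin n)) (j : Fin m), 0 ≤ ∑ i ∈ t, p i j :=
    fun t j => Finset.sum_nonneg fun i _ => hp i j
  have hp_mono : ∀ (t t' : Finset (Fin n)) (j : Fin m), t ⊆ t' →
      ∑ i ∈ t, p i j ≤ ∑ i ∈ t', p i j :=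
    fun t t' j h => Finset.sum_le_sum_of_subset_of_nonneg h (fun i _ _ => hp i j)
  have hsplit_p : ∀ (X Y : Finset (Fin m)) (g : Fin m → ℝ), Disjoint X Y → (∀ j, 0 ≤ g j) →
      (∑ j ∈ X, g j) + (∑ j ∈ Y, g j) ≤ ∑ j, g j := by
    intro X Y g hXY hg
    rw [← Finset.sum_union hXY]
    exact Finset.sum_le_sum_of_subset_of_nonneg (Finset.subset_univ _) (fun j _ _ => hg j)
  -- solution 1 collects the A-blocks and the sacrificed bins
  have key1 : (∑ j ∈ S, ∑ i ∈ A j, p i j) + (∑ k ∈ Z, ∑ i ∈ U k, p i k)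
      ≤ ∑ j, ∑ i ∈ V1 j, p i j := by
    have h1 : ∑ j ∈ S, ∑ i ∈ A j, p i j ≤ ∑ j ∈ S, ∑ i ∈ V1 j, p i j := by
      apply Finset.sum_le_sum
      intro j hj
      apply hp_mono
      intro i hi
      exact hV1sub j (by rw [hc1_S j hj]; exact hi)
    have h2 : ∑ k ∈ Z, ∑ i ∈ U k, p i k ≤ ∑ k ∈ Z, ∑ i ∈ V1 k, p i k := by
      apply Finset.sum_le_sum
      intro k hk
      apply hp_mono
      intro i hi
      exact hV1sub k (by rw [hc1_Z k hk]; exact hi)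
    have hdSZ : Disjoint S Z :=
      Finset.disjoint_of_subset_right (hZ_sub_BFF.trans hBFF_sub) hSFit_disj
    have h3 := hsplit_p S Z (fun j => ∑ i ∈ V1 j, p i j) hdSZ (fun j => hp_nonneg _ j)
    linarith
  -- solution 2 collects the u-items and the surviving fitting bins
  have key2 : (∑ j ∈ S, p (u j) j) + (∑ k ∈ Fit \ Z, ∑ i ∈ U k, p i k)
      ≤ ∑ j, ∑ i ∈ V2 j, p i j := by
    have h1 : ∑ j ∈ S, p (u j) j ≤ ∑ j ∈ S, ∑ i ∈ V2 j, p i j := by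
      apply Finset.sum_le_sum
      intro j hj
      have : u j ∈ V2 j := hV2sub j (hc2_cov_S j hj)
      calc p (u j) j = ∑ i ∈ ({u j} : Finset (Fin n)), p i j := by simp
        _ ≤ ∑ i ∈ V2 j, p i j := hp_mono _ _ j (Finset.singleton_subset_iff.2 this)
    have h2 : ∑ k ∈ Fit \ Z, ∑ i ∈ U k, p i k ≤ ∑ k ∈ Fit \ Z, ∑ i ∈ V2 k, p i k := by
      apply Finset.sum_le_sum
      intro k hk
      rw [Finset.mem_sdiff] at hk
      apply hp_mono
      intro i hi
      exact hV2sub k (hc2_cov_Fit k hk.1 hk.2 hi)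
    have hdS : Disjoint S (Fit \ Z) :=
      Finset.disjoint_of_subset_right Finset.sdiff_subset hSFit_disj
    have h3 := hsplit_p S (Fit \ Z) (fun j => ∑ i ∈ V2 j, p i j) hdS (fun j => hp_nonneg _ j)
    linarith
  -- the total profit decomposes accordingly
  have keyP : ∑ j, ∑ i ∈ U j, p i j
      = ((∑ j ∈ S, ∑ i ∈ A j, p i j) + (∑ j ∈ S, p (u j) j))
        + ((∑ k ∈ Z, ∑ i ∈ U k, p i k) + (∑ k ∈ Fit \ Z, ∑ i ∈ U k, p i k)) := by
    have h1 : (∑ j ∈ Fit, ∑ i ∈ U j, p i j) + (∑ j ∈ S, ∑ i ∈ U j, p i j)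
        = ∑ j, ∑ i ∈ U j, p i j := by
      rw [hFit_def]
      exact Finset.sum_sdiff (Finset.subset_univ S)
    have h2 : ∀ j ∈ S, ∑ i ∈ U j, p i j = (∑ i ∈ A j, p i j) + p (u j) j := by
      intro j hj
      rw [hA_def]
      exact (Finset.sum_erase_add _ _ (hu_mem j (hS_ne j hj))).symm
    have h3 : ∑ j ∈ S, ∑ i ∈ U j, p i j
        = (∑ j ∈ S, ∑ i ∈ A j, p i j) + (∑ j ∈ S, p (u j) j) := by
      rw [← Finset.sum_add_distrib]
      exact Finset.sum_congr rfl h2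
    have hZFit : Z ⊆ Fit := hZ_sub_BFF.trans hBFF_sub
    have h4 : (∑ k ∈ Fit \ Z, ∑ i ∈ U k, p i k) + (∑ k ∈ Z, ∑ i ∈ U k, p i k)
        = ∑ k ∈ Fit, ∑ i ∈ U k, p i k := Finset.sum_sdiff hZFit
    linarith
  -- conclusion : one of the two solutions earns at least half
  by_cases hwhich : (1/2) * (∑ j, ∑ i ∈ U j, p i j) ≤ ∑ j, ∑ i ∈ V1 j, p i j
  · exact ⟨V1, hV1disj, hV1load, hV1bU, hwhich⟩
  · push_neg at hwhich
    refine ⟨V2, hV2disj, hV2load, hV2bU, ?_⟩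
    linarith
end

section
/- Consider a Group GAP instance: a finite set I of items partitioned into groups G_1,...,G_L, where each item i has a rational size s_i with 0 < s_i ≤ 1 and a profit p_{i,j} ≥ 0 when assigned to bin j ∈ {1,...,m}, the bins having unit capacity, and where every group satisfies Σ_{i∈G_ℓ} s_i ≤ m/2. Let OPT be the maximum, over feasible assignments U = (U_1,...,U_m) (pairwise-disjoint bin contents with Σ_{i∈U_j} s_i ≤ 1 for all j), of the total profit Σ_j Σ_{i∈U_j∩I(𝒢_s)} p_{i,j} collected from items belonging to satisfied groups, where a group is satisfied if all its items are assigned. Then there exist a subfamily 𝒢* of groups with Σ_{G_ℓ∈𝒢*} Σ_{i∈G_ℓ} s_i ≤ m/2 and a feasible assignment that assigns exactly the items of the groups in 𝒢* and whose total profit is at least OPT/6. -/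
open Finset

lemma three_split {α : Type*} [DecidableEq α] (C : ℝ) (hC : 0 ≤ C)
    (w : α → ℝ) (hw0 : ∀ a, 0 ≤ w a) (S : Finset α)
    (hwC : ∀ a ∈ S, w a ≤ C) (hS : ∑ a ∈ S, w a ≤ 2*C) :
    ∃ B1 B2 B3 : Finset α, B1 ∪ B2 ∪ B3 = S ∧ Disjoint B1 B2 ∧ Disjoint B1 B3 ∧
      Disjoint B2 B3 ∧
      (∑ a ∈ B1, w a ≤ C) ∧ (∑ a ∈ B2, w a ≤ C) ∧ (∑ a ∈ B3, w a ≤ C) := by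
  classical
  by_cases h : ∑ a ∈ S, w a ≤ C
  · exact ⟨S, ∅, ∅, by simp, by simp, by simp, by simp, h, by simpa, by simpa⟩
  · push_neg at h
    have hne : (S.powerset.filter (fun A => C < ∑ a ∈ A, w a)).Nonempty :=
      ⟨S, by simp [h]⟩
    obtain ⟨A, hA, hmin⟩ := Finset.exists_min_image _ Finset.card hne
    simp only [Finset.mem_filter, Finset.mem_powerset] at hA
    obtain ⟨hAS, hAsum⟩ := hA
    have hAne : A.Nonempty := by
      rcases A.eq_empty_or_nonempty with rfl | h'
      · simp at hAsum; linarith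
      · exact h'
    obtain ⟨a, ha⟩ := hAne
    have herase : ∑ x ∈ A.erase a, w x ≤ C := by
      by_contra hh
      push_neg at hh
      have h1 : A.card ≤ (A.erase a).card := by
        refine hmin (A.erase a) ?_
        simp only [Finset.mem_filter, Finset.mem_powerset]
        exact ⟨(Finset.erase_subset _ _).trans hAS, hh⟩
      have h2 := Finset.card_erase_lt_of_mem ha
      omega
    have hAsum' : ∑ x ∈ A, w x = w a + ∑ x ∈ A.erase a, w x :=
      (Finset.add_sum_erase _ _ ha).symm
    have hsdiff : ∑ x ∈ S \ A, w x = ∑ x ∈ S, w x - ∑ x ∈ A, w x := by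
      have := Finset.sum_sdiff (f := w) hAS
      linarith
    refine ⟨A.erase a, {a}, S \ A, ?_, ?_, ?_, ?_, herase,
      by simpa using hwC a (hAS ha), by rw [hsdiff]; linarith⟩
    · ext x
      have h1 : x ∈ A → x ∈ S := @hAS x
      have h2 : x = a → x ∈ S := fun h => h ▸ hAS ha
      have h3 : x = a → x ∈ A := fun h => h ▸ ha
      simp only [Finset.mem_union, Finset.mem_erase, Finset.mem_singleton,
        Finset.mem_sdiff]
      tauto
    · simp
    · rw [Finset.disjoint_left]
      intro x hx hx'
      exact (Finset.mem_sdiff.mp hx').2 (Finset.mem_erase.mp hx).2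
    · rw [Finset.disjoint_left]
      intro x hx hx'
      rw [Finset.mem_singleton] at hx
      exact (Finset.mem_sdiff.mp hx').2 (hx ▸ ha)

/-- Main theorem for Group GAP: if every group has total size at most `m/2`,
there is a family of groups of total size at most `m/2` and a feasible
assignment of exactly their items achieving at least `OPT/6`. -/
theorem group_gap_one_sixth
    (n m L : ℕ) (s : Fin n → ℚ) (hs : ∀ i, 0 < s i ∧ s i ≤ 1)
    (p : Fin n → Fin m → ℝ) (hp : ∀ i j, 0 ≤ p i j)
    (G : Fin L → Finset (Fin n))
    (hpart : ∀ i : Fin n, ∃! ℓ : Fin L, i ∈ G ℓ)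
    (hgroup : ∀ ℓ : Fin L, (∑ i ∈ G ℓ, (s i : ℝ)) ≤ (m : ℝ) / 2)
    (OPT : ℝ)
    (hOPT : IsGreatest
      { v : ℝ | ∃ U : Fin m → Finset (Fin n),
          (∀ j k, j ≠ k → Disjoint (U j) (U k)) ∧
          (∀ j, (∑ i ∈ U j, (s i : ℝ)) ≤ 1) ∧
          v = ∑ j, ∑ i ∈ U j,
            (if ∃ ℓ : Fin L, i ∈ G ℓ ∧ G ℓ ⊆ Finset.univ.biUnion U
             then p i j else 0) } OPT) :
    ∃ (Gstar : Finset (Fin L)) (U : Fin m → Finset (Fin n)),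
      (∑ ℓ ∈ Gstar, ∑ i ∈ G ℓ, (s i : ℝ)) ≤ (m : ℝ) / 2 ∧
      (∀ j k, j ≠ k → Disjoint (U j) (U k)) ∧
      (∀ j, (∑ i ∈ U j, (s i : ℝ)) ≤ 1) ∧
      Finset.univ.biUnion U = Gstar.biUnion G ∧
      OPT / 6 ≤ ∑ j, ∑ i ∈ U j, p i j := by
  classical
  obtain ⟨⟨U0, hdisj, hcap, hOPTeq⟩, hub⟩ := hOPT
  -- basic facts
  have hs0 : ∀ i, (0:ℝ) ≤ (s i : ℝ) := fun i => by
    exact_mod_cast (hs i).1.le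
  have huniq : ∀ i ℓ₁ ℓ₂, i ∈ G ℓ₁ → i ∈ G ℓ₂ → ℓ₁ = ℓ₂ := by
    intro i ℓ₁ ℓ₂ h1 h2
    obtain ⟨ℓ, -, hu⟩ := hpart i
    rw [hu ℓ₁ h1, hu ℓ₂ h2]
  have hOPT0 : 0 ≤ OPT := by
    have : (0:ℝ) ∈ { v : ℝ | ∃ U : Fin m → Finset (Fin n),
          (∀ j k, j ≠ k → Disjoint (U j) (U k)) ∧
          (∀ j, (∑ i ∈ U j, (s i : ℝ)) ≤ 1) ∧
          v = ∑ j, ∑ i ∈ U j,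
            (if ∃ ℓ : Fin L, i ∈ G ℓ ∧ G ℓ ⊆ Finset.univ.biUnion U
             then p i j else 0) } := ⟨fun _ => ∅, by simp, by simp, by simp⟩
    exact hub this
  set Sat : Finset (Fin L) :=
    Finset.univ.filter (fun ℓ => G ℓ ⊆ Finset.univ.biUnion U0) with hSatdef
  set w : Fin L → ℝ := fun ℓ => ∑ i ∈ G ℓ, (s i : ℝ) with hwdef
  have hw0 : ∀ ℓ, 0 ≤ w ℓ := fun ℓ => Finset.sum_nonneg fun i _ => hs0 i
  -- pairwise disjointness of groups
  have hGdisj : ∀ ℓ₁ ℓ₂, ℓ₁ ≠ ℓ₂ → Disjoint (G ℓ₁) (G ℓ₂) := by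
    intro ℓ₁ ℓ₂ hne
    rw [Finset.disjoint_left]
    intro i h1 h2
    exact hne (huniq i ℓ₁ ℓ₂ h1 h2)
  -- total size of satisfied groups ≤ m
  have hSatsize : ∑ ℓ ∈ Sat, w ℓ ≤ (m : ℝ) := by
    have h1 : ∑ ℓ ∈ Sat, w ℓ = ∑ i ∈ Sat.biUnion G, (s i : ℝ) := by
      rw [Finset.sum_biUnion]
      intro ℓ₁ h1 ℓ₂ h2 hne
      exact hGdisj ℓ₁ ℓ₂ hne
    have h2 : Sat.biUnion G ⊆ Finset.univ.biUnion U0 := by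
      intro i hi
      simp only [Finset.mem_biUnion] at hi
      obtain ⟨ℓ, hℓ, hiℓ⟩ := hi
      rw [hSatdef, Finset.mem_filter] at hℓ
      exact hℓ.2 hiℓ
    have h3 : ∑ i ∈ Sat.biUnion G, (s i : ℝ) ≤ ∑ i ∈ Finset.univ.biUnion U0, (s i : ℝ) :=
      Finset.sum_le_sum_of_subset_of_nonneg h2 fun i _ _ => hs0 i
    have h4 : ∑ i ∈ Finset.univ.biUnion U0, (s i : ℝ) = ∑ j, ∑ i ∈ U0 j, (s i : ℝ) := by
      rw [Finset.sum_biUnion]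
      intro j _ k _ hne
      exact hdisj j k hne
    have h5 : ∑ j, ∑ i ∈ U0 j, (s i : ℝ) ≤ ∑ _j : Fin m, (1:ℝ) :=
      Finset.sum_le_sum fun j _ => hcap j
    simp only [Finset.sum_const, Finset.card_univ, Fintype.card_fin, nsmul_eq_mul,
      mul_one] at h5
    rw [h1]
    linarith
  -- profit of a subfamily
  set prof : Finset (Fin L) → ℝ := fun B =>
    ∑ j, ∑ i ∈ U0 j, (if i ∈ B.biUnion G then p i j else 0) with hprofdef
  -- OPT = prof Sat
  have hOPTSat : OPT = prof Sat := by
    rw [hOPTeq, hprofdef]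
    refine Finset.sum_congr rfl fun j _ => Finset.sum_congr rfl fun i _ => ?_
    congr 1
    simp only [eq_iff_iff, Finset.mem_biUnion, hSatdef, Finset.mem_filter,
      Finset.mem_univ, true_and]
    constructor
    · rintro ⟨ℓ, h1, h2⟩; exact ⟨ℓ, h2, h1⟩
    · rintro ⟨ℓ, h1, h2⟩; exact ⟨ℓ, h2, h1⟩
  -- additivity of prof over disjoint families
  have hprofadd : ∀ B1 B2 : Finset (Fin L), Disjoint B1 B2 →
      prof (B1 ∪ B2) = prof B1 + prof B2 := by
    intro B1 B2 hd
    rw [hprofdef]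
    simp only
    rw [← Finset.sum_add_distrib]
    refine Finset.sum_congr rfl fun j _ => ?_
    rw [← Finset.sum_add_distrib]
    refine Finset.sum_congr rfl fun i _ => ?_
    by_cases h1 : i ∈ B1.biUnion G
    · have h2 : i ∉ B2.biUnion G := by
        simp only [Finset.mem_biUnion] at h1 ⊢
        obtain ⟨ℓ₁, hℓ₁, hi₁⟩ := h1
        rintro ⟨ℓ₂, hℓ₂, hi₂⟩
        rw [huniq i ℓ₁ ℓ₂ hi₁ hi₂] at hℓ₁
        exact (Finset.disjoint_left.mp hd hℓ₁) hℓ₂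
      have h12 : i ∈ (B1 ∪ B2).biUnion G := by
        simp only [Finset.mem_biUnion, Finset.mem_union] at h1 ⊢
        obtain ⟨ℓ, hℓ, hi⟩ := h1
        exact ⟨ℓ, Or.inl hℓ, hi⟩
      simp [h1, h2, h12]
    · by_cases h2 : i ∈ B2.biUnion G
      · have h12 : i ∈ (B1 ∪ B2).biUnion G := by
          simp only [Finset.mem_biUnion, Finset.mem_union] at h2 ⊢
          obtain ⟨ℓ, hℓ, hi⟩ := h2
          exact ⟨ℓ, Or.inr hℓ, hi⟩
        simp [h1, h2, h12]
      · have h12 : i ∉ (B1 ∪ B2).biUnion G := by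
          simp only [Finset.mem_biUnion, Finset.mem_union] at h1 h2 ⊢
          rintro ⟨ℓ, hℓ | hℓ, hi⟩
          · exact h1 ⟨ℓ, hℓ, hi⟩
          · exact h2 ⟨ℓ, hℓ, hi⟩
        simp [h1, h2, h12]
  -- split Sat into three parts
  have hC : (0:ℝ) ≤ (m:ℝ)/2 := by positivity
  obtain ⟨B1, B2, B3, hunion, hd12, hd13, hd23, hw1, hw2, hw3⟩ :=
    three_split ((m:ℝ)/2) hC w hw0 Sat (fun ℓ _ => hgroup ℓ) (by linarith)
  -- profit splits
  have hprofsplit : prof Sat = prof B1 + prof B2 + prof B3 := by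
    rw [← hunion, hprofadd (B1 ∪ B2) B3 (by
      rw [Finset.disjoint_union_left]; exact ⟨hd13, hd23⟩),
      hprofadd B1 B2 hd12]
  -- main construction for a given subfamily
  have main : ∀ B : Finset (Fin L), B ⊆ Sat → (∑ ℓ ∈ B, w ℓ) ≤ (m:ℝ)/2 →
      ∃ (Gstar : Finset (Fin L)) (U : Fin m → Finset (Fin n)),
      (∑ ℓ ∈ Gstar, ∑ i ∈ G ℓ, (s i : ℝ)) ≤ (m : ℝ) / 2 ∧
      (∀ j k, j ≠ k → Disjoint (U j) (U k)) ∧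
      (∀ j, (∑ i ∈ U j, (s i : ℝ)) ≤ 1) ∧
      Finset.univ.biUnion U = Gstar.biUnion G ∧
      prof B = ∑ j, ∑ i ∈ U j, p i j := by
    intro B hBS hBw
    refine ⟨B, fun j => U0 j ∩ B.biUnion G, hBw, ?_, ?_, ?_, ?_⟩
    · intro j k hne
      exact (hdisj j k hne).mono Finset.inter_subset_left Finset.inter_subset_left
    · intro j
      refine le_trans (Finset.sum_le_sum_of_subset_of_nonneg
        Finset.inter_subset_left fun i _ _ => hs0 i) (hcap j)
    · apply Finset.Subset.antisymm
      · intro i hi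
        obtain ⟨j, -, hj⟩ := Finset.mem_biUnion.mp hi
        exact (Finset.mem_inter.mp hj).2
      · intro i hi
        obtain ⟨ℓ, hℓ, hiℓ⟩ := Finset.mem_biUnion.mp hi
        have hℓSat := hBS hℓ
        rw [hSatdef, Finset.mem_filter] at hℓSat
        obtain ⟨j, -, hj⟩ := Finset.mem_biUnion.mp (hℓSat.2 hiℓ)
        exact Finset.mem_biUnion.mpr ⟨j, Finset.mem_univ j,
          Finset.mem_inter.mpr ⟨hj, hi⟩⟩
    · rw [hprofdef]
      refine Finset.sum_congr rfl fun j _ => ?_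
      rw [← Finset.sum_filter, Finset.filter_mem_eq_inter]
  -- choose best part
  have hbest : OPT/3 ≤ prof B1 ∨ OPT/3 ≤ prof B2 ∨ OPT/3 ≤ prof B3 := by
    by_contra hh
    push_neg at hh
    obtain ⟨a, b, c⟩ := hh
    linarith [hprofsplit, hOPTSat]
  have hsub : B1 ⊆ Sat ∧ B2 ⊆ Sat ∧ B3 ⊆ Sat := by
    refine ⟨?_, ?_, ?_⟩ <;> rw [← hunion] <;> intro x hx <;>
      simp only [Finset.mem_union] <;> tauto
  rcases hbest with hb | hb | hb
  · obtain ⟨Gs, U, h1, h2, h3, h4, h5⟩ := main B1 hsub.1 hw1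
    exact ⟨Gs, U, h1, h2, h3, h4, by rw [← h5]; linarith⟩
  · obtain ⟨Gs, U, h1, h2, h3, h4, h5⟩ := main B2 hsub.2.1 hw2
    exact ⟨Gs, U, h1, h2, h3, h4, by rw [← h5]; linarith⟩
  · obtain ⟨Gs, U, h1, h2, h3, h4, h5⟩ := main B3 hsub.2.2 hw3
    exact ⟨Gs, U, h1, h2, h3, h4, by rw [← h5]; linarith⟩
end

section
/- Let G = (A ∪ B, E) be a complete bipartite graph on finite vertex sets A and B with |B| ≥ |A|, and let W(a,b) ≥ 0 be a non-negative weight for every edge (a,b) ∈ A × B. For S ⊆ A define h(S) to be the maximum total weight of a matching in the subgraph induced by S ∪ B, i.e., h(S) = max over injective functions μ from a subset of S into B of Σ_a W(a, μ(a)). Then h is submodular and monotone: h(S) + h(T) ≥ h(S ∪ T) + h(S ∩ T) for all S, T ⊆ A, and h(S) ≤ h(T) whenever S ⊆ T ⊆ A. -/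
/-- Auxiliary reachability predicate: vertices of `A` reachable from `base`
along alternating paths: from `a` (with its `μ`-edge, `a ∈ U`) we may move to
`a' ∈ V` whose `ν`-edge shares the `B`-endpoint `μ a`. -/
inductive MReach {A B : Type*} (μ ν : A → B) (U V base : Finset A) : A → Prop
  | base {a : A} : a ∈ base → MReach μ ν U V base a
  | step {a a' : A} : MReach μ ν U V base a → a ∈ U → a' ∈ V → ν a' = μ a →
      MReach μ ν U V base a'

/-- The partial maximum weight bipartite matching function is submodular and
monotone. -/
theorem partial_max_matching_submodular
    {A B : Type*} [Fintype A] [Fintype B] [DecidableEq A]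
    (hcard : Fintype.card A ≤ Fintype.card B)
    (W : A → B → ℝ) (hW : ∀ a b, 0 ≤ W a b)
    (h : Finset A → ℝ)
    (hh : ∀ S : Finset A, IsGreatest
      { v : ℝ | ∃ (T : Finset A) (μ : A → B),
          T ⊆ S ∧ Set.InjOn μ ↑T ∧ v = ∑ a ∈ T, W a (μ a) } (h S)) :
    (∀ S T : Finset A, h (S ∪ T) + h (S ∩ T) ≤ h S + h T) ∧
    (∀ S T : Finset A, S ⊆ T → h S ≤ h T) := by
  classical
  constructor
  · intro S T
    obtain ⟨⟨U, μ, hU, hμ, hμv⟩, hub1⟩ := hh (S ∪ T)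
    obtain ⟨⟨V, ν, hV, hν, hνv⟩, hub2⟩ := hh (S ∩ T)
    set base : Finset A := U.filter (fun a => a ∉ S) with hbase
    set R : A → Prop := MReach μ ν U V base with hR
    -- Reach implies in T
    have hRT : ∀ a, R a → a ∈ T := by
      intro a ha
      induction ha with
      | base hb =>
        rw [hbase] at hb
        rcases Finset.mem_filter.mp hb with ⟨hmem, hns⟩
        rcases Finset.mem_union.mp (hU hmem) with h1 | h1
        · exact absurd h1 hns
        · exact h1
      | step _ _ hV' _ ih => exact Finset.mem_of_mem_inter_right (hV hV')
    -- not reach, in U, implies in S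
    have hUS : ∀ a, a ∈ U → ¬ R a → a ∈ S := by
      intro a haU hnr
      by_contra hns
      exact hnr (MReach.base (Finset.mem_filter.mpr ⟨haU, hns⟩))
    -- backward closure
    have hback : ∀ a a', a ∈ U → a' ∈ V → R a' → μ a = ν a' → R a := by
      intro a a' haU haV hr heq
      cases hr with
      | base hb =>
        rw [hbase] at hb
        rcases Finset.mem_filter.mp hb with ⟨_, hns⟩
        exact absurd (Finset.mem_of_mem_inter_left (hV haV)) hns
      | step hr2 hu2 hv2 heq2 =>
        have : a = _ := hμ (Finset.mem_coe.mpr haU) (Finset.mem_coe.mpr hu2)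
          (by rw [heq, heq2])
        rwa [this]
    set σ : A → B := fun a => if R a then ν a else μ a with hσ
    set τ : A → B := fun a => if R a then μ a else ν a with hτ
    set P : Finset A := U.filter (fun a => ¬ R a) ∪ V.filter (fun a => R a) with hP
    set Q : Finset A := U.filter (fun a => R a) ∪ V.filter (fun a => ¬ R a) with hQ
    have hPd : Disjoint (U.filter (fun a => ¬ R a)) (V.filter (fun a => R a)) := by
      rw [Finset.disjoint_left]
      intro a ha hb
      exact (Finset.mem_filter.mp ha).2 (Finset.mem_filter.mp hb).2
    have hQd : Disjoint (U.filter (fun a => R a)) (V.filter (fun a => ¬ R a)) := by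
      rw [Finset.disjoint_left]
      intro a ha hb
      exact (Finset.mem_filter.mp hb).2 (Finset.mem_filter.mp ha).2
    -- P is a matching inside S
    have hPS : P ⊆ S := by
      intro a ha
      rcases Finset.mem_union.mp ha with ha | ha
      · rcases Finset.mem_filter.mp ha with ⟨h1, h2⟩
        exact hUS a h1 h2
      · exact Finset.mem_of_mem_inter_left (hV (Finset.mem_filter.mp ha).1)
    have hQT : Q ⊆ T := by
      intro a ha
      rcases Finset.mem_union.mp ha with ha | ha
      · exact hRT a (Finset.mem_filter.mp ha).2
      · exact Finset.mem_of_mem_inter_right (hV (Finset.mem_filter.mp ha).1)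
    have hσinj : Set.InjOn σ ↑P := by
      intro a ha b hb heq
      rw [Finset.mem_coe, hP, Finset.mem_union] at ha hb
      have val : ∀ c, c ∈ U.filter (fun a => ¬ R a) → σ c = μ c := by
        intro c hc
        simp only [hσ, if_neg (Finset.mem_filter.mp hc).2]
      have val2 : ∀ c, c ∈ V.filter (fun a => R a) → σ c = ν c := by
        intro c hc
        simp only [hσ, if_pos (Finset.mem_filter.mp hc).2]
      rcases ha with ha | ha <;> rcases hb with hb | hb
      · exact hμ (Finset.mem_coe.mpr (Finset.mem_filter.mp ha).1)
          (Finset.mem_coe.mpr (Finset.mem_filter.mp hb).1)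
          (by rw [← val a ha, ← val b hb, heq])
      · -- a ∈ U \ R, b ∈ V ∩ R, μ a = ν b → R a, contradiction
        exfalso
        refine (Finset.mem_filter.mp ha).2 (hback a b (Finset.mem_filter.mp ha).1
          (Finset.mem_filter.mp hb).1 (Finset.mem_filter.mp hb).2 ?_)
        rw [← val a ha, ← val2 b hb, heq]
      · exfalso
        refine (Finset.mem_filter.mp hb).2 (hback b a (Finset.mem_filter.mp hb).1
          (Finset.mem_filter.mp ha).1 (Finset.mem_filter.mp ha).2 ?_)
        rw [← val b hb, ← val2 a ha, heq]
      · exact hν (Finset.mem_coe.mpr (Finset.mem_filter.mp ha).1)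
          (Finset.mem_coe.mpr (Finset.mem_filter.mp hb).1)
          (by rw [← val2 a ha, ← val2 b hb, heq])
    have hτinj : Set.InjOn τ ↑Q := by
      intro a ha b hb heq
      rw [Finset.mem_coe, hQ, Finset.mem_union] at ha hb
      have val : ∀ c, c ∈ U.filter (fun a => R a) → τ c = μ c := by
        intro c hc
        simp only [hτ, if_pos (Finset.mem_filter.mp hc).2]
      have val2 : ∀ c, c ∈ V.filter (fun a => ¬ R a) → τ c = ν c := by
        intro c hc
        simp only [hτ, if_neg (Finset.mem_filter.mp hc).2]
      rcases ha with ha | ha <;> rcases hb with hb | hb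
      · exact hμ (Finset.mem_coe.mpr (Finset.mem_filter.mp ha).1)
          (Finset.mem_coe.mpr (Finset.mem_filter.mp hb).1)
          (by rw [← val a ha, ← val b hb, heq])
      · -- a ∈ U ∩ R, b ∈ V \ R, μ a = ν b → R b by step, contradiction
        exfalso
        refine (Finset.mem_filter.mp hb).2 (MReach.step (Finset.mem_filter.mp ha).2
          (Finset.mem_filter.mp ha).1 (Finset.mem_filter.mp hb).1 ?_)
        rw [← val a ha, ← val2 b hb, heq]
      · exfalso
        refine (Finset.mem_filter.mp ha).2 (MReach.step (Finset.mem_filter.mp hb).2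
          (Finset.mem_filter.mp hb).1 (Finset.mem_filter.mp ha).1 ?_)
        rw [← val b hb, ← val2 a ha, heq]
      · exact hν (Finset.mem_coe.mpr (Finset.mem_filter.mp ha).1)
          (Finset.mem_coe.mpr (Finset.mem_filter.mp hb).1)
          (by rw [← val2 a ha, ← val2 b hb, heq])
    have hhS : ∑ a ∈ P, W a (σ a) ≤ h S := (hh S).2 ⟨P, σ, hPS, hσinj, rfl⟩
    have hhT : ∑ a ∈ Q, W a (τ a) ≤ h T := (hh T).2 ⟨Q, τ, hQT, hτinj, rfl⟩
    have hPsum : ∑ a ∈ P, W a (σ a)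
        = ∑ a ∈ U.filter (fun a => ¬ R a), W a (μ a)
          + ∑ a ∈ V.filter (fun a => R a), W a (ν a) := by
      rw [hP, Finset.sum_union hPd]
      congr 1
      · exact Finset.sum_congr rfl fun c hc => by
          simp only [hσ, if_neg (Finset.mem_filter.mp hc).2]
      · exact Finset.sum_congr rfl fun c hc => by
          simp only [hσ, if_pos (Finset.mem_filter.mp hc).2]
    have hQsum : ∑ a ∈ Q, W a (τ a)
        = ∑ a ∈ U.filter (fun a => R a), W a (μ a)
          + ∑ a ∈ V.filter (fun a => ¬ R a), W a (ν a) := by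
      rw [hQ, Finset.sum_union hQd]
      congr 1
      · exact Finset.sum_congr rfl fun c hc => by
          simp only [hτ, if_pos (Finset.mem_filter.mp hc).2]
      · exact Finset.sum_congr rfl fun c hc => by
          simp only [hτ, if_neg (Finset.mem_filter.mp hc).2]
    have hUsplit : ∑ a ∈ U.filter (fun a => R a), W a (μ a)
        + ∑ a ∈ U.filter (fun a => ¬ R a), W a (μ a) = ∑ a ∈ U, W a (μ a) :=
      Finset.sum_filter_add_sum_filter_not U _ _
    have hVsplit : ∑ a ∈ V.filter (fun a => R a), W a (ν a)
        + ∑ a ∈ V.filter (fun a => ¬ R a), W a (ν a) = ∑ a ∈ V, W a (ν a) :=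
      Finset.sum_filter_add_sum_filter_not V _ _
    rw [hμv, hνv]
    linarith
  · intro S T hST
    obtain ⟨⟨U, μ, hU, hμ, hμv⟩, _⟩ := hh S
    exact (hh T).2 ⟨U, μ, hU.trans hST, hμ, hμv⟩
end

section
/- For real numbers p_A, p_B, S_A, S_B define h(p_A, p_B, S_A, S_B) = p_A + (1 − p_A − p_B)·(1 − exp(−(1/2 − S_A)/(1 − S_A − S_B))) − (p_A + p_B)/6. Then for all real p_1, p_2, S_1, S_2 with 0 ≤ p_1 ≤ 1/3, 0 ≤ p_2 ≤ 1/3, 0 ≤ S_1 ≤ 1/2, 0 ≤ S_2 ≤ 1/2, and S_1 + S_2 < 1, it holds that max( h(p_1, p_2, S_1, S_2), h(p_2, p_1, S_2, S_1) ) ≥ 1/3. -/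
set_option maxHeartbeats 1600000 in
/-- The technical lemma on the function `h(p_A,p_B,S_A,S_B)` with `k = 6`:
one of the two symmetric values is at least `1/3`. -/
theorem technical_max_ge_third
    (p₁ p₂ S₁ S₂ : ℝ)
    (hp₁0 : 0 ≤ p₁) (hp₁ : p₁ ≤ 1 / 3)
    (hp₂0 : 0 ≤ p₂) (hp₂ : p₂ ≤ 1 / 3)
    (hS₁0 : 0 ≤ S₁) (hS₁ : S₁ ≤ 1 / 2)
    (hS₂0 : 0 ≤ S₂) (hS₂ : S₂ ≤ 1 / 2)
    (hsum : S₁ + S₂ < 1) :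
    1 / 3 ≤ max
      (p₁ + (1 - p₁ - p₂) * (1 - Real.exp (-(1 / 2 - S₁) / (1 - S₁ - S₂)))
        - (p₁ + p₂) / 6)
      (p₂ + (1 - p₂ - p₁) * (1 - Real.exp (-(1 / 2 - S₂) / (1 - S₂ - S₁)))
        - (p₂ + p₁) / 6) := by
  set a := Real.exp (-(1 / 2 - S₁) / (1 - S₁ - S₂)) with ha_def
  set b := Real.exp (-(1 / 2 - S₂) / (1 - S₂ - S₁)) with hb_def
  have hD : (0:ℝ) < 1 - S₁ - S₂ := by linarith
  have hD' : (0:ℝ) < 1 - S₂ - S₁ := by linarith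
  -- product of the exponentials
  have hab : a * b = Real.exp (-1) := by
    rw [ha_def, hb_def, ← Real.exp_add]
    congr 1
    field_simp
    ring
  -- numeric bounds on exp(-1)
  have he1 : Real.exp (-1) = (Real.exp 1)⁻¹ := by
    rw [Real.exp_neg]
  have he_lb : (1:ℝ)/6 < Real.exp (-1) := by
    rw [he1]
    have h := Real.exp_one_lt_d9
    rw [lt_inv_comm₀ (by norm_num) (Real.exp_pos 1)]
    calc Real.exp 1 < 2.7182818286 := h
      _ < ((1:ℝ)/6)⁻¹ := by norm_num
  have he_ub : Real.exp (-1) < 55/144 := by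
    rw [he1]
    have h := Real.exp_one_gt_d9
    rw [inv_lt_comm₀ (Real.exp_pos 1) (by norm_num)]
    calc ((55:ℝ)/144)⁻¹ < 2.7182818283 := by norm_num
      _ < Real.exp 1 := h
  -- each factor is in [exp(-1), 1]
  have ha1 : a ≤ 1 := by
    rw [ha_def, Real.exp_le_one_iff]
    apply div_nonpos_of_nonpos_of_nonneg <;> linarith
  have hb1 : b ≤ 1 := by
    rw [hb_def, Real.exp_le_one_iff]
    apply div_nonpos_of_nonpos_of_nonneg <;> linarith
  have ha_lb : Real.exp (-1) ≤ a := by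
    rw [ha_def]
    apply Real.exp_le_exp.mpr
    rw [neg_div, neg_le_neg_iff, div_le_one hD]
    linarith
  have hb_lb : Real.exp (-1) ≤ b := by
    rw [hb_def]
    apply Real.exp_le_exp.mpr
    rw [neg_div, neg_le_neg_iff, div_le_one hD']
    linarith
  have ha0 : (1:ℝ)/6 < a := lt_of_lt_of_le he_lb ha_lb
  have hb0 : (1:ℝ)/6 < b := lt_of_lt_of_le he_lb hb_lb
  by_cases hb5 : b ≤ 5/12
  · -- second term is at least 1/3
    apply le_trans _ (le_max_right _ _)
    nlinarith [mul_nonneg hp₂0 (by linarith : (0:ℝ) ≤ b - 1/6),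
      mul_nonneg (by linarith : (0:ℝ) ≤ 1/3 - p₁) (by linarith : (0:ℝ) ≤ 7/6 - b)]
  · by_cases ha5 : a ≤ 5/12
    · -- first term is at least 1/3
      apply le_trans _ (le_max_left _ _)
      nlinarith [mul_nonneg hp₁0 (by linarith : (0:ℝ) ≤ a - 1/6),
        mul_nonneg (by linarith : (0:ℝ) ≤ 1/3 - p₂) (by linarith : (0:ℝ) ≤ 7/6 - a)]
    · -- both a, b > 5/12 : then a + b < 4/3, and the average of the terms works
      push_neg at hb5 ha5
      have hs : a + b < 4/3 := by
        nlinarith [mul_pos (by linarith : (0:ℝ) < a - 5/12) (by linarith : (0:ℝ) < b - 5/12)]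
      have key : 2/3 ≤ (p₁ + (1 - p₁ - p₂) * (1 - a) - (p₁ + p₂) / 6)
          + (p₂ + (1 - p₂ - p₁) * (1 - b) - (p₂ + p₁) / 6) := by
        have hid : (p₁ + (1 - p₁ - p₂) * (1 - a) - (p₁ + p₂) / 6)
            + (p₂ + (1 - p₂ - p₁) * (1 - b) - (p₂ + p₁) / 6) - 2/3
            = (1 - p₁ - p₂) * (4/3 - (a + b)) := by ring
        have hpos : 0 ≤ (1 - p₁ - p₂) * (4/3 - (a + b)) :=
          mul_nonneg (by linarith) (by linarith)
        linarith
      have h1 := le_max_left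
        (p₁ + (1 - p₁ - p₂) * (1 - a) - (p₁ + p₂) / 6)
        (p₂ + (1 - p₂ - p₁) * (1 - b) - (p₂ + p₁) / 6)
      have h2 := le_max_right
        (p₁ + (1 - p₁ - p₂) * (1 - a) - (p₁ + p₂) / 6)
        (p₂ + (1 - p₂ - p₁) * (1 - b) - (p₂ + p₁) / 6)
      linarith
end

section
/- For every real y with 0 ≤ y ≤ 1/3, it holds that 1 − y/2 − y/6 − (1/2)·√( y² + 4e^{−1}(1 − y)² ) ≥ 1/3. -/
/-- Lower bound for `a(y) = 1 - y/2 - y/6 - √(y² + 4e⁻¹(1-y)²)/2` on `[0, 1/3]`. -/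
theorem a_ge_third
    (y : ℝ) (h0 : 0 ≤ y) (h1 : y ≤ 1 / 3) :
    1 / 3 ≤ 1 - y / 2 - y / 6
      - (1 / 2) * Real.sqrt (y ^ 2 + 4 * Real.exp (-1) * (1 - y) ^ 2) := by
  have he : Real.exp (-1) ≤ 55 / 144 := by
    rw [Real.exp_neg]
    rw [inv_le_comm₀ (Real.exp_pos 1) (by norm_num)]
    nlinarith [Real.exp_one_gt_d9]
  have hy : (0:ℝ) ≤ 1 - y := by linarith
  have hs : Real.sqrt (y ^ 2 + 4 * Real.exp (-1) * (1 - y) ^ 2) ≤ 4 / 3 * (1 - y) := by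
    rw [show (4:ℝ) / 3 * (1 - y) = Real.sqrt ((4 / 3 * (1 - y)) ^ 2) from
      (Real.sqrt_sq (by positivity)).symm]
    apply Real.sqrt_le_sqrt
    nlinarith [Real.exp_pos (-1), sq_nonneg (1 - y)]
  linarith
end

section
/- For every real z with 1/3 ≤ z ≤ 2/3, it holds that 1 − z/2 − z/6 − (1/2)·√( (2/3 − z)² + 4e^{−1}(1 − z)² ) ≥ 1/3. -/
/-- Lower bound for `b(z) = 1 - z/2 - z/6 - √((2/3-z)² + 4e⁻¹(1-z)²)/2` on `[1/3, 2/3]`. -/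
theorem b_ge_third
    (z : ℝ) (h0 : 1 / 3 ≤ z) (h1 : z ≤ 2 / 3) :
    1 / 3 ≤ 1 - z / 2 - z / 6
      - (1 / 2) * Real.sqrt ((2 / 3 - z) ^ 2 + 4 * Real.exp (-1) * (1 - z) ^ 2) := by
  have he : Real.exp (-1) < 55 / 144 := by
    rw [Real.exp_neg]
    have h9 : (2.7182818283 : ℝ) < Real.exp 1 := Real.exp_one_gt_d9
    rw [inv_lt_iff_one_lt_mul₀ (by positivity)]
    nlinarith
  have hE : (2 / 3 - z) ^ 2 + 4 * Real.exp (-1) * (1 - z) ^ 2 ≤ (4 / 3 * (1 - z)) ^ 2 := by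
    have h2 : (2 / 3 - z) ^ 2 ≤ ((1 - z) / 2) ^ 2 := by nlinarith
    nlinarith [sq_nonneg (1 - z)]
  have hs : Real.sqrt ((2 / 3 - z) ^ 2 + 4 * Real.exp (-1) * (1 - z) ^ 2) ≤ 4 / 3 * (1 - z) := by
    have := Real.sqrt_le_sqrt hE
    rwa [Real.sqrt_sq (by linarith)] at this
  linarith
end

section
/- For every real capacity m > 0 there exist a finite ground set Ω with sizes s_i satisfying 0 ≤ s_i ≤ m/2 and a non-negative, monotone, submodular (in fact additive) set function f: 2^Ω → ℝ such that max{ f(S) : S ⊆ Ω, Σ_{i∈S} s_i ≤ m/2 } = (1/3)·max{ f(S) : S ⊆ Ω, Σ_{i∈S} s_i ≤ m }. (For instance, three elements each of size m/3 and unit value.) Hence the factor 1/3 in the reserved-capacity guarantee cannot be improved. -/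
/-- Tightness of the factor `1/3`: for every capacity `m > 0` there is an
instance (with an additive, hence non-negative, monotone and submodular,
objective and sizes at most `m/2`) where the best solution of total size at
most `m/2` has exactly one third of the value of the best solution of total
size at most `m`. -/
theorem reserved_capacity_third_tight
    (m : ℝ) (hm : 0 < m) :
    ∃ (n : ℕ) (s : Fin n → ℝ) (w : Fin n → ℝ) (f : Finset (Fin n) → ℝ),
      (∀ i, 0 ≤ s i ∧ s i ≤ m / 2) ∧
      (∀ i, 0 ≤ w i) ∧
      (∀ S : Finset (Fin n), f S = ∑ i ∈ S, w i) ∧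
      (∀ S : Finset (Fin n), 0 ≤ f S) ∧
      (∀ S T : Finset (Fin n), S ⊆ T → f S ≤ f T) ∧
      (∀ S T : Finset (Fin n), f (S ∪ T) + f (S ∩ T) ≤ f S + f T) ∧
      ∃ Ohalf Ofull : ℝ,
        IsGreatest { v : ℝ | ∃ S : Finset (Fin n),
          (∑ i ∈ S, s i) ≤ m / 2 ∧ v = f S } Ohalf ∧
        IsGreatest { v : ℝ | ∃ S : Finset (Fin n),
          (∑ i ∈ S, s i) ≤ m ∧ v = f S } Ofull ∧
        Ohalf = (1 / 3) * Ofull := by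
  refine ⟨3, fun _ => m / 3, fun _ => 1, fun S => (S.card : ℝ),
    fun i => ⟨by positivity, by linarith⟩,
    fun i => zero_le_one,
    fun S => by simp,
    fun S => by positivity,
    fun S T hST => by show (S.card:ℝ) ≤ T.card; exact_mod_cast Finset.card_le_card hST,
    fun S T => by
      have := Finset.card_union_add_card_inter S T
      have h2 : ((S ∪ T).card : ℝ) + ((S ∩ T).card : ℝ) = (S.card : ℝ) + T.card := by
        exact_mod_cast congrArg (Nat.cast : ℕ → ℝ) this
      linarith,
    1, 3, ?_, ?_, by norm_num⟩
  · constructor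
    · exact ⟨{0}, by simp; linarith, by simp⟩
    · rintro v ⟨S, hS, rfl⟩
      have hsum : (∑ _i ∈ S, m / 3) = (S.card : ℝ) * (m / 3) := by
        rw [Finset.sum_const, nsmul_eq_mul]
      rw [hsum] at hS
      have hcard : S.card ≤ 1 := by
        by_contra h
        push_neg at h
        have : (2 : ℝ) ≤ (S.card : ℝ) := by exact_mod_cast h
        nlinarith
      have : (S.card : ℝ) ≤ 1 := by exact_mod_cast hcard
      simpa using this
  · constructor
    · refine ⟨Finset.univ, ?_, by simp⟩
      rw [Finset.sum_const, nsmul_eq_mul]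
      simp
      linarith
    · rintro v ⟨S, hS, rfl⟩
      have : S.card ≤ 3 := le_trans (Finset.card_le_card (Finset.subset_univ S)) (by simp)
      show (S.card:ℝ) ≤ 3; exact_mod_cast this
end

section
/- Let M ≥ 1 be an integer, let m* ≥ 1 be a real number, and let p_1, ..., p_M be non-negative real numbers. Define v = min over s ∈ {1,...,M} of ( Σ_{j=1}^{s−1} p_j + m*·p_s ). Then Σ_{j=1}^{M} p_j ≥ (1 − e^{−M/m*})·v. -/
/-- Sviridenko's greedy inequality: if `v` is the minimum over `s ∈ {1,…,M}`
of `Σ_{j=1}^{s-1} p_j + m*·p_s`, then `Σ_{j=1}^{M} p_j ≥ (1 - e^{-M/m*})·v`. -/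
theorem greedy_density_inequality
    (M : ℕ) (hM : 1 ≤ M) (mstar : ℝ) (hmstar : 1 ≤ mstar)
    (p : ℕ → ℝ) (hp : ∀ j, 0 ≤ p j)
    (v : ℝ)
    (hv : IsLeast
      { w : ℝ | ∃ s : ℕ, 1 ≤ s ∧ s ≤ M ∧
          w = (∑ j ∈ Finset.Icc 1 (s - 1), p j) + mstar * p s } v) :
    (1 - Real.exp (-(M : ℝ) / mstar)) * v ≤ ∑ j ∈ Finset.Icc 1 M, p j := by
  have hms0 : (0:ℝ) < mstar := lt_of_lt_of_le one_pos hmstar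
  set S : ℕ → ℝ := fun s => ∑ j ∈ Finset.Icc 1 s, p j with hS
  have hq0 : (0:ℝ) ≤ 1 - 1/mstar := by
    have : 1/mstar ≤ 1 := by
      rw [div_le_one hms0]; exact hmstar
    linarith
  -- v ≥ 0
  have hv0 : 0 ≤ v := by
    obtain ⟨s, hs1, hsM, hveq⟩ := hv.1
    have h1 : 0 ≤ ∑ j ∈ Finset.Icc 1 (s-1), p j :=
      Finset.sum_nonneg fun j _ => hp j
    have h2 : 0 ≤ mstar * p s := mul_nonneg hms0.le (hp s)
    linarith
  -- main induction
  have key : ∀ s, s ≤ M → v - S s ≤ (1 - 1/mstar)^s * v := by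
    intro s
    induction s with
    | zero =>
      intro _
      simp [hS]
    | succ n ih =>
      intro hn
      have hIH := ih (le_of_lt (Nat.lt_of_succ_le hn))
      have hlb : v ≤ S n + mstar * p (n+1) := hv.2 ⟨n+1, Nat.succ_le_succ (Nat.zero_le n),
        hn, by simp [hS]⟩
      have hSsucc : S (n+1) = S n + p (n+1) := by
        simp only [hS]
        exact Finset.sum_Icc_succ_top (Nat.succ_le_succ (Nat.zero_le n)) p
      have h1 : v - S (n+1) ≤ (v - S n) * (1 - 1/mstar) := by
        rw [hSsucc]
        have : (v - S n)/mstar ≤ p (n+1) := by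
          rw [div_le_iff₀ hms0]; nlinarith
        have hexp : (v - S n) * (1 - 1/mstar) = (v - S n) - (v - S n)/mstar := by
          field_simp
        rw [hexp]; linarith
      calc v - S (n+1) ≤ (v - S n) * (1 - 1/mstar) := h1
        _ ≤ ((1 - 1/mstar)^n * v) * (1 - 1/mstar) :=
            mul_le_mul_of_nonneg_right hIH hq0
        _ = (1 - 1/mstar)^(n+1) * v := by ring
  have hM' := key M le_rfl
  have hpow : (1 - 1/mstar)^M ≤ Real.exp (-(M:ℝ)/mstar) := by
    have h1 : 1 - 1/mstar ≤ Real.exp (-(1/mstar)) := by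
      have := Real.add_one_le_exp (-(1/mstar))
      linarith
    calc (1 - 1/mstar)^M ≤ (Real.exp (-(1/mstar)))^M := pow_le_pow_left₀ hq0 h1 M
      _ = Real.exp (-(M:ℝ)/mstar) := by
        rw [← Real.exp_nat_mul]; ring_nf
  have : (1 - 1/mstar)^M * v ≤ Real.exp (-(M:ℝ)/mstar) * v :=
    mul_le_mul_of_nonneg_right hpow hv0
  have : v - S M ≤ Real.exp (-(M:ℝ)/mstar) * v := le_trans hM' this
  have : (1 - Real.exp (-(M:ℝ)/mstar)) * v ≤ S M := by nlinarith
  simpa [hS] using this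
end
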